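/- arXiv:1410.1438 — 4 statements merged into one kernel-verified Lean document; each statement's English description precedes it below -/
import Mathlib

section
/- Let n and k be positive integers, let R be a graph on an n-element vertex set V that is a (k,2)-expander, and let P be a path with vertices in V such that P is a path of maximum length in the graph P∪R. Then at least (k+1)²/2 unordered pairs {v,w} of distinct vertices of V are boosters for the pair (P,R). -/
open Filter

/-- A `(k,r)`-expander: every vertex set `X` of size at most `k` satisfies
`|N(X) \ X| ≥ r |X|`. -/
def IsExpander {V : Type*} (R : SimpleGraph V) (k r : ℝ) : Prop :=
  ∀ X : Set V, (X.ncard : ℝ) ≤ k →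
    r * (X.ncard : ℝ) ≤ (({v | ∃ x ∈ X, R.Adj x v} \ X).ncard : ℝ)

/-- The graph whose edges are exactly the edges of the path `P`. -/
def pathGraph {V : Type*} {a b : V} (P : (⊤ : SimpleGraph V).Walk a b) : SimpleGraph V :=
  SimpleGraph.fromEdgeSet {e | e ∈ P.edges}

/-- `{v,w}` is a booster for the pair `(P,R)`: the graph `P ∪ R` contains a path with the
same number of vertices as `P` whose two endpoints are `v` and `w`. -/
def IsBooster {V : Type*} (R : SimpleGraph V) {a b : V}
    (P : (⊤ : SimpleGraph V).Walk a b) (v w : V) : Prop :=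
  v ≠ w ∧ ∃ Q : (pathGraph P ⊔ R).Walk v w, Q.IsPath ∧ Q.length = P.length

namespace PosaAux

open SimpleGraph Walk

variable {V : Type*} {G : SimpleGraph V}

lemma mem_support_of_mem_edge {u v y : V} {p : G.Walk u v} {e : Sym2 V}
    (he : e ∈ p.edges) (hy : y ∈ e) : y ∈ p.support := by
  induction e with
  | h a b =>
    rcases Sym2.mem_iff.mp hy with rfl | rfl
    · exact p.fst_mem_support_of_mem_edges he
    · exact p.snd_mem_support_of_mem_edges he

/-- At most one edge of a path contains its first endpoint. -/
lemma start_edge_unique {u v : V} {p : G.Walk u v} (hp : p.IsPath)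
    {e₁ e₂ : Sym2 V} (h₁ : e₁ ∈ p.edges) (h₂ : e₂ ∈ p.edges)
    (hu₁ : u ∈ e₁) (hu₂ : u ∈ e₂) : e₁ = e₂ := by
  cases p with
  | nil => simp at h₁
  | @cons _ w _ h q =>
    obtain ⟨hq, hus⟩ := (Walk.cons_isPath_iff h q).mp hp
    rw [Walk.edges_cons] at h₁ h₂
    rcases List.mem_cons.mp h₁ with rfl | h₁
    · rcases List.mem_cons.mp h₂ with rfl | h₂
      · rfl
      · exact absurd (mem_support_of_mem_edge h₂ hu₂) hus
    · exact absurd (mem_support_of_mem_edge h₁ hu₁) hus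

/-- No vertex is contained in three distinct edges of a path. -/
lemma edges_at_vertex {u v y : V} {p : G.Walk u v} (hp : p.IsPath)
    {e₁ e₂ e₃ : Sym2 V} (h₁ : e₁ ∈ p.edges) (h₂ : e₂ ∈ p.edges) (h₃ : e₃ ∈ p.edges)
    (hy₁ : y ∈ e₁) (hy₂ : y ∈ e₂) (hy₃ : y ∈ e₃)
    (h12 : e₁ ≠ e₂) (h13 : e₁ ≠ e₃) (h23 : e₂ ≠ e₃) : False := by
  induction p with
  | nil => simp at h₁
  | @cons a w b h q ih =>
    obtain ⟨hq, hus⟩ := (Walk.cons_isPath_iff h q).mp hp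
    by_cases hyu : y = a
    · subst hyu
      exact h12 (start_edge_unique hp h₁ h₂ hy₁ hy₂)
    · rw [Walk.edges_cons] at h₁ h₂ h₃
      have hw : ∀ e : Sym2 V, y ∈ e → e = s(a, w) → y = w := by
        intro e hye hee
        subst hee
        rcases Sym2.mem_iff.mp hye with rfl | rfl
        · exact absurd rfl hyu
        · rfl
      rcases List.mem_cons.mp h₁ with rfl | h₁
      · have hyw := hw _ hy₁ rfl; subst hyw
        rcases List.mem_cons.mp h₂ with rfl | h₂
        · exact h12 rfl
        rcases List.mem_cons.mp h₃ with rfl | h₃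
        · exact h13 rfl
        exact h23 (start_edge_unique hq h₂ h₃ hy₂ hy₃)
      · rcases List.mem_cons.mp h₂ with rfl | h₂
        · have hyw := hw _ hy₂ rfl; subst hyw
          rcases List.mem_cons.mp h₃ with rfl | h₃
          · exact h23 rfl
          exact h13 (start_edge_unique hq h₁ h₃ hy₁ hy₃)
        · rcases List.mem_cons.mp h₃ with rfl | h₃
          · have hyw := hw _ hy₃ rfl; subst hyw
            exact h12 (start_edge_unique hq h₁ h₂ hy₁ hy₂)
          · exact ih hq h₁ h₂ h₃

/-- An interior vertex of a path lies in two distinct edges. -/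
lemma two_edges_of_interior {c d y : V} {p : G.Walk c d} (hp : p.IsPath)
    (hy : y ∈ p.support) (hyc : y ≠ c) (hyd : y ≠ d) :
    ∃ e₁ ∈ p.edges, ∃ e₂ ∈ p.edges, e₁ ≠ e₂ ∧ y ∈ e₁ ∧ y ∈ e₂ := by
  induction p with
  | nil =>
    rw [Walk.support_nil] at hy
    simp at hy; exact absurd hy hyc
  | @cons a w b h q ih =>
    obtain ⟨hq, hus⟩ := (Walk.cons_isPath_iff h q).mp hp
    rw [Walk.support_cons] at hy
    rcases List.mem_cons.mp hy with rfl | hy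
    · exact absurd rfl hyc
    by_cases hyw : y = w
    · subst hyw
      cases q with
      | nil => exact absurd rfl hyd
      | @cons _ w₂ _ h₂ q₂ =>
        refine ⟨s(a, y), by simp, s(y, w₂), by simp, ?_, by simp, by simp⟩
        intro hcon
        rw [Sym2.eq_iff] at hcon
        rcases hcon with ⟨rfl, rfl⟩ | ⟨rfl, -⟩
        · exact h.ne rfl
        · apply hus
          rw [Walk.support_cons]
          exact List.mem_cons_of_mem _ q₂.start_mem_support
    · obtain ⟨e₁, he₁, e₂, he₂, hne, hye₁, hye₂⟩ := ih hq hy hyw hyd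
      exact ⟨e₁, by simp [he₁], e₂, by simp [he₂], hne, hye₁, hye₂⟩

end PosaAux
namespace PosaAux
open SimpleGraph Walk

variable {V : Type*} {G : SimpleGraph V}

/-- Walks obtainable from `Q0` by Pósa rotations fixing the endpoint `d`. -/
inductive Der (G : SimpleGraph V) {c d : V} (Q0 : G.Walk c d) :
    ∀ {x : V}, G.Walk x d → Prop
  | base : Der G Q0 Q0
  | rot {x z y : V} (q1 : G.Walk x z) (hzy : G.Adj z y) (q2 : G.Walk y d)
      (hxy : G.Adj x y) (h : Der G Q0 (q1.append (Walk.cons hzy q2))) :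
      Der G Q0 (q1.reverse.append (Walk.cons hxy q2))

variable {c d : V} {Q0 : G.Walk c d}

lemma Der.support_perm {x : V} {Q : G.Walk x d} (h : Der G Q0 Q) :
    Q.support.Perm Q0.support := by
  induction h with
  | base => exact List.Perm.refl _
  | rot q1 hzy q2 hxy h ih =>
    refine List.Perm.trans ?_ ih
    rw [Walk.support_append, Walk.support_append, Walk.support_reverse,
      Walk.support_cons, Walk.support_cons, List.tail_cons, List.tail_cons]
    exact (q1.support.reverse_perm).append_right q2.support

lemma Der.length_eq {x : V} {Q : G.Walk x d} (h : Der G Q0 Q) :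
    Q.length = Q0.length := by
  induction h with
  | base => rfl
  | rot q1 hzy q2 hxy h ih =>
    rw [← ih]
    simp [Walk.length_append, Walk.length_cons, Walk.length_reverse]

lemma Der.isPath {x : V} {Q : G.Walk x d} (h : Der G Q0 Q) (h0 : Q0.IsPath) :
    Q.IsPath := by
  rw [Walk.isPath_def]
  exact h.support_perm.nodup_iff.mpr h0.support_nodup

/-- Invariant: any edge of `Q0` missing from a derived walk contains a vertex
which is the free endpoint of some derived walk. -/
lemma Der.edge_inv {x : V} {Q : G.Walk x d} (h : Der G Q0 Q) {e : Sym2 V}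
    (he : e ∈ Q0.edges) :
    e ∈ Q.edges ∨ ∃ s, (∃ Q' : G.Walk s d, Der G Q0 Q') ∧ s ∈ e := by
  induction h with
  | base => exact Or.inl he
  | @rot x z y q1 hzy q2 hxy h ih =>
    rcases ih with h1 | h2
    · rw [Walk.edges_append, Walk.edges_cons] at h1
      rcases List.mem_append.mp h1 with h1 | h1
      · left
        rw [Walk.edges_append]
        exact List.mem_append_left _ (by
          rw [Walk.edges_reverse, List.mem_reverse]; exact h1)
      · rcases List.mem_cons.mp h1 with rfl | h1
        · exact Or.inr ⟨z, ⟨_, Der.rot q1 hzy q2 hxy h⟩, by simp⟩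
        · left
          rw [Walk.edges_append, Walk.edges_cons]
          exact List.mem_append_right _ (List.mem_cons_of_mem _ h1)
    · exact Or.inr h2

lemma exists_concat {x y : V} (p : G.Walk x y) (hne : ¬ p.Nil) :
    ∃ (z : V) (q : G.Walk x z) (h : G.Adj z y), p = q.concat h := by
  have hrev : ¬ p.reverse.Nil := by
    rw [Walk.nil_iff_length_eq, Walk.length_reverse]
    rw [Walk.nil_iff_length_eq] at hne
    exact hne
  obtain ⟨u, h, q, hq⟩ := Walk.not_nil_iff.mp hrev
  refine ⟨u, q.reverse, h.symm, ?_⟩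
  rw [← p.reverse_reverse, hq, Walk.reverse_cons, Walk.concat_eq_append]

/-- Rotation closure: if `Q` is a derived walk from `x` with `x` adjacent to a
vertex `y` of `Q`, then the edge of `Q` before `y` leads to a new derived
endpoint. -/
lemma Der.pivot [DecidableEq V] {x y : V} {Q : G.Walk x d} (hd : Der G Q0 Q)
    (hxy : G.Adj x y) (hy : y ∈ Q.support) :
    ∃ z, (∃ Q' : G.Walk z d, Der G Q0 Q') ∧ s(z, y) ∈ Q.edges := by
  have hspec := Q.take_spec hy
  have hnil : ¬ (Q.takeUntil y hy).Nil := by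
    intro hn
    exact hxy.ne (Walk.Nil.eq hn)
  obtain ⟨z, q1, hzy, hq1⟩ := exists_concat _ hnil
  have hQeq : Q = q1.append (Walk.cons hzy (Q.dropUntil y hy)) := by
    conv_lhs => rw [← hspec]
    rw [hq1, Walk.concat_append]
  rw [hQeq] at hd ⊢
  refine ⟨z, ⟨_, Der.rot q1 hzy _ hxy hd⟩, ?_⟩
  rw [Walk.edges_append, Walk.edges_cons]
  exact List.mem_append_right _ List.mem_cons_self

lemma ne_of_isPath_pos {u v : V} {Q : G.Walk u v} (h : Q.IsPath)
    (hl : 1 ≤ Q.length) : u ≠ v := by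
  cases Q with
  | nil => simp at hl
  | @cons _ w _ hadj q =>
    rintro rfl
    obtain ⟨hq, hus⟩ := (Walk.cons_isPath_iff hadj q).mp h
    exact hus q.end_mem_support

end PosaAux

namespace PosaAux
open SimpleGraph Walk

lemma core {V : Type*} [Fintype V] [DecidableEq V] {G R : SimpleGraph V} {k : ℕ}
    (hR : IsExpander R k 2) (hRG : R ≤ G) {L : ℕ} (hL : 1 ≤ L)
    (hmax : ∀ (u v : V) (Q : G.Walk u v), Q.IsPath → Q.length ≤ L)
    {c d : V} (Q0 : G.Walk c d) (h0 : Q0.IsPath) (hlen : Q0.length = L) :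
    ∃ F : Finset V, k + 1 ≤ F.card ∧
      ∀ x ∈ F, ∃ Q : G.Walk x d, Q.IsPath ∧ Q.length = L := by
  classical
  set S : Set V := {x | ∃ Q : G.Walk x d, Der G Q0 Q} with hSdef
  have hcS : c ∈ S := ⟨Q0, Der.base⟩
  have hQ0nil : ¬ Q0.Nil := by
    rw [Walk.nil_iff_length_eq]
    omega
  have hnbr : ∀ x ∈ S, ∀ y, G.Adj x y → y ∉ S → ∃ s ∈ S, s(s, y) ∈ Q0.edges := by
    rintro x ⟨Q, hQD⟩ y hxy hyS
    have hQP : Q.IsPath := hQD.isPath h0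
    have hQL : Q.length = L := hQD.length_eq.trans hlen
    have hy : y ∈ Q.support := by
      by_contra hy
      have hP2 : (Walk.cons hxy.symm Q).IsPath := (Walk.cons_isPath_iff _ _).mpr ⟨hQP, hy⟩
      have := hmax _ _ _ hP2
      rw [Walk.length_cons, hQL] at this
      omega
    obtain ⟨z, hzS, hzy⟩ := hQD.pivot hxy hy
    by_contra hcon
    push_neg at hcon
    have hzy0 : s(z, y) ∉ Q0.edges := hcon z hzS
    have hQ0y : ∀ e ∈ Q0.edges, y ∈ e → e ∈ Q.edges := by
      intro e he hye
      rcases hQD.edge_inv he with h | ⟨s, hs, hse⟩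
      · exact h
      · exfalso
        by_cases hsy : s = y
        · exact hyS (hsy ▸ hs)
        · have hee : e = s(s, y) := by
            induction e with
            | h a b =>
              rcases Sym2.mem_iff.mp hse with rfl | rfl
              · rcases Sym2.mem_iff.mp hye with rfl | rfl
                · exact absurd rfl hsy
                · rfl
              · rcases Sym2.mem_iff.mp hye with rfl | rfl
                · exact Sym2.eq_swap
                · exact absurd rfl hsy
          exact hcon s hs (hee ▸ he)
    have hy0 : y ∈ Q0.support := hQD.support_perm.mem_iff.mp hy
    have hyc : y ≠ c := fun h => hyS (h ▸ hcS)
    by_cases hyd : y = d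
    · subst hyd
      obtain ⟨z0, q0, hz0, hq0⟩ := exists_concat Q0 hQ0nil
      have hed : s(z0, y) ∈ Q0.edges := by
        rw [hq0, Walk.edges_concat]
        simp [List.concat_eq_append]
      have hedQ : s(z0, y) ∈ Q.edges := hQ0y _ hed (by simp)
      have heq : s(z0, y) = s(z, y) := by
        apply start_edge_unique hQP.reverse
          (by rw [Walk.edges_reverse, List.mem_reverse]; exact hedQ)
          (by rw [Walk.edges_reverse, List.mem_reverse]; exact hzy)
          (by simp) (by simp)
      exact hzy0 (heq ▸ hed)
    · obtain ⟨e₁, he₁, e₂, he₂, hne12, hye₁, hye₂⟩ := two_edges_of_interior h0 hy0 hyc hyd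
      exact edges_at_vertex hQP (hQ0y _ he₁ hye₁) (hQ0y _ he₂ hye₂) hzy
        hye₁ hye₂ (by simp) hne12 (fun h => hzy0 (h ▸ he₁)) (fun h => hzy0 (h ▸ he₂))
  refine ⟨S.toFinset, ?_, ?_⟩
  swap
  · intro x hx
    rw [Set.mem_toFinset] at hx
    obtain ⟨Q, hQD⟩ := hx
    exact ⟨Q, hQD.isPath h0, hQD.length_eq.trans hlen⟩
  by_contra hcard
  push_neg at hcard
  have hSk : (S.ncard : ℝ) ≤ k := by
    rw [Set.ncard_eq_toFinset_card']
    exact_mod_cast Nat.lt_succ_iff.mp hcard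
  have hexp := hR S hSk
  set F := S.toFinset with hF
  have hcF : c ∈ F := Set.mem_toFinset.mpr hcS
  set E : V → Finset V := fun s => Finset.univ.filter (fun y => s(s, y) ∈ Q0.edges) with hE
  have hinj : ∀ s a b : V, s(s, a) = s(s, b) → a = b := by
    intro s a b hab
    rcases Sym2.eq_iff.mp hab with ⟨-, h⟩ | ⟨h1, h2⟩
    · exact h
    · exact h2.trans h1
  have hE2 : ∀ s, (E s).card ≤ 2 := by
    intro s
    by_contra hc
    push_neg at hc
    obtain ⟨y₁, hy₁, y₂, hy₂, y₃, hy₃, h12, h13, h23⟩ := Finset.two_lt_card.mp hc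
    rw [hE, Finset.mem_filter] at hy₁ hy₂ hy₃
    exact edges_at_vertex (y := s) h0 hy₁.2 hy₂.2 hy₃.2 (by simp) (by simp) (by simp)
      (fun h => h12 (hinj s _ _ h)) (fun h => h13 (hinj s _ _ h))
      (fun h => h23 (hinj s _ _ h))
  have hEc : (E c).card ≤ 1 := by
    by_contra hc
    push_neg at hc
    obtain ⟨y₁, hy₁, y₂, hy₂, h12⟩ := Finset.one_lt_card.mp hc
    rw [hE, Finset.mem_filter] at hy₁ hy₂
    exact h12 (hinj c _ _ (start_edge_unique h0 hy₁.2 hy₂.2 (by simp) (by simp)))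
  have hsub : {v | ∃ x ∈ S, R.Adj x v} \ S ⊆ ↑(F.biUnion E) := by
    rintro y ⟨⟨x, hxS, hadj⟩, hyS⟩
    obtain ⟨s, hsS, hse⟩ := hnbr x hxS y (hRG hadj) hyS
    rw [Finset.mem_coe, Finset.mem_biUnion]
    exact ⟨s, Set.mem_toFinset.mpr hsS, by rw [hE, Finset.mem_filter]; exact ⟨Finset.mem_univ _, hse⟩⟩
  have h1 : ({v | ∃ x ∈ S, R.Adj x v} \ S).ncard ≤ (F.biUnion E).card := by
    rw [← Set.ncard_coe_finset]
    exact Set.ncard_le_ncard hsub (Finset.finite_toSet _)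
  have h2 : (F.biUnion E).card ≤ ∑ s ∈ F, (E s).card := Finset.card_biUnion_le
  have h3 : ∑ s ∈ F.erase c, (E s).card + (E c).card = ∑ s ∈ F, (E s).card :=
    Finset.sum_erase_add F _ hcF
  have h4 : ∑ s ∈ F.erase c, (E s).card ≤ (F.erase c).card * 2 := by
    have := Finset.sum_le_card_nsmul (F.erase c) (fun s => (E s).card) 2
      (fun x _ => hE2 x)
    simpa using this
  have h5 : 2 * S.ncard ≤ ({v | ∃ x ∈ S, R.Adj x v} \ S).ncard := by
    exact_mod_cast hexp
  have h6 : F.card = S.ncard := (Set.ncard_eq_toFinset_card' S).symm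
  have hc1 : 1 ≤ F.card := Finset.card_pos.mpr ⟨c, hcF⟩
  have h7 : (F.erase c).card = F.card - 1 := Finset.card_erase_of_mem hcF
  omega

end PosaAux

open PosaAux SimpleGraph in
/-- **Lemma 2.3 (Pósa).** If `R` is a `(k,2)`-expander on an `n`-element vertex set and `P`
is a path which is a longest path in `P ∪ R`, then at least `(k+1)²/2` unordered pairs of
distinct vertices are boosters for `(P,R)`. -/
theorem posa_boosters {V : Type*} [Fintype V] [DecidableEq V] (n k : ℕ)
    (hn : 0 < n) (hk : 0 < k) (hcard : Fintype.card V = n)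
    (R : SimpleGraph V) (hR : IsExpander R (k : ℝ) 2)
    {a b : V} (P : (⊤ : SimpleGraph V).Walk a b) (hP : P.IsPath)
    (hmax : ∀ (u v : V) (Q : (pathGraph P ⊔ R).Walk u v), Q.IsPath → Q.length ≤ P.length) :
    (((k : ℝ) + 1) ^ 2 / 2) ≤
      (({s : Sym2 V | ∃ v w : V, s = s(v, w) ∧ IsBooster R P v w}.ncard : ℝ)) := by
  classical
  set G := pathGraph P ⊔ R with hG
  have hRG : R ≤ G := le_sup_right
  have hV : Nonempty V := by
    rw [← Fintype.card_pos_iff, hcard]; exact hn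
  obtain ⟨v⟩ := hV
  have hL : 1 ≤ P.length := by
    have h1 : ((({v} : Set V).ncard : ℝ)) ≤ (k : ℝ) := by
      rw [Set.ncard_singleton]; exact_mod_cast hk
    have h2 := hR {v} h1
    rw [Set.ncard_singleton] at h2
    have h3 : ({u | ∃ x ∈ ({v} : Set V), R.Adj x u} \ {v}).Nonempty := by
      rw [Set.nonempty_iff_ne_empty]
      intro hemp
      rw [hemp, Set.ncard_empty] at h2
      norm_num at h2
    obtain ⟨w, ⟨x, hx, hadj⟩, -⟩ := h3
    rw [Set.mem_singleton_iff] at hx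
    subst hx
    have hGadj : G.Adj x w := hRG hadj
    have hp : (Walk.cons hGadj Walk.nil).IsPath := by
      rw [Walk.cons_isPath_iff]
      exact ⟨Walk.IsPath.nil, by simpa using hGadj.ne⟩
    have := hmax _ _ _ hp
    simpa using this
  have hsub : ∀ e ∈ P.edges, e ∈ G.edgeSet := by
    intro e he
    have h1 : e ∈ (pathGraph P).edgeSet := by
      rw [_root_.pathGraph, SimpleGraph.edgeSet_fromEdgeSet]
      exact ⟨he, SimpleGraph.not_isDiag_of_mem_edgeSet _ (P.edges_subset_edgeSet he)⟩
    exact SimpleGraph.edgeSet_mono le_sup_left h1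
  have h0 : (P.transfer G hsub).IsPath := hP.transfer hsub
  have hlen0 : (P.transfer G hsub).length = P.length := P.length_transfer hsub
  obtain ⟨F₁, hF₁card, hF₁⟩ := core hR hRG hL hmax (P.transfer G hsub) h0 hlen0
  have hstep : ∀ x : V, ∃ Fx : Finset V, x ∈ F₁ →
      (k + 1 ≤ Fx.card ∧ ∀ w ∈ Fx, ∃ Q : G.Walk w x, Q.IsPath ∧ Q.length = P.length) := by
    intro x
    by_cases hx : x ∈ F₁
    · obtain ⟨Qx, hQxP, hQxL⟩ := hF₁ x hx
      obtain ⟨Fx, h1, h2⟩ := core hR hRG hL hmax Qx.reverse hQxP.reverse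
        (by rw [Walk.length_reverse]; exact hQxL)
      exact ⟨Fx, fun _ => ⟨h1, h2⟩⟩
    · exact ⟨∅, fun h => absurd h hx⟩
  choose g hg using hstep
  have hB : ∀ x ∈ F₁, ∀ w ∈ g x,
      s(x, w) ∈ {s : Sym2 V | ∃ v w : V, s = s(v, w) ∧ IsBooster R P v w} := by
    intro x hx w hw
    obtain ⟨Q, hQP, hQL⟩ := (hg x hx).2 w hw
    have hwx : w ≠ x := PosaAux.ne_of_isPath_pos hQP (by omega)
    exact ⟨w, x, Sym2.eq_swap, hwx, Q, hQP, hQL⟩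
  set T : Finset (V × V) := F₁.biUnion (fun x => (g x).image (fun w => (x, w))) with hT
  have hdisj : ∀ x ∈ F₁, ∀ y ∈ F₁, x ≠ y →
      Disjoint ((g x).image (fun w => (x, w))) ((g y).image (fun w => (y, w))) := by
    intro x _ y _ hxy
    rw [Finset.disjoint_left]
    intro p hp hq
    rw [Finset.mem_image] at hp hq
    obtain ⟨w1, -, rfl⟩ := hp
    obtain ⟨w2, -, heq⟩ := hq
    exact hxy ((Prod.mk.injEq _ _ _ _).mp heq.symm).1
  have hTcard : (k + 1) * (k + 1) ≤ T.card := by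
    rw [hT, Finset.card_biUnion hdisj]
    calc (k + 1) * (k + 1) ≤ F₁.card * (k + 1) := Nat.mul_le_mul_right _ hF₁card
      _ ≤ ∑ x ∈ F₁, ((g x).image (fun w => (x, w))).card := by
          have := Finset.card_nsmul_le_sum F₁
            (fun x => ((g x).image (fun w => (x, w))).card) (k + 1) (by
              intro x hx
              show k + 1 ≤ ((g x).image (fun w => (x, w))).card
              rw [Finset.card_image_of_injective _ (fun w1 w2 h =>
                ((Prod.mk.injEq _ _ _ _).mp h).2)]
              exact (hg x hx).1)
          simpa [smul_eq_mul] using this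
  have hfib : ∀ s ∈ T.image (fun p : V × V => s(p.1, p.2)),
      (T.filter (fun p => s(p.1, p.2) = s)).card ≤ 2 := by
    intro s hs
    induction s with
    | h v w =>
      have hss : T.filter (fun p => s(p.1, p.2) = s(v, w)) ⊆ {(v, w), (w, v)} := by
        intro p hp
        rw [Finset.mem_filter] at hp
        rw [Finset.mem_insert, Finset.mem_singleton]
        rcases Sym2.eq_iff.mp hp.2 with ⟨h1, h2⟩ | ⟨h1, h2⟩
        · left; exact Prod.ext h1 h2
        · right; exact Prod.ext h1 h2
      exact (Finset.card_le_card hss).trans ((Finset.card_insert_le _ _).trans (by simp))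
  have hTle := Finset.card_le_mul_card_image (f := fun p : V × V => s(p.1, p.2)) T 2 hfib
  have hIB : ↑(T.image (fun p : V × V => s(p.1, p.2))) ⊆
      {s : Sym2 V | ∃ v w : V, s = s(v, w) ∧ IsBooster R P v w} := by
    intro s hs
    rw [Finset.mem_coe, Finset.mem_image] at hs
    obtain ⟨⟨x, w⟩, hp, rfl⟩ := hs
    rw [hT, Finset.mem_biUnion] at hp
    obtain ⟨x', hx', hmem⟩ := hp
    rw [Finset.mem_image] at hmem
    obtain ⟨w', hw', heq⟩ := hmem
    rw [Prod.mk.injEq] at heq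
    obtain ⟨rfl, rfl⟩ := heq
    exact hB _ hx' _ hw'
  have hBcard : (T.image (fun p : V × V => s(p.1, p.2))).card ≤
      {s : Sym2 V | ∃ v w : V, s = s(v, w) ∧ IsBooster R P v w}.ncard := by
    rw [← Set.ncard_coe_finset]
    exact Set.ncard_le_ncard hIB (Set.toFinite _)
  have hfinal : (k + 1) * (k + 1) ≤
      2 * {s : Sym2 V | ∃ v w : V, s = s(v, w) ∧ IsBooster R P v w}.ncard := by
    calc (k + 1) * (k + 1) ≤ T.card := hTcard
      _ ≤ 2 * (T.image (fun p : V × V => s(p.1, p.2))).card := hTle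
      _ ≤ 2 * _ := Nat.mul_le_mul_left _ hBcard
  have hfinal' : ((k : ℝ) + 1) * ((k : ℝ) + 1) ≤
      2 * ({s : Sym2 V | ∃ v w : V, s = s(v, w) ∧ IsBooster R P v w}.ncard : ℝ) := by
    exact_mod_cast hfinal
  rw [pow_two]
  linarith
end

section
/- For every sequence of edge probabilities p = p(n) ∈ [0,1] with n·p(n)/log n → ∞, every fixed γ > 0, and every function ω(n) → ∞, the random graph G = G(n,p) asymptotically almost surely satisfies all of the following: (i) every vertex has degree between (1−γ)np and (1+γ)np; (ii) every vertex set X with |X| < (np⁴)^{−1/3} spans at most 8|X| edges; (iii) every vertex set X of size t with (np⁴)^{−1/3} ≤ t ≤ n spans at most t²p·(n/t)^{1/2} edges; (iv) every pair of disjoint vertex sets X and Y with |X||Y|p ≥ ω(n)·n satisfies e(X,Y) ≥ |X||Y|p/2. -/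
open Filter

-- Probability that the binomial random graph `G(n,p)` satisfies predicate `P`.
open scoped Classical in
noncomputable def gnpProb (n : ℕ) (p : ℝ) (P : SimpleGraph (Fin n) → Prop) : ℝ :=
  ∑ G : SimpleGraph (Fin n),
    if P G then p ^ G.edgeSet.ncard * (1 - p) ^ (n.choose 2 - G.edgeSet.ncard) else 0

/-- The number of edges of `G` spanned by the vertex set `X`. -/
noncomputable def spannedEdges {n : ℕ} (G : SimpleGraph (Fin n)) (X : Set (Fin n)) : ℕ :=
  {e : Sym2 (Fin n) | e ∈ G.edgeSet ∧ ∀ v ∈ e, v ∈ X}.ncard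

/-- The number of edges of `G` with one endpoint in `X` and the other in `Y`. -/
noncomputable def crossEdges {n : ℕ} (G : SimpleGraph (Fin n)) (X Y : Set (Fin n)) : ℕ :=
  {e : Sym2 (Fin n) | e ∈ G.edgeSet ∧ ∃ x ∈ X, ∃ y ∈ Y, e = s(x, y)}.ncard

open scoped Classical

/-- the set of potential edges -/
noncomputable def slots (n : ℕ) : Finset (Sym2 (Fin n)) :=
  Finset.univ.filter (fun e => ¬ e.IsDiag)

lemma card_slots (n : ℕ) : (slots n).card = n.choose 2 := by
  have := Sym2.card_subtype_not_diag (α := Fin n)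
  rw [Fintype.card_subtype] at this
  simpa [slots] using this

/-- probability of an event on edge-subsets -/
noncomputable def prE (n : ℕ) (p : ℝ) (Q : Finset (Sym2 (Fin n)) → Prop) : ℝ :=
  ∑ A ∈ (slots n).powerset,
    if Q A then p ^ A.card * (1 - p) ^ (n.choose 2 - A.card) else 0

lemma gnpProb_eq (n : ℕ) (p : ℝ) (P : SimpleGraph (Fin n) → Prop) :
    gnpProb n p P = prE n p (fun A => P (SimpleGraph.fromEdgeSet (↑A : Set (Sym2 (Fin n))))) := by
  classical
  rw [gnpProb, prE]
  refine Finset.sum_nbij' (fun G => G.edgeFinset) (fun A => SimpleGraph.fromEdgeSet ↑A) ?_ ?_ ?_ ?_ ?_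
  · intro G _
    simp only [Finset.mem_powerset, slots]
    intro e he
    simp only [Finset.mem_filter, Finset.mem_univ, true_and]
    exact G.not_isDiag_of_mem_edgeSet (SimpleGraph.mem_edgeFinset.mp he)
  · intro A _; exact Finset.mem_univ _
  · intro G _
    simp [SimpleGraph.coe_edgeFinset, SimpleGraph.fromEdgeSet_edgeSet]
  · intro A hA
    rw [Finset.mem_powerset] at hA
    have hnd : ∀ e ∈ A, ¬ e.IsDiag := by
      intro e he
      have := hA he
      simpa [slots] using this
    ext e
    simp only [SimpleGraph.mem_edgeFinset, SimpleGraph.edgeSet_fromEdgeSet, Set.mem_diff,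
      Finset.mem_coe, Set.mem_setOf_eq]
    exact ⟨fun h => h.1, fun h => ⟨h, hnd e h⟩⟩
  · intro G _
    have h1 : G.edgeSet.ncard = G.edgeFinset.card := by
      rw [Set.ncard_eq_toFinset_card']; rfl
    have h2 : SimpleGraph.fromEdgeSet (↑G.edgeFinset : Set (Sym2 (Fin n))) = G := by
      simp [SimpleGraph.coe_edgeFinset, SimpleGraph.fromEdgeSet_edgeSet]
    rw [h1, h2]

section basic
variable {n : ℕ} {p : ℝ}

lemma weight_nonneg (hp0 : 0 ≤ p) (hp1 : p ≤ 1) (A : Finset (Sym2 (Fin n))) :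
    0 ≤ p ^ A.card * (1 - p) ^ (n.choose 2 - A.card) :=
  mul_nonneg (pow_nonneg hp0 _) (pow_nonneg (by linarith) _)

/-- the mgf identity -/
lemma mgf_eq (S : Finset (Sym2 (Fin n))) (hS : S ⊆ slots n) (c : ℝ) :
    ∑ A ∈ (slots n).powerset,
      (p ^ A.card * (1 - p) ^ (n.choose 2 - A.card)) * c ^ (A ∩ S).card
      = ((1 - p) + p * c) ^ S.card := by
  classical
  have key := Finset.prod_add (fun e : Sym2 (Fin n) => if e ∈ S then p * c else p)
    (fun _ => (1 - p)) (slots n)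
  have hfil : (slots n).filter (fun e => e ∈ S) = S := by
    rw [Finset.filter_mem_eq_inter, Finset.inter_eq_right.mpr hS]
  calc ∑ A ∈ (slots n).powerset,
      (p ^ A.card * (1 - p) ^ (n.choose 2 - A.card)) * c ^ (A ∩ S).card
      = ∑ A ∈ (slots n).powerset,
        (∏ e ∈ A, if e ∈ S then p * c else p) * ∏ _e ∈ slots n \ A, (1 - p) := by
        refine Finset.sum_congr rfl fun A hA => ?_
        rw [Finset.mem_powerset] at hA
        rw [Finset.prod_ite]
        have h1 : A.filter (fun e => e ∈ S) = A ∩ S := Finset.filter_mem_eq_inter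
        have h3 : (A.filter (fun e => e ∈ S)).card + (A.filter (fun e => ¬ e ∈ S)).card
            = A.card := Finset.card_filter_add_card_filter_not _
        rw [h1] at h3
        have hcs : (slots n \ A).card = n.choose 2 - A.card := by
          rw [Finset.card_sdiff_of_subset hA, card_slots]
        rw [h1, Finset.prod_const, Finset.prod_const, Finset.prod_const, hcs, mul_pow]
        rw [show A.card = (A ∩ S).card + (A.filter (fun e => ¬ e ∈ S)).card from h3.symm,
          pow_add]
        ring
    _ = ∏ e ∈ slots n, ((if e ∈ S then p * c else p) + (1 - p)) := key.symm
    _ = ∏ e ∈ slots n, (if e ∈ S then (1 - p) + p * c else 1) := by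
        refine Finset.prod_congr rfl fun e _ => ?_
        split <;> ring
    _ = ((1 - p) + p * c) ^ S.card := by
        rw [Finset.prod_ite, hfil, Finset.prod_const, Finset.prod_const, one_pow, mul_one]

lemma prE_sum_one (n : ℕ) (p : ℝ) :
    ∑ A ∈ (slots n).powerset, p ^ A.card * (1 - p) ^ (n.choose 2 - A.card) = 1 := by
  have := mgf_eq (n := n) (p := p) ∅ (Finset.empty_subset _) 1
  simpa using this

lemma prE_nonneg (hp0 : 0 ≤ p) (hp1 : p ≤ 1) (Q : Finset (Sym2 (Fin n)) → Prop) :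
    0 ≤ prE n p Q := by
  classical
  refine Finset.sum_nonneg fun A _ => ?_
  split
  · exact weight_nonneg hp0 hp1 A
  · exact le_rfl

lemma prE_mono (hp0 : 0 ≤ p) (hp1 : p ≤ 1) {Q R : Finset (Sym2 (Fin n)) → Prop}
    (h : ∀ A, A ⊆ slots n → Q A → R A) : prE n p Q ≤ prE n p R := by
  classical
  refine Finset.sum_le_sum fun A hA => ?_
  rw [Finset.mem_powerset] at hA
  by_cases hQ : Q A
  · rw [if_pos hQ, if_pos (h A hA hQ)]
  · rw [if_neg hQ]
    split
    · exact weight_nonneg hp0 hp1 A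
    · exact le_rfl

lemma prE_le_one (hp0 : 0 ≤ p) (hp1 : p ≤ 1) (Q : Finset (Sym2 (Fin n)) → Prop) :
    prE n p Q ≤ 1 := by
  classical
  rw [← prE_sum_one n p]
  refine Finset.sum_le_sum fun A _ => ?_
  split
  · exact le_rfl
  · exact weight_nonneg hp0 hp1 A

lemma one_sub_prE (Q : Finset (Sym2 (Fin n)) → Prop) :
    1 - prE n p Q = prE n p (fun A => ¬ Q A) := by
  classical
  rw [← prE_sum_one n p, prE, prE, ← Finset.sum_sub_distrib]
  refine Finset.sum_congr rfl fun A _ => ?_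
  by_cases hQ : Q A <;> simp [hQ]

lemma prE_or (hp0 : 0 ≤ p) (hp1 : p ≤ 1) (Q R : Finset (Sym2 (Fin n)) → Prop) :
    prE n p (fun A => Q A ∨ R A) ≤ prE n p Q + prE n p R := by
  classical
  rw [prE, prE, prE, ← Finset.sum_add_distrib]
  refine Finset.sum_le_sum fun A _ => ?_
  by_cases hQ : Q A <;> by_cases hR : R A <;>
    simp [hQ, hR, weight_nonneg hp0 hp1 A, le_add_of_nonneg_right, le_add_of_nonneg_left]

lemma prE_false (Q : Finset (Sym2 (Fin n)) → Prop)
    (h : ∀ A, A ⊆ slots n → ¬ Q A) : prE n p Q = 0 := by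
  classical
  refine Finset.sum_eq_zero fun A hA => ?_
  rw [Finset.mem_powerset] at hA
  rw [if_neg (h A hA)]

lemma prE_union (hp0 : 0 ≤ p) (hp1 : p ≤ 1) {ι : Type*} (s : Finset ι)
    (E : ι → Finset (Sym2 (Fin n)) → Prop) :
    prE n p (fun A => ∃ i ∈ s, E i A) ≤ ∑ i ∈ s, prE n p (E i) := by
  classical
  induction s using Finset.induction_on with
  | empty => simp [prE_false (p := p) _ (fun A _ h => by simpa using h)]
  | @insert a s' hx ih =>
    rw [Finset.sum_insert hx]
    calc prE n p (fun A => ∃ i ∈ insert a s', E i A)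
        ≤ prE n p (fun A => E a A ∨ ∃ i ∈ s', E i A) := by
          refine prE_mono hp0 hp1 fun A _ h => ?_
          obtain ⟨i, hi, hEi⟩ := h
          rcases Finset.mem_insert.mp hi with rfl | hi
          · exact Or.inl hEi
          · exact Or.inr ⟨i, hi, hEi⟩
      _ ≤ prE n p (E a) + prE n p (fun A => ∃ i ∈ s', E i A) := prE_or hp0 hp1 _ _
      _ ≤ _ := by linarith [ih]

end basic

section chernoff
variable {n : ℕ} {p : ℝ}

open Real

lemma chernoff_core (hp0 : 0 ≤ p) (hp1 : p ≤ 1) {S : Finset (Sym2 (Fin n))}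
    (hS : S ⊆ slots n) {c : ℝ} (hc : 0 < c) (a : ℝ)
    (Q : Finset (Sym2 (Fin n)) → Prop)
    (hQ : ∀ A, A ⊆ slots n → Q A → (1:ℝ) ≤ c ^ (((A ∩ S).card : ℝ) - a)) :
    prE n p Q ≤ c ^ (-a) * ((1 - p) + p * c) ^ S.card := by
  classical
  rw [← mgf_eq S hS c, prE, Finset.mul_sum]
  refine Finset.sum_le_sum fun A hA => ?_
  rw [Finset.mem_powerset] at hA
  by_cases hq : Q A
  · rw [if_pos hq]
    have h1 : (1:ℝ) ≤ c ^ (((A ∩ S).card : ℝ) - a) := hQ A hA hq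
    have h2 : c ^ (-a) * c ^ (((A ∩ S).card : ℝ)) = c ^ (((A ∩ S).card : ℝ) - a) := by
      rw [← Real.rpow_add hc]; ring_nf
    have h3 : c ^ (((A ∩ S).card : ℝ)) = c ^ ((A ∩ S).card) := Real.rpow_natCast c _
    calc p ^ A.card * (1 - p) ^ (n.choose 2 - A.card)
        = (p ^ A.card * (1 - p) ^ (n.choose 2 - A.card)) * 1 := by ring
      _ ≤ (p ^ A.card * (1 - p) ^ (n.choose 2 - A.card)) * (c ^ (-a) * c ^ ((A ∩ S).card)) := by
          refine mul_le_mul_of_nonneg_left ?_ (weight_nonneg hp0 hp1 A)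
          rw [← h3, h2]; exact h1
      _ = c ^ (-a) * ((p ^ A.card * (1 - p) ^ (n.choose 2 - A.card)) * c ^ ((A ∩ S).card)) := by
          ring
  · rw [if_neg hq]
    refine mul_nonneg (le_of_lt (Real.rpow_pos_of_pos hc _)) ?_
    refine mul_nonneg (weight_nonneg hp0 hp1 A) (pow_nonneg (le_of_lt hc) _)

lemma chernoff_to_exp (hp0 : 0 ≤ p) (hp1 : p ≤ 1) {c : ℝ} (hc : 0 < c) (a : ℝ) (m : ℕ) :
    c ^ (-a) * ((1 - p) + p * c) ^ m ≤ Real.exp (-(a * Real.log c) + p * (c - 1) * m) := by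
  have h0 : (0:ℝ) ≤ (1 - p) + p * c := by nlinarith
  have h1 : (1 - p) + p * c ≤ Real.exp (p * (c - 1)) := by
    have := Real.add_one_le_exp (p * (c - 1))
    nlinarith
  have h2 : ((1 - p) + p * c) ^ m ≤ Real.exp (p * (c - 1)) ^ m :=
    pow_le_pow_left₀ h0 h1 m
  have h3 : c ^ (-a) = Real.exp (-(a * Real.log c)) := by
    rw [Real.rpow_def_of_pos hc]; ring_nf
  rw [h3, Real.exp_add]
  refine mul_le_mul_of_nonneg_left ?_ (le_of_lt (Real.exp_pos _))
  calc ((1 - p) + p * c) ^ m ≤ Real.exp (p * (c - 1)) ^ m := h2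
    _ = Real.exp (m * (p * (c - 1))) := by rw [← Real.exp_nat_mul]
    _ = Real.exp (p * (c - 1) * m) := by ring_nf

/-- Chernoff upper-tail bound. -/
lemma chernoff_upper (hp0 : 0 ≤ p) (hp1 : p ≤ 1) {S : Finset (Sym2 (Fin n))}
    (hS : S ⊆ slots n) {c : ℝ} (hc : 1 ≤ c) (a : ℝ) :
    prE n p (fun A => a ≤ ((A ∩ S).card : ℝ))
      ≤ Real.exp (-(a * Real.log c) + p * (c - 1) * S.card) := by
  refine le_trans (chernoff_core hp0 hp1 hS (lt_of_lt_of_le one_pos hc) a _ ?_)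
    (chernoff_to_exp hp0 hp1 (lt_of_lt_of_le one_pos hc) a S.card)
  intro A _ hQ
  exact Real.one_le_rpow hc (by linarith)

/-- Chernoff lower-tail bound. -/
lemma chernoff_lower (hp0 : 0 ≤ p) (hp1 : p ≤ 1) {S : Finset (Sym2 (Fin n))}
    (hS : S ⊆ slots n) {c : ℝ} (hc0 : 0 < c) (hc1 : c ≤ 1) (a : ℝ) :
    prE n p (fun A => ((A ∩ S).card : ℝ) ≤ a)
      ≤ Real.exp (-(a * Real.log c) + p * (c - 1) * S.card) := by
  refine le_trans (chernoff_core hp0 hp1 hS hc0 a _ ?_) (chernoff_to_exp hp0 hp1 hc0 a S.card)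
  intro A _ hQ
  exact Real.one_le_rpow_of_pos_of_le_one_of_nonpos hc0 hc1 (by linarith)

end chernoff

section counting
variable {n : ℕ}

open SimpleGraph

noncomputable def vSlots (n : ℕ) (v : Fin n) : Finset (Sym2 (Fin n)) :=
  (slots n).filter (fun e => v ∈ e)

noncomputable def xSlots (n : ℕ) (X : Finset (Fin n)) : Finset (Sym2 (Fin n)) :=
  (slots n).filter (fun e => ∀ v ∈ e, v ∈ X)

noncomputable def xySlots (n : ℕ) (X Y : Finset (Fin n)) : Finset (Sym2 (Fin n)) :=
  (slots n).filter (fun e => ∃ x ∈ X, ∃ y ∈ Y, e = s(x, y))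

lemma vSlots_subset (v : Fin n) : vSlots n v ⊆ slots n := Finset.filter_subset _ _
lemma xSlots_subset (X : Finset (Fin n)) : xSlots n X ⊆ slots n := Finset.filter_subset _ _
lemma xySlots_subset (X Y : Finset (Fin n)) : xySlots n X Y ⊆ slots n :=
  Finset.filter_subset _ _

lemma mem_slots {e : Sym2 (Fin n)} : e ∈ slots n ↔ ¬ e.IsDiag := by
  simp [slots]

lemma edgeSet_from {A : Finset (Sym2 (Fin n))} (hA : A ⊆ slots n) :
    (SimpleGraph.fromEdgeSet (↑A : Set (Sym2 (Fin n)))).edgeSet = ↑A := by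
  rw [SimpleGraph.edgeSet_fromEdgeSet]
  ext e
  simp only [Set.mem_diff, Finset.mem_coe, Set.mem_setOf_eq]
  exact ⟨fun h => h.1, fun h => ⟨h, mem_slots.mp (hA h)⟩⟩

lemma card_vSlots (v : Fin n) : (vSlots n v).card = n - 1 := by
  classical
  have : vSlots n v = (Finset.univ.erase v).image (fun u => s(v, u)) := by
    ext e
    simp only [vSlots, Finset.mem_filter, mem_slots, Finset.mem_image, Finset.mem_erase,
      Finset.mem_univ, and_true]
    constructor
    · rintro ⟨hnd, hv⟩
      induction e with
      | _ x y =>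
        simp only [Sym2.mk_isDiag_iff] at hnd
        rcases Sym2.mem_iff.mp hv with rfl | rfl
        · exact ⟨y, fun h => hnd h.symm, rfl⟩
        · exact ⟨x, fun h => hnd h, Sym2.eq_swap⟩
    · rintro ⟨u, hu, rfl⟩
      refine ⟨?_, by simp⟩
      simp only [Sym2.mk_isDiag_iff]
      exact fun h => hu h.symm
  rw [this, Finset.card_image_of_injOn, Finset.card_erase_of_mem (Finset.mem_univ v),
    Finset.card_univ, Fintype.card_fin]
  intro a _ b _ hab
  exact (Sym2.congr_right).mp hab

lemma xSlots_eq (X : Finset (Fin n)) : xSlots n X = X.offDiag.image Sym2.mk.uncurry := by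
  classical
  ext e
  induction e with
  | _ x y =>
    simp only [xSlots, Finset.mem_filter, mem_slots, Sym2.mk_isDiag_iff, Finset.mem_image,
      Finset.mem_offDiag, Prod.exists]
    constructor
    · rintro ⟨hnd, hall⟩
      exact ⟨x, y, ⟨hall x (by simp), hall y (by simp), hnd⟩, rfl⟩
    · rintro ⟨a, b, ⟨ha, hb, hab⟩, h⟩
      rcases Sym2.eq_iff.mp h with ⟨rfl, rfl⟩ | ⟨rfl, rfl⟩
      · refine ⟨hab, ?_⟩
        intro v hv
        rcases Sym2.mem_iff.mp hv with rfl | rfl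
        · exact ha
        · exact hb
      · refine ⟨fun hh => hab hh.symm, ?_⟩
        intro v hv
        rcases Sym2.mem_iff.mp hv with rfl | rfl
        · exact hb
        · exact ha

lemma card_xSlots (X : Finset (Fin n)) : (xSlots n X).card = X.card.choose 2 := by
  rw [xSlots_eq]; exact Sym2.card_image_offDiag X

lemma xySlots_eq (X Y : Finset (Fin n)) (hd : Disjoint X Y) :
    xySlots n X Y = (X ×ˢ Y).image (fun q => s(q.1, q.2)) := by
  classical
  ext e
  simp only [xySlots, Finset.mem_filter, mem_slots, Finset.mem_image, Finset.mem_product,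
    Prod.exists]
  constructor
  · rintro ⟨_, x, hx, y, hy, rfl⟩
    exact ⟨x, y, ⟨hx, hy⟩, rfl⟩
  · rintro ⟨x, y, ⟨hx, hy⟩, rfl⟩
    have hne : x ≠ y := fun h => (Finset.disjoint_left.mp hd hx) (h ▸ hy)
    exact ⟨by simpa [Sym2.mk_isDiag_iff] using hne, x, hx, y, hy, rfl⟩

lemma card_xySlots (X Y : Finset (Fin n)) (hd : Disjoint X Y) :
    (xySlots n X Y).card = X.card * Y.card := by
  classical
  rw [xySlots_eq X Y hd, Finset.card_image_of_injOn, Finset.card_product]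
  rintro ⟨x, y⟩ hxy ⟨x', y'⟩ hxy' h
  simp only [Finset.mem_coe, Finset.mem_product] at hxy hxy'
  rcases Sym2.eq_iff.mp h with ⟨rfl, rfl⟩ | ⟨rfl, rfl⟩
  · rfl
  · exact absurd hxy.1 (Finset.disjoint_right.mp hd hxy'.2)

lemma inter_filter_eq {A : Finset (Sym2 (Fin n))} (hA : A ⊆ slots n)
    (q : Sym2 (Fin n) → Prop) [DecidablePred q] :
    A ∩ ((slots n).filter q) = A.filter q := by
  ext e
  simp only [Finset.mem_inter, Finset.mem_filter]
  exact ⟨fun ⟨h1, _, h3⟩ => ⟨h1, h3⟩, fun ⟨h1, h2⟩ => ⟨h1, hA h1, h2⟩⟩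

lemma degree_count {A : Finset (Sym2 (Fin n))} (hA : A ⊆ slots n) (v : Fin n) :
    ((SimpleGraph.fromEdgeSet (↑A : Set (Sym2 (Fin n)))).neighborSet v).ncard
      = (A ∩ vSlots n v).card := by
  classical
  set G := SimpleGraph.fromEdgeSet (↑A : Set (Sym2 (Fin n))) with hG
  have hedge : G.edgeSet = ↑A := edgeSet_from hA
  have h1 : (G.neighborSet v).ncard = (G.neighborFinset v).card := by
    rw [Set.ncard_eq_toFinset_card']; rfl
  rw [h1]
  refine Finset.card_bij (fun u _ => s(v, u)) ?_ ?_ ?_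
  · intro u hu
    rw [SimpleGraph.mem_neighborFinset] at hu
    have he : s(v, u) ∈ G.edgeSet := hu
    rw [hedge] at he
    rw [Finset.mem_inter, vSlots, Finset.mem_filter]
    exact ⟨he, hA he, by simp⟩
  · intro a _ b _ hab
    exact (Sym2.congr_right).mp hab
  · intro e he
    rw [Finset.mem_inter, vSlots, Finset.mem_filter] at he
    obtain ⟨heA, _, hv⟩ := he
    have hnd : ¬ e.IsDiag := mem_slots.mp (hA heA)
    induction e with
    | _ x y =>
      rcases Sym2.mem_iff.mp hv with rfl | rfl
      · refine ⟨y, ?_, rfl⟩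
        rw [SimpleGraph.mem_neighborFinset]
        show s(v, y) ∈ G.edgeSet
        rw [hedge]; exact heA
      · refine ⟨x, ?_, Sym2.eq_swap⟩
        rw [SimpleGraph.mem_neighborFinset]
        show s(v, x) ∈ G.edgeSet
        rw [hedge, Sym2.eq_swap]; exact heA

lemma spanned_count {A : Finset (Sym2 (Fin n))} (hA : A ⊆ slots n) (X : Finset (Fin n)) :
    spannedEdges (SimpleGraph.fromEdgeSet (↑A : Set (Sym2 (Fin n)))) (↑X : Set (Fin n))
      = (A ∩ xSlots n X).card := by
  classical
  rw [spannedEdges, xSlots, inter_filter_eq hA]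
  have : {e : Sym2 (Fin n) | e ∈ (SimpleGraph.fromEdgeSet (↑A : Set (Sym2 (Fin n)))).edgeSet
      ∧ ∀ v ∈ e, v ∈ (↑X : Set (Fin n))}
      = ↑(A.filter (fun e => ∀ v ∈ e, v ∈ X)) := by
    rw [edgeSet_from hA]
    ext e
    simp
  rw [this, Set.ncard_coe_finset]

lemma cross_count {A : Finset (Sym2 (Fin n))} (hA : A ⊆ slots n) (X Y : Finset (Fin n)) :
    crossEdges (SimpleGraph.fromEdgeSet (↑A : Set (Sym2 (Fin n)))) (↑X : Set (Fin n)) ↑Y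
      = (A ∩ xySlots n X Y).card := by
  classical
  rw [crossEdges, xySlots, inter_filter_eq hA]
  have : {e : Sym2 (Fin n) | e ∈ (SimpleGraph.fromEdgeSet (↑A : Set (Sym2 (Fin n)))).edgeSet
      ∧ ∃ x ∈ (↑X : Set (Fin n)), ∃ y ∈ (↑Y : Set (Fin n)), e = s(x, y)}
      = ↑(A.filter (fun e => ∃ x ∈ X, ∃ y ∈ Y, e = s(x, y))) := by
    rw [edgeSet_from hA]
    ext e
    simp
  rw [this, Set.ncard_coe_finset]

lemma xSlots_empty : xSlots n ∅ = ∅ := by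
  classical
  rw [xSlots_eq]
  simp

end counting

section prelim
open Real

/-- geometric tail bound -/
lemma geom_tail {r : ℝ} (hr0 : 0 ≤ r) (hr : r ≤ 1/2) (m : ℕ) :
    ∑ i ∈ Finset.range m, r ^ (i + 1) ≤ 2 * r := by
  have hr1 : r ≠ 1 := by linarith
  have h1 : ∑ i ∈ Finset.range m, r ^ i = (r ^ m - 1) / (r - 1) := geom_sum_eq hr1 m
  have h2 : ∑ i ∈ Finset.range m, r ^ (i+1) = r * ∑ i ∈ Finset.range m, r ^ i := by
    rw [Finset.mul_sum]
    exact Finset.sum_congr rfl fun i _ => by ring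
  have h3 : (0:ℝ) ≤ r ^ m := pow_nonneg hr0 m
  have h4 : ∑ i ∈ Finset.range m, r ^ i ≤ 2 := by
    rw [h1]
    rw [div_le_iff_of_neg (by linarith : r - 1 < 0)]
    nlinarith
  nlinarith [Finset.sum_nonneg (fun i (_ : i ∈ Finset.range m) => pow_nonneg hr0 i)]

/-- binomial coefficient bound `C(n,t) ≤ (e n / t)^t` in exp form -/
lemma choose_le_exp (n t : ℕ) (ht : 1 ≤ t) (htn : t ≤ n) :
    (n.choose t : ℝ) ≤ Real.exp (t * (1 + Real.log (n / t))) := by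
  have ht0 : (0:ℝ) < t := by exact_mod_cast ht
  have hn0 : (0:ℝ) < n := by exact_mod_cast lt_of_lt_of_le (by exact_mod_cast ht) htn
  have h1 : (n.choose t : ℝ) ≤ (n:ℝ) ^ t / (t.factorial : ℝ) := Nat.choose_le_pow_div t n
  have h2 : (t:ℝ) ^ t / (t.factorial : ℝ) ≤ Real.exp t :=
    Real.pow_div_factorial_le_exp (x := (t:ℝ)) (by positivity) t
  have hfac : (0:ℝ) < (t.factorial : ℝ) := by exact_mod_cast t.factorial_pos
  have h3 : (n:ℝ) ^ t / (t.factorial : ℝ) = ((n:ℝ)/t) ^ t * ((t:ℝ) ^ t / (t.factorial : ℝ)) := by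
    rw [div_pow]
    field_simp
  have h4 : ((n:ℝ)/t) ^ t = Real.exp (t * Real.log (n / t)) := by
    have := (Real.exp_log (show (0:ℝ) < ((n:ℝ)/t) ^ t by positivity)).symm
    rw [Real.log_pow] at this
    exact this
  have h5 : (n:ℝ) ^ t / (t.factorial : ℝ) ≤ Real.exp (t * Real.log (n/t)) * Real.exp t := by
    rw [h3, h4]
    refine mul_le_mul_of_nonneg_left h2 (le_of_lt (Real.exp_pos _))
  refine le_trans h1 (le_trans h5 ?_)
  rw [← Real.exp_add]
  apply le_of_eq
  congr 1
  ring

/-- `log x - 1 + 1/x ≥ (log x)/10` for `x ≥ 2` -/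
lemma phi_bound {x : ℝ} (hx : 2 ≤ x) :
    Real.log x / 10 ≤ Real.log x - 1 + 1/x := by
  have hx0 : (0:ℝ) < x := by linarith
  have h2 : Real.log (x/2) ≥ 1 - 2/x := by
    have := Real.one_sub_inv_le_log_of_pos (show (0:ℝ) < x/2 by linarith)
    have hinv : (x/2)⁻¹ = 2/x := by field_simp
    rw [hinv] at this
    linarith
  have h3 : Real.log (x/2) = Real.log x - Real.log 2 := by
    rw [Real.log_div (by linarith) (by norm_num)]
  have hlog2 : Real.log 2 > 0.6931471803 := Real.log_two_gt_d9
  have hlog2' : Real.log 2 < 0.6931471808 := Real.log_two_lt_d9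
  have hxin : 1/x ≤ 1/2 := by
    rw [div_le_div_iff₀ hx0 (by norm_num)]; linarith
  have hxpos : 0 < 1/x := by positivity
  -- log x ≥ log 2 + 1 - 2/x
  have h4 : Real.log x ≥ Real.log 2 + 1 - 2/x := by
    rw [h3] at h2; linarith
  have h5 : 2/x = 2*(1/x) := by ring
  rw [h5] at h4
  linarith

lemma one_sub_inv_lt_log {x : ℝ} (hx : 0 < x) (hne : x ≠ 1) : 1 - 1/x < Real.log x := by
  have hxinv : x⁻¹ ≠ 1 := fun h => hne (by rw [← inv_inv x, h, inv_one])
  have h1 : Real.log x⁻¹ < x⁻¹ - 1 := Real.log_lt_sub_one_of_pos (inv_pos.mpr hx) hxinv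
  rw [Real.log_inv] at h1
  have h2 : 1/x = x⁻¹ := one_div x
  linarith

lemma hplus_pos {γ : ℝ} (hγ : 0 < γ) : 0 < (1+γ) * Real.log (1+γ) - γ := by
  have h := one_sub_inv_lt_log (x := 1+γ) (by linarith) (by intro h; nlinarith)
  have e1 : (1+γ)*(1 - 1/(1+γ)) = γ := by field_simp; ring
  nlinarith [mul_lt_mul_of_pos_left h (show (0:ℝ) < 1+γ by linarith)]

lemma hminus_pos {γ : ℝ} (hγ : 0 < γ) (hγ2 : γ < 1) : 0 < γ + (1-γ) * Real.log (1-γ) := by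
  have h := one_sub_inv_lt_log (x := 1-γ) (by linarith) (by intro h; nlinarith)
  have e1 : (1-γ)*(1 - 1/(1-γ)) = -γ := by
    have hne : (1:ℝ)-γ ≠ 0 := by linarith
    field_simp
    ring
  nlinarith [mul_lt_mul_of_pos_left h (show (0:ℝ) < 1-γ by linarith)]

end prelim

section unionmach
variable {n : ℕ} {p : ℝ}

/-- union bound over vertex subsets, organised by cardinality -/
lemma prE_union_sets (hp0 : 0 ≤ p) (hp1 : p ≤ 1) (P : ℕ → Prop)
    (E : Finset (Fin n) → Finset (Sym2 (Fin n)) → Prop) (g : ℕ → ℝ) (hg : ∀ t, 0 ≤ g t)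
    (hE : ∀ X : Finset (Fin n), P X.card → prE n p (E X) ≤ g X.card) :
    prE n p (fun A => ∃ X : Finset (Fin n), P X.card ∧ E X A)
      ≤ ∑ t ∈ Finset.range (n+1), (n.choose t : ℝ) * g t := by
  classical
  calc prE n p (fun A => ∃ X : Finset (Fin n), P X.card ∧ E X A)
      ≤ prE n p (fun A => ∃ X ∈ Finset.univ.filter (fun X : Finset (Fin n) => P X.card), E X A) := by
        refine prE_mono hp0 hp1 fun A _ h => ?_
        obtain ⟨X, hP, hEX⟩ := h
        exact ⟨X, by simp [hP], hEX⟩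
    _ ≤ ∑ X ∈ Finset.univ.filter (fun X : Finset (Fin n) => P X.card), prE n p (E X) :=
        prE_union hp0 hp1 _ _
    _ ≤ ∑ X ∈ Finset.univ.filter (fun X : Finset (Fin n) => P X.card), g X.card := by
        refine Finset.sum_le_sum fun X hX => ?_
        rw [Finset.mem_filter] at hX
        exact hE X hX.2
    _ ≤ ∑ X : Finset (Fin n), g X.card := by
        refine Finset.sum_le_sum_of_subset_of_nonneg (Finset.filter_subset _ _) ?_
        intro X _ _
        exact hg _
    _ = ∑ t ∈ Finset.range (n+1), (n.choose t : ℝ) * g t := by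
        rw [← Finset.powerset_univ (α := Fin n), Finset.powerset_card_disjiUnion]
        refine (Finset.sum_disjiUnion _ _ _).trans ?_
        have hcard : (Finset.univ : Finset (Fin n)).card = n := by simp
        rw [hcard]
        refine Finset.sum_congr rfl fun t ht => ?_
        have hsc : ∀ X ∈ Finset.powersetCard t (Finset.univ : Finset (Fin n)),
            g X.card = g t := fun X hX => by rw [(Finset.mem_powersetCard.mp hX).2]
        rw [Finset.sum_congr rfl hsc, Finset.sum_const, Finset.card_powersetCard, hcard,
          nsmul_eq_mul]

end unionmach

section tails
open Real
variable {n : ℕ} {p : ℝ}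

/-- (i) degree failure probability -/
lemma fail_deg (hp0 : 0 ≤ p) (hp1 : p ≤ 1) {γ : ℝ} (hγ0 : 0 < γ) (hγ2 : γ ≤ 1/2) :
    prE n p (fun A => ∃ v : Fin n,
        ¬((1-γ)*n*p ≤ ((A ∩ vSlots n v).card : ℝ) ∧ ((A ∩ vSlots n v).card : ℝ) ≤ (1+γ)*n*p))
      ≤ n * (Real.exp (-(n*p*((1+γ)*Real.log (1+γ) - γ)))
          + Real.exp 1 * Real.exp (-(n*p*(γ + (1-γ)*Real.log (1-γ))))) := by
  classical
  have key : ∀ v : Fin n,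
      prE n p (fun A => ¬((1-γ)*n*p ≤ ((A ∩ vSlots n v).card : ℝ)
          ∧ ((A ∩ vSlots n v).card : ℝ) ≤ (1+γ)*n*p))
      ≤ Real.exp (-(n*p*((1+γ)*Real.log (1+γ) - γ)))
          + Real.exp 1 * Real.exp (-(n*p*(γ + (1-γ)*Real.log (1-γ)))) := by
    intro v
    have hn1 : 1 ≤ n := v.pos
    have hcard : ((vSlots n v).card : ℝ) = (n:ℝ) - 1 := by
      rw [card_vSlots v]
      have : (1:ℕ) ≤ n := hn1
      push_cast [Nat.cast_sub this]
      ring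
    have hbound := prE_or hp0 hp1
      (fun A => ((1+γ)*n*p : ℝ) ≤ ((A ∩ vSlots n v).card : ℝ))
      (fun A => ((A ∩ vSlots n v).card : ℝ) ≤ (1-γ)*n*p)
    have hmono : prE n p (fun A => ¬((1-γ)*n*p ≤ ((A ∩ vSlots n v).card : ℝ)
          ∧ ((A ∩ vSlots n v).card : ℝ) ≤ (1+γ)*n*p))
        ≤ prE n p (fun A => (((1+γ)*n*p : ℝ) ≤ ((A ∩ vSlots n v).card : ℝ))
          ∨ (((A ∩ vSlots n v).card : ℝ) ≤ (1-γ)*n*p)) := by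
      refine prE_mono hp0 hp1 fun A _ h => ?_
      rw [not_and_or] at h
      rcases h with h | h
      · exact Or.inr (le_of_not_ge h)
      · exact Or.inl (le_of_not_ge h)
    have hup : prE n p (fun A => ((1+γ)*n*p : ℝ) ≤ ((A ∩ vSlots n v).card : ℝ))
        ≤ Real.exp (-(n*p*((1+γ)*Real.log (1+γ) - γ))) := by
      refine le_trans (chernoff_upper hp0 hp1 (vSlots_subset v) (by linarith : (1:ℝ) ≤ 1+γ)
        ((1+γ)*n*p)) ?_
      rw [Real.exp_le_exp, hcard]
      have hn0 : (0:ℝ) ≤ (n:ℝ) := Nat.cast_nonneg n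
      nlinarith [mul_nonneg (mul_nonneg hγ0.le hp0) hn0]
    have hlow : prE n p (fun A => ((A ∩ vSlots n v).card : ℝ) ≤ (1-γ)*n*p)
        ≤ Real.exp 1 * Real.exp (-(n*p*(γ + (1-γ)*Real.log (1-γ)))) := by
      refine le_trans (chernoff_lower hp0 hp1 (vSlots_subset v)
        (by linarith : (0:ℝ) < 1-γ) (by linarith) ((1-γ)*n*p)) ?_
      rw [← Real.exp_add, Real.exp_le_exp, hcard]
      have hn0 : (0:ℝ) ≤ (n:ℝ) := Nat.cast_nonneg n
      nlinarith [mul_nonneg hγ0.le hp0]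
    calc prE n p _ ≤ _ := hmono
      _ ≤ _ := hbound
      _ ≤ _ := add_le_add hup hlow
  calc prE n p (fun A => ∃ v : Fin n,
        ¬((1-γ)*n*p ≤ ((A ∩ vSlots n v).card : ℝ) ∧ ((A ∩ vSlots n v).card : ℝ) ≤ (1+γ)*n*p))
      = prE n p (fun A => ∃ v ∈ Finset.univ,
        ¬((1-γ)*n*p ≤ ((A ∩ vSlots n v).card : ℝ) ∧ ((A ∩ vSlots n v).card : ℝ) ≤ (1+γ)*n*p)) := by
        simp only [Finset.mem_univ, true_and]
    _ ≤ ∑ v : Fin n, prE n p (fun A =>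
        ¬((1-γ)*n*p ≤ ((A ∩ vSlots n v).card : ℝ) ∧ ((A ∩ vSlots n v).card : ℝ) ≤ (1+γ)*n*p)) :=
        prE_union hp0 hp1 _ _
    _ ≤ ∑ _v : Fin n, (Real.exp (-(n*p*((1+γ)*Real.log (1+γ) - γ)))
          + Real.exp 1 * Real.exp (-(n*p*(γ + (1-γ)*Real.log (1-γ))))) :=
        Finset.sum_le_sum fun v _ => key v
    _ = n * (Real.exp (-(n*p*((1+γ)*Real.log (1+γ) - γ)))
          + Real.exp 1 * Real.exp (-(n*p*(γ + (1-γ)*Real.log (1-γ))))) := by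
        rw [Finset.sum_const, Finset.card_univ, Fintype.card_fin, nsmul_eq_mul]

end tails

section tails2
open Real
variable {n : ℕ} {p : ℝ}

lemma sum_exp_bound (n : ℕ) (F : ℕ → ℝ) (D : ℝ) (hD : 1 ≤ D) (h0 : F 0 ≤ 0)
    (hF : ∀ t, 1 ≤ t → t ≤ n → F t ≤ Real.exp (-(D*t))) :
    ∑ t ∈ Finset.range (n+1), F t ≤ 2 * Real.exp (-D) := by
  have hr0 : 0 ≤ Real.exp (-D) := (Real.exp_pos _).le
  have hr2 : Real.exp (-D) ≤ 1/2 := by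
    have h1 : Real.exp (-D) ≤ Real.exp (-1) := by rw [Real.exp_le_exp]; linarith
    have h3 : (2:ℝ) ≤ Real.exp 1 := by nlinarith [Real.exp_one_gt_d9]
    have h4 : Real.exp (-1) ≤ 1/2 := by
      rw [Real.exp_neg]
      rw [inv_le_comm₀ (Real.exp_pos 1) (by norm_num)]
      linarith
    linarith
  rw [Finset.sum_range_succ']
  have hgeom := geom_tail hr0 hr2 n
  have hstep : ∑ i ∈ Finset.range n, F (i+1) ≤ ∑ i ∈ Finset.range n, Real.exp (-D) ^ (i+1) := by
    refine Finset.sum_le_sum fun i hi => ?_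
    have hi' : i + 1 ≤ n := Finset.mem_range.mp hi
    refine le_trans (hF (i+1) (Nat.le_add_left 1 i) hi') (le_of_eq ?_)
    rw [← Real.exp_nat_mul]
    congr 1
    push_cast
    ring
  linarith

lemma ev2_numeric {t : ℕ} (hp0 : 0 < p) (hp1 : p ≤ 1) (ht1 : 1 ≤ t) (htn : t ≤ n)
    (htB : (t:ℝ) < ((n:ℝ) * p^4) ^ (-(1/3):ℝ)) (hL : 5 ≤ Real.log ((n:ℝ)*p)) :
    (n.choose t : ℝ) * Real.exp (-(8*t * Real.log (8/(t*p))) + 4*t)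
      ≤ Real.exp (-(Real.log ((n:ℝ)*p)/3 * t)) := by
  have ht0 : (0:ℝ) < t := by exact_mod_cast ht1
  have hn1 : 1 ≤ n := le_trans ht1 htn
  have hn0 : (0:ℝ) < n := by exact_mod_cast hn1
  have hnp4 : (0:ℝ) < (n:ℝ) * p^4 := by positivity
  have hchoose := choose_le_exp n t ht1 htn
  have hexp : Real.exp (t * (1 + Real.log ((n:ℝ) / t)))
      * Real.exp (-(8*t * Real.log (8/(t*p))) + 4*t)
      ≤ Real.exp (-(Real.log ((n:ℝ)*p)/3 * t)) := by
    rw [← Real.exp_add, Real.exp_le_exp]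
    have hlogB : Real.log (((n:ℝ) * p^4) ^ (-(1/3):ℝ)) = -(1/3) * (Real.log n + 4 * Real.log p) := by
      rw [Real.log_rpow hnp4, Real.log_mul (ne_of_gt hn0) (by positivity), Real.log_pow]
      push_cast
      ring
    have hb : Real.log t ≤ -(1/3) * (Real.log n + 4 * Real.log p) := by
      rw [← hlogB]
      exact Real.log_le_log ht0 htB.le
    have hnt : Real.log ((n:ℝ)/t) = Real.log n - Real.log t :=
      Real.log_div (ne_of_gt hn0) (ne_of_gt ht0)
    have htp : Real.log (8/((t:ℝ)*p)) = Real.log 8 - Real.log t - Real.log p := by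
      rw [Real.log_div (by norm_num) (by positivity), Real.log_mul (ne_of_gt ht0) (ne_of_gt hp0)]
      ring
    have hLval : Real.log ((n:ℝ)*p) = Real.log n + Real.log p :=
      Real.log_mul (ne_of_gt hn0) (ne_of_gt hp0)
    have hl8 : 0 ≤ Real.log 8 := Real.log_nonneg (by norm_num)
    rw [hnt, htp, hLval]
    rw [hLval] at hL
    -- key linear inequality, after multiplying by t ≥ 1
    have hkey : (1 + (Real.log n - Real.log t)) - 8 * (Real.log 8 - Real.log t - Real.log p)
        + 4 ≤ -((Real.log n + Real.log p)/3) := by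
      nlinarith [hb, hL, hl8]
    nlinarith [hkey, ht0, mul_le_mul_of_nonneg_left hkey (le_of_lt ht0)]
  calc (n.choose t : ℝ) * Real.exp (-(8*t * Real.log (8/(t*p))) + 4*t)
      ≤ Real.exp (t * (1 + Real.log ((n:ℝ) / t)))
        * Real.exp (-(8*t * Real.log (8/(t*p))) + 4*t) := by
        exact mul_le_mul_of_nonneg_right hchoose (Real.exp_pos _).le
    _ ≤ _ := hexp

/-- (ii) small-set failure probability -/
lemma fail_small (hp0 : 0 < p) (hp1 : p ≤ 1) (hL : 5 ≤ Real.log ((n:ℝ)*p)) :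
    prE n p (fun A => ∃ X : Finset (Fin n),
        ((X.card : ℝ) < ((n:ℝ) * p^4) ^ (-(1/3):ℝ) ∧
        (8*X.card : ℝ) < ((A ∩ xSlots n X).card : ℝ)))
      ≤ 2 * Real.exp (-(Real.log ((n:ℝ)*p)/3)) := by
  classical
  set B := ((n:ℝ) * p^4) ^ (-(1/3):ℝ) with hBdef
  set g : ℕ → ℝ := fun t =>
    if 1 ≤ t ∧ (t:ℝ) < B then Real.exp (-(8*t * Real.log (8/(t*p))) + 4*t) else 0 with hgdef
  have hg : ∀ t, 0 ≤ g t := by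
    intro t
    rw [hgdef]
    dsimp only
    split
    · exact (Real.exp_pos _).le
    · exact le_rfl
  -- the per-set bound
  have hE : ∀ X : Finset (Fin n), ((X.card:ℝ) < B) →
      prE n p (fun A => (8*X.card : ℝ) < ((A ∩ xSlots n X).card : ℝ)) ≤ g X.card := by
    intro X hXB
    rcases Nat.eq_zero_or_pos X.card with h0 | h1
    · have hXempty : X = ∅ := Finset.card_eq_zero.mp h0
      have : prE n p (fun A => (8*X.card : ℝ) < ((A ∩ xSlots n X).card : ℝ)) = 0 := by
        refine prE_false _ fun A _ h => ?_
        rw [hXempty, xSlots_empty, Finset.inter_empty] at h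
        simp [h0] at h
      rw [this]
      exact hg _
    · have hcond : 1 ≤ X.card ∧ ((X.card:ℝ) < B) := ⟨h1, hXB⟩
      rw [hgdef]
      simp only [hcond, and_self, if_true]
      set t := X.card with htdef
      have ht0 : (0:ℝ) < t := by exact_mod_cast h1
      -- B * p ≤ 1
      have hn1 : 1 ≤ n := by
        rcases Finset.card_pos.mp h1 with ⟨v, _⟩
        exact v.pos
      have hn0 : (0:ℝ) < n := by exact_mod_cast hn1
      have hnp4 : (0:ℝ) < (n:ℝ) * p^4 := by positivity
      have hB0 : 0 < B := Real.rpow_pos_of_pos hnp4 _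
      have hBp : B * p ≤ 1 := by
        have hlogB : Real.log B = -(1/3) * (Real.log n + 4 * Real.log p) := by
          rw [hBdef, Real.log_rpow hnp4, Real.log_mul (ne_of_gt hn0) (by positivity),
            Real.log_pow]
          push_cast
          ring
        have h1' : Real.log (B * p) = Real.log B + Real.log p :=
          Real.log_mul (ne_of_gt hB0) (ne_of_gt hp0)
        have hLval : Real.log ((n:ℝ)*p) = Real.log n + Real.log p :=
          Real.log_mul (ne_of_gt hn0) (ne_of_gt hp0)
        have h2 : Real.log (B * p) ≤ 0 := by
          rw [h1', hlogB]
          rw [hLval] at hL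
          linarith
        calc B * p = Real.exp (Real.log (B * p)) := (Real.exp_log (by positivity)).symm
          _ ≤ Real.exp 0 := by rw [Real.exp_le_exp]; exact h2
          _ = 1 := Real.exp_zero
      have htp1 : (t:ℝ) * p ≤ 1 := by
        have : (t:ℝ) * p ≤ B * p := by
          refine mul_le_mul_of_nonneg_right hXB.le hp0.le
        linarith
      have hc1 : (1:ℝ) ≤ 8/((t:ℝ)*p) := by
        rw [le_div_iff₀ (by positivity)]
        linarith
      -- chernoff
      refine le_trans (prE_mono hp0.le hp1 (fun A _ h => le_of_lt h)) ?_
      refine le_trans (chernoff_upper hp0.le hp1 (xSlots_subset X) hc1 (8*t)) ?_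
      rw [Real.exp_le_exp, card_xSlots]
      have hch : ((t.choose 2 : ℕ) : ℝ) = (t:ℝ)*((t:ℝ)-1)/2 := Nat.cast_choose_two (K := ℝ) t
      rw [hch]
      have hpc : p * (8/((t:ℝ)*p)) = 8/(t:ℝ) := by
        field_simp
      have hchnn : (0:ℝ) ≤ (t:ℝ)*((t:ℝ)-1)/2 := by
        have : (1:ℝ) ≤ (t:ℝ) := by exact_mod_cast h1
        nlinarith
      have key : p * (8/((t:ℝ)*p) - 1) * ((t:ℝ)*((t:ℝ)-1)/2) ≤ 4*t := by
        have h2 : p * (8/((t:ℝ)*p) - 1) ≤ p * (8/((t:ℝ)*p)) := by nlinarith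
        have h3 : p * (8/((t:ℝ)*p) - 1) * ((t:ℝ)*((t:ℝ)-1)/2)
            ≤ (8/(t:ℝ)) * ((t:ℝ)*((t:ℝ)-1)/2) := by
          rw [← hpc]
          exact mul_le_mul_of_nonneg_right h2 hchnn
        have h4 : (8/(t:ℝ)) * ((t:ℝ)*((t:ℝ)-1)/2) ≤ 4*t := by
          have he : (8/(t:ℝ)) * ((t:ℝ)*((t:ℝ)-1)/2) = 4*((t:ℝ)-1) := by
            field_simp
            ring
          rw [he]
          linarith
        linarith
      linarith
  -- union bound
  have hunion := prE_union_sets hp0.le hp1 (fun t => (t:ℝ) < B)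
    (fun X A => (8*X.card : ℝ) < ((A ∩ xSlots n X).card : ℝ)) g hg hE
  refine le_trans hunion ?_
  -- numeric sum
  refine sum_exp_bound n _ (Real.log ((n:ℝ)*p)/3) (by linarith) (by simp [hgdef]) ?_
  intro t ht1 htn
  by_cases hcond : 1 ≤ t ∧ (t:ℝ) < B
  · rw [hgdef]
    simp only [hcond, and_self, if_true]
    exact ev2_numeric hp0 hp1 ht1 htn hcond.2 hL
  · rw [hgdef]
    simp only [hcond, if_false]
    rw [mul_zero]
    exact (Real.exp_pos _).le

end tails2

section tails3
set_option maxHeartbeats 1600000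
open Real
variable {n : ℕ} {p : ℝ}

lemma s_ge_tR {t : ℕ} (hp0 : 0 < p) (hn1 : 1 ≤ n) (ht1 : 1 ≤ t)
    (hBt : ((n:ℝ) * p^4) ^ (-(1/3):ℝ) ≤ (t:ℝ)) :
    (t:ℝ) * Real.exp (Real.log ((n:ℝ)*p)/3) ≤ (t:ℝ)^2 * p * Real.sqrt ((n:ℝ)/t) := by
  have hT0 : (0:ℝ) < t := by exact_mod_cast ht1
  have hn0 : (0:ℝ) < n := by exact_mod_cast hn1
  have hnp4 : (0:ℝ) < (n:ℝ) * p^4 := by positivity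
  set B := ((n:ℝ) * p^4) ^ (-(1/3):ℝ) with hBdef
  have hB0 : 0 < B := Real.rpow_pos_of_pos hnp4 _
  have step1 : (t:ℝ)^2 * p * Real.sqrt ((n:ℝ)/t) = (t:ℝ) * (p * Real.sqrt ((n:ℝ)*t)) := by
    have h1 : Real.sqrt ((n:ℝ)/t) * t = Real.sqrt ((n:ℝ)*t) := by
      rw [show (n:ℝ)*t = ((n:ℝ)/t) * (t:ℝ)^2 by field_simp,
        Real.sqrt_mul (by positivity) ((t:ℝ)^2), Real.sqrt_sq hT0.le]
    calc (t:ℝ)^2 * p * Real.sqrt ((n:ℝ)/t) = (t:ℝ) * p * (Real.sqrt ((n:ℝ)/t) * t) := by ring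
      _ = (t:ℝ) * (p * Real.sqrt ((n:ℝ)*t)) := by rw [h1]; ring
  rw [step1]
  refine mul_le_mul_of_nonneg_left ?_ hT0.le
  have step2 : p * Real.sqrt ((n:ℝ)*B) = Real.exp (Real.log ((n:ℝ)*p)/3) := by
    have hnB : (0:ℝ) < (n:ℝ)*B := by positivity
    have h1 : Real.sqrt ((n:ℝ)*B) = Real.exp (Real.log ((n:ℝ)*B) * (1/2)) := by
      rw [Real.sqrt_eq_rpow, Real.rpow_def_of_pos hnB]
    have hlogB : Real.log B = -(1/3) * (Real.log n + 4 * Real.log p) := by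
      rw [hBdef, Real.log_rpow hnp4, Real.log_mul (ne_of_gt hn0) (by positivity), Real.log_pow]
      push_cast
      ring
    rw [h1, Real.log_mul (ne_of_gt hn0) (ne_of_gt hB0), hlogB,
      show p = Real.exp (Real.log p) from (Real.exp_log hp0).symm, ← Real.exp_add,
      Real.exp_log hp0, Real.log_mul (ne_of_gt hn0) (ne_of_gt hp0)]
    congr 1
    ring
  rw [← step2]
  refine mul_le_mul_of_nonneg_left ?_ hp0.le
  refine Real.sqrt_le_sqrt ?_
  exact mul_le_mul_of_nonneg_left hBt hn0.le

lemma ev3_numeric {t : ℕ} (hp0 : 0 < p) (hp1 : p ≤ 1) (ht1 : 1 ≤ t) (htn : t ≤ n)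
    (hBt : ((n:ℝ) * p^4) ^ (-(1/3):ℝ) ≤ (t:ℝ))
    (hR : 60 ≤ Real.exp (Real.log ((n:ℝ)*p)/3)) :
    (n.choose t : ℝ) * Real.exp (-((t:ℝ)^2*p*Real.sqrt ((n:ℝ)/t)/10
        * Real.log (2*Real.sqrt ((n:ℝ)/t))) + t/2)
      ≤ Real.exp (-(Real.log 2 * Real.exp (Real.log ((n:ℝ)*p)/3) / 20 * t)) := by
  have hT0 : (0:ℝ) < t := by exact_mod_cast ht1
  have hn1 : 1 ≤ n := le_trans ht1 htn
  have hn0 : (0:ℝ) < n := by exact_mod_cast hn1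
  have hTn : (t:ℝ) ≤ n := by exact_mod_cast htn
  have hnt1 : (1:ℝ) ≤ (n:ℝ)/t := by
    rw [le_div_iff₀ hT0]; linarith
  set R := Real.exp (Real.log ((n:ℝ)*p)/3) with hRdef
  set z := Real.log ((n:ℝ)/t) with hzdef
  have hz0 : 0 ≤ z := Real.log_nonneg hnt1
  set s := (t:ℝ)^2*p*Real.sqrt ((n:ℝ)/t) with hsdef
  have hsq1 : 1 ≤ Real.sqrt ((n:ℝ)/t) := by
    rw [show (1:ℝ) = Real.sqrt 1 from Real.sqrt_one.symm]
    exact Real.sqrt_le_sqrt hnt1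
  have hlogc : Real.log (2*Real.sqrt ((n:ℝ)/t)) = Real.log 2 + z/2 := by
    rw [Real.log_mul (by norm_num) (by linarith), Real.log_sqrt (by positivity)]
  have hlog2 : (0.6931471803:ℝ) < Real.log 2 := Real.log_two_gt_d9
  have hsR : (t:ℝ) * R ≤ s := s_ge_tR hp0 hn1 ht1 hBt
  have hs0 : 0 ≤ s := by positivity
  have hchoose := choose_le_exp n t ht1 htn
  calc (n.choose t : ℝ) * Real.exp (-(s/10 * Real.log (2*Real.sqrt ((n:ℝ)/t))) + t/2)
      ≤ Real.exp ((t:ℝ) * (1 + z))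
        * Real.exp (-(s/10 * Real.log (2*Real.sqrt ((n:ℝ)/t))) + t/2) :=
        mul_le_mul_of_nonneg_right hchoose (Real.exp_pos _).le
    _ ≤ Real.exp (-(Real.log 2 * R / 20 * t)) := by
        rw [← Real.exp_add, Real.exp_le_exp, hlogc]
        have hcoef : 0 ≤ (Real.log 2 + z/2)/10 := by positivity
        have h1 : -(s/10 * (Real.log 2 + z/2)) ≤ -(((t:ℝ)*R)/10 * (Real.log 2 + z/2)) := by
          have := mul_le_mul_of_nonneg_right hsR (show (0:ℝ) ≤ (Real.log 2 + z/2)/10 by positivity)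
          nlinarith
        have h2 : (t:ℝ) * (1+z) + (((t:ℝ)*R)/10 * (Real.log 2 + z/2) * (-1)) + t/2
            ≤ -(Real.log 2 * R/20 * t) := by
          have hkey : (1+z) + 1/2 + Real.log 2 * R/20 ≤ R/10 * (Real.log 2 + z/2) := by
            nlinarith [mul_le_mul_of_nonneg_right hR hz0]
          nlinarith [mul_le_mul_of_nonneg_left hkey hT0.le]
        nlinarith [h1, h2]

/-- (iii) large-set failure probability -/
lemma fail_large (hp0 : 0 < p) (hp1 : p ≤ 1) (hn1 : 1 ≤ n)
    (hR : 60 ≤ Real.exp (Real.log ((n:ℝ)*p)/3)) :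
    prE n p (fun A => ∃ X : Finset (Fin n),
        (((n:ℝ) * p^4) ^ (-(1/3):ℝ) ≤ (X.card : ℝ) ∧
        (X.card:ℝ)^2 * p * Real.sqrt ((n:ℝ)/X.card) < ((A ∩ xSlots n X).card : ℝ)))
      ≤ 2 * Real.exp (-(Real.log 2 * Real.exp (Real.log ((n:ℝ)*p)/3) / 20)) := by
  classical
  have hn0 : (0:ℝ) < n := by exact_mod_cast hn1
  have hnp4 : (0:ℝ) < (n:ℝ) * p^4 := by positivity
  have hB0 : 0 < ((n:ℝ) * p^4) ^ (-(1/3):ℝ) := Real.rpow_pos_of_pos hnp4 _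
  set D := Real.log 2 * Real.exp (Real.log ((n:ℝ)*p)/3) / 20 with hDdef
  have hlog2 : (0.6931471803:ℝ) < Real.log 2 := Real.log_two_gt_d9
  have hD1 : 1 ≤ D := by
    rw [hDdef]
    have h1 : (60:ℝ) * 0.6931471803 ≤ Real.log 2 * Real.exp (Real.log ((n:ℝ)*p)/3) := by
      calc (60:ℝ) * 0.6931471803 ≤ Real.log 2 * 60 := by nlinarith
        _ ≤ Real.log 2 * Real.exp (Real.log ((n:ℝ)*p)/3) := by nlinarith
    linarith
  set g : ℕ → ℝ := fun t =>
    if 1 ≤ t ∧ ((n:ℝ) * p^4) ^ (-(1/3):ℝ) ≤ (t:ℝ) then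
      Real.exp (-((t:ℝ)^2*p*Real.sqrt ((n:ℝ)/t)/10
      * Real.log (2*Real.sqrt ((n:ℝ)/t))) + t/2) else 0 with hgdef
  have hg : ∀ t, 0 ≤ g t := by
    intro t
    rw [hgdef]
    dsimp only
    split
    · exact (Real.exp_pos _).le
    · exact le_rfl
  have hE : ∀ X : Finset (Fin n), (((n:ℝ) * p^4) ^ (-(1/3):ℝ) ≤ (X.card:ℝ)) →
      prE n p (fun A => (X.card:ℝ)^2 * p * Real.sqrt ((n:ℝ)/X.card)
        < ((A ∩ xSlots n X).card : ℝ)) ≤ g X.card := by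
    intro X hXB
    have h1 : 1 ≤ X.card := by
      by_contra h
      push_neg at h
      have hc : X.card = 0 := by omega
      rw [hc] at hXB
      push_cast at hXB
      linarith
    rw [hgdef]
    dsimp only
    rw [if_pos ⟨h1, hXB⟩]
    set t := X.card with htdef
    have hT0 : (0:ℝ) < t := by exact_mod_cast h1
    have htn : t ≤ n := by
      have := Finset.card_le_card (Finset.subset_univ X)
      simpa using this
    have hTn : (t:ℝ) ≤ n := by exact_mod_cast htn
    have hnt1 : (1:ℝ) ≤ (n:ℝ)/t := by rw [le_div_iff₀ hT0]; linarith
    have hsq1 : 1 ≤ Real.sqrt ((n:ℝ)/t) := by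
      rw [show (1:ℝ) = Real.sqrt 1 from Real.sqrt_one.symm]
      exact Real.sqrt_le_sqrt hnt1
    set q := Real.sqrt ((n:ℝ)/t) with hqdef
    set c := 2*q with hcdef
    set s := (t:ℝ)^2*p*q with hsdef
    have hc2 : (2:ℝ) ≤ c := by rw [hcdef]; linarith
    have hs0 : 0 ≤ s := by
      rw [hsdef]
      positivity
    refine le_trans (prE_mono hp0.le hp1 (fun A _ h => le_of_lt h)) ?_
    refine le_trans (chernoff_upper hp0.le hp1 (xSlots_subset X) (by linarith : (1:ℝ) ≤ c) s) ?_
    rw [Real.exp_le_exp, card_xSlots]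
    have hch : ((t.choose 2 : ℕ) : ℝ) = (t:ℝ)*((t:ℝ)-1)/2 := Nat.cast_choose_two (K := ℝ) t
    rw [hch]
    -- key inner estimate
    have hcs : c * (p*(t:ℝ)^2/2) = s := by rw [hcdef, hsdef]; ring
    have hc0 : (0:ℝ) < c := by linarith
    have hsc : s * (1/c) = p*(t:ℝ)^2/2 := by
      rw [← hcs]
      field_simp
    have hphi := phi_bound hc2
    have hmul := mul_le_mul_of_nonneg_left hphi hs0
    -- p(c-1)·T(T-1)/2 ≤ s - s/c + pT/2
    have hupper : p * (c-1) * ((t:ℝ)*((t:ℝ)-1)/2) ≤ s - s * (1/c) + p*(t:ℝ)/2 := by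
      have e1 : p * (c-1) * ((t:ℝ)*((t:ℝ)-1)/2)
          = c * (p*(t:ℝ)*((t:ℝ)-1)/2) - p*(t:ℝ)*((t:ℝ)-1)/2 := by ring
      have e2 : c * (p*(t:ℝ)*((t:ℝ)-1)/2) ≤ c * (p*(t:ℝ)^2/2) := by
        refine mul_le_mul_of_nonneg_left ?_ hc0.le
        nlinarith
      have e3 : p*(t:ℝ)*((t:ℝ)-1)/2 = p*(t:ℝ)^2/2 - p*(t:ℝ)/2 := by ring
      rw [e1, e3]
      rw [hcs] at e2
      rw [hsc]
      linarith
    have hpt : p*(t:ℝ)/2 ≤ (t:ℝ)/2 := by nlinarith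
    have e4 : s * (Real.log c/10) = s/10 * Real.log c := by ring
    have e5 : s * (Real.log c - 1 + 1/c) = s * Real.log c - s + s*(1/c) := by ring
    rw [e4, e5] at hmul
    linarith [hupper, hpt, hmul]
  have hunion := prE_union_sets hp0.le hp1 (fun t => ((n:ℝ) * p^4) ^ (-(1/3):ℝ) ≤ (t:ℝ))
    (fun X A => (X.card:ℝ)^2 * p * Real.sqrt ((n:ℝ)/X.card) < ((A ∩ xSlots n X).card : ℝ))
    g hg hE
  refine le_trans hunion ?_
  refine sum_exp_bound n _ D hD1 (by simp [hgdef]) ?_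
  intro t ht1 htn
  rw [hgdef]
  dsimp only
  by_cases hBt : ((n:ℝ) * p^4) ^ (-(1/3):ℝ) ≤ (t:ℝ)
  · rw [if_pos ⟨ht1, hBt⟩]
    exact ev3_numeric hp0 hp1 ht1 htn hBt hR
  · rw [if_neg (fun hcon => hBt hcon.2), mul_zero]
    exact (Real.exp_pos _).le

end tails3

section tails4
open Real
variable {n : ℕ} {p : ℝ}

/-- (iv) cross-edges failure probability -/
lemma fail_cross (hp0 : 0 ≤ p) (hp1 : p ≤ 1) {w : ℝ} (hw0 : 0 ≤ w) :
    prE n p (fun A => ∃ XY : Finset (Fin n) × Finset (Fin n),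
        ((Disjoint XY.1 XY.2 ∧ w * n ≤ (XY.1.card:ℝ) * XY.2.card * p) ∧
        ((A ∩ xySlots n XY.1 XY.2).card : ℝ) < (XY.1.card:ℝ) * XY.2.card * p / 2))
      ≤ (4:ℝ)^n * Real.exp (-(w * n / 8)) := by
  classical
  set cond : Finset (Fin n) × Finset (Fin n) → Prop :=
    fun XY => Disjoint XY.1 XY.2 ∧ w * n ≤ (XY.1.card:ℝ) * XY.2.card * p with hconddef
  have key : ∀ XY : Finset (Fin n) × Finset (Fin n), cond XY →
      prE n p (fun A => ((A ∩ xySlots n XY.1 XY.2).card : ℝ)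
        < (XY.1.card:ℝ) * XY.2.card * p / 2) ≤ Real.exp (-(w * n / 8)) := by
    rintro ⟨X, Y⟩ ⟨hd, hμ⟩
    set μ := (X.card:ℝ) * Y.card * p with hμdef
    have hμ0 : 0 ≤ μ := by positivity
    have hwn : w * n ≤ μ := hμ
    refine le_trans (prE_mono hp0 hp1 (fun A _ h => le_of_lt h)) ?_
    refine le_trans (chernoff_lower hp0 hp1 (xySlots_subset X Y)
      (by norm_num : (0:ℝ) < 1/2) (by norm_num) (μ/2)) ?_
    rw [Real.exp_le_exp]
    have hcard : ((xySlots n X Y).card : ℝ) = (X.card:ℝ) * Y.card := by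
      rw [card_xySlots X Y hd]
      push_cast
      ring
    rw [hcard]
    have hlog : Real.log (1/2) = -Real.log 2 := by
      rw [one_div, Real.log_inv]
    rw [hlog]
    have hlog2a : (0.6931471803:ℝ) < Real.log 2 := Real.log_two_gt_d9
    have hlog2b : Real.log 2 < 0.6931471808 := Real.log_two_lt_d9
    have hps : p * (1/2 - 1) * ((X.card:ℝ) * Y.card) = -(μ/2) := by
      rw [hμdef]; ring
    rw [hps]
    have : -(μ/2 * -Real.log 2) + -(μ/2) ≤ -(μ/8) := by nlinarith
    refine le_trans this ?_
    linarith
  calc prE n p (fun A => ∃ XY : Finset (Fin n) × Finset (Fin n),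
        ((Disjoint XY.1 XY.2 ∧ w * n ≤ (XY.1.card:ℝ) * XY.2.card * p) ∧
        ((A ∩ xySlots n XY.1 XY.2).card : ℝ) < (XY.1.card:ℝ) * XY.2.card * p / 2))
      ≤ prE n p (fun A => ∃ XY ∈ Finset.univ.filter cond,
          ((A ∩ xySlots n XY.1 XY.2).card : ℝ) < (XY.1.card:ℝ) * XY.2.card * p / 2) := by
        refine prE_mono hp0 hp1 fun A _ h => ?_
        obtain ⟨XY, hc, hbad⟩ := h
        exact ⟨XY, by simp [hconddef, hc.1, hc.2], hbad⟩
    _ ≤ ∑ XY ∈ Finset.univ.filter cond, prE n p (fun A =>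
          ((A ∩ xySlots n XY.1 XY.2).card : ℝ) < (XY.1.card:ℝ) * XY.2.card * p / 2) :=
        prE_union hp0 hp1 _ _
    _ ≤ (Finset.univ.filter cond).card • Real.exp (-(w * n / 8)) := by
        refine Finset.sum_le_card_nsmul _ _ _ fun XY hXY => ?_
        rw [Finset.mem_filter] at hXY
        exact key XY hXY.2
    _ ≤ (4:ℝ)^n * Real.exp (-(w * n / 8)) := by
        rw [nsmul_eq_mul]
        refine mul_le_mul_of_nonneg_right ?_ (Real.exp_pos _).le
        have h1 : (Finset.univ.filter cond).card ≤ Fintype.card (Finset (Fin n) × Finset (Fin n)) := by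
          refine le_trans (Finset.card_le_card (Finset.filter_subset _ _)) ?_
          rw [Finset.card_univ]
        have h2 : Fintype.card (Finset (Fin n) × Finset (Fin n)) = 2^n * 2^n := by
          rw [Fintype.card_prod, Fintype.card_finset, Fintype.card_fin]
        have h3 : ((Finset.univ.filter cond).card : ℝ) ≤ ((2^n * 2^n : ℕ) : ℝ) := by
          exact_mod_cast le_trans h1 (le_of_eq h2)
        refine le_trans h3 (le_of_eq ?_)
        push_cast
        rw [← mul_pow]
        norm_num

end tails4

set_option maxHeartbeats 3000000 in
/-- **Lemma 2.8 (properties of `G(n,p)`).** For `p ≫ log n / n`, any fixed `γ > 0`, and any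
`ω(n) → ∞`, a.a.s. `G(n,p)` satisfies: (i) all degrees are `(1 ± γ) n p`; (ii) sets `X` with
`|X| < (n p⁴)^{-1/3}` span at most `8 |X|` edges; (iii) sets `X` of size `t ≥ (n p⁴)^{-1/3}`
span at most `t² p (n/t)^{1/2}` edges; (iv) disjoint sets with `|X||Y| p ≥ ω(n) n` satisfy
`e(X,Y) ≥ |X||Y| p / 2`. -/
theorem gnp_properties (p : ℕ → ℝ) (hp : ∀ n, p n ∈ Set.Icc (0 : ℝ) 1)
    (hgrowth : Tendsto (fun n : ℕ => (n : ℝ) * p n / Real.log n) atTop atTop)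
    (γ : ℝ) (hγ : 0 < γ) (ω : ℕ → ℝ) (hω : Tendsto ω atTop atTop) :
    Tendsto (fun n : ℕ => gnpProb n (p n) (fun G =>
        (∀ v : Fin n, (1 - γ) * n * p n ≤ ((G.neighborSet v).ncard : ℝ) ∧
          ((G.neighborSet v).ncard : ℝ) ≤ (1 + γ) * n * p n) ∧
        (∀ X : Set (Fin n), (X.ncard : ℝ) < ((n : ℝ) * p n ^ 4) ^ (-(1 / 3) : ℝ) →
          (spannedEdges G X : ℝ) ≤ 8 * X.ncard) ∧
        (∀ X : Set (Fin n), ((n : ℝ) * p n ^ 4) ^ (-(1 / 3) : ℝ) ≤ (X.ncard : ℝ) →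
          (spannedEdges G X : ℝ) ≤ (X.ncard : ℝ) ^ 2 * p n * Real.sqrt ((n : ℝ) / X.ncard)) ∧
        (∀ X Y : Set (Fin n), Disjoint X Y →
          ω n * n ≤ (X.ncard : ℝ) * Y.ncard * p n →
          (X.ncard : ℝ) * Y.ncard * p n / 2 ≤ (crossEdges G X Y : ℝ))))
      atTop (nhds 1) := by
  classical
  set γ' := min γ (1/2) with hγ'def
  have hγ'0 : 0 < γ' := lt_min hγ (by norm_num)
  have hγ'half : γ' ≤ 1/2 := min_le_right _ _
  have hγ'γ : γ' ≤ γ := min_le_left _ _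
  set hPc : ℝ := (1+γ') * Real.log (1+γ') - γ' with hPdef
  set hMc : ℝ := γ' + (1-γ') * Real.log (1-γ') with hMdef
  have hPpos : 0 < hPc := hplus_pos hγ'0
  have hMpos : 0 < hMc := hminus_pos hγ'0 (lt_of_le_of_lt hγ'half (by norm_num))
  set hh : ℝ := min hPc hMc with hhdef
  have hhpos : 0 < hh := lt_min hPpos hMpos
  have hlogn : Tendsto (fun n : ℕ => Real.log n) atTop atTop :=
    Real.tendsto_log_atTop.comp tendsto_natCast_atTop_atTop
  have hL : Tendsto (fun n : ℕ => (n:ℝ) * p n) atTop atTop := by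
    have hmul := hgrowth.atTop_mul_atTop₀ hlogn
    refine hmul.congr' ?_
    filter_upwards [eventually_ge_atTop 2] with n hn
    have hlogpos : 0 < Real.log n := by
      refine Real.log_pos ?_
      exact_mod_cast lt_of_lt_of_le one_lt_two hn
    field_simp
  have hD2 : Tendsto (fun n : ℕ => Real.log ((n:ℝ) * p n)) atTop atTop :=
    Real.tendsto_log_atTop.comp hL
  have hRt : Tendsto (fun n : ℕ => Real.exp (Real.log ((n:ℝ) * p n)/3)) atTop atTop :=
    Real.tendsto_exp_atTop.comp (hD2.atTop_div_const (by norm_num))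
  rw [Metric.tendsto_nhds]
  intro ε hε
  have hε4 : 0 < ε/4 := by linarith
  -- eventual smallness facts
  have hF1to : Tendsto (fun n : ℕ => (1 + Real.exp 1)/(n:ℝ)) atTop (nhds 0) :=
    tendsto_const_div_atTop_nhds_zero_nat _
  have hF2to : Tendsto (fun n : ℕ => 2 * Real.exp (-(Real.log ((n:ℝ) * p n)/3)))
      atTop (nhds 0) := by
    have h1 : Tendsto (fun n : ℕ => -(Real.log ((n:ℝ) * p n)/3)) atTop atBot :=
      tendsto_neg_atBot_iff.mpr (hD2.atTop_div_const (by norm_num))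
    have h2 := Real.tendsto_exp_atBot.comp h1
    simpa using h2.const_mul 2
  have hF3to : Tendsto (fun n : ℕ =>
      2 * Real.exp (-(Real.log 2 * Real.exp (Real.log ((n:ℝ) * p n)/3) / 20)))
      atTop (nhds 0) := by
    have hlog2 : (0:ℝ) < Real.log 2 := Real.log_pos (by norm_num)
    have h0 : Tendsto (fun n : ℕ =>
        Real.log 2 * Real.exp (Real.log ((n:ℝ) * p n)/3) / 20) atTop atTop :=
      (hRt.const_mul_atTop hlog2).atTop_div_const (by norm_num)
    have h1 : Tendsto (fun n : ℕ =>
        -(Real.log 2 * Real.exp (Real.log ((n:ℝ) * p n)/3) / 20)) atTop atBot :=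
      tendsto_neg_atBot_iff.mpr h0
    have h2 := Real.tendsto_exp_atBot.comp h1
    simpa using h2.const_mul 2
  have hrlt : 4 * Real.exp (-2) < 1 := by
    have he1 : (2.7182818283:ℝ) < Real.exp 1 := Real.exp_one_gt_d9
    have h4 : (4:ℝ) < Real.exp 2 := by
      have : Real.exp 2 = Real.exp 1 * Real.exp 1 := by
        rw [← Real.exp_add]; norm_num
      nlinarith
    have hpos : 0 < Real.exp 2 := Real.exp_pos 2
    rw [Real.exp_neg]
    rw [mul_inv_lt_iff₀ hpos]
    linarith
  have hF4to : Tendsto (fun n : ℕ => (4 * Real.exp (-2))^n) atTop (nhds 0) :=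
    tendsto_pow_atTop_nhds_zero_of_lt_one (by positivity) hrlt
  filter_upwards [eventually_ge_atTop 3,
    hgrowth.eventually_ge_atTop (2/hh + 1),
    hD2.eventually_ge_atTop 5,
    hRt.eventually_ge_atTop 60,
    hω.eventually_ge_atTop 16,
    hL.eventually_ge_atTop 1,
    hF1to.eventually_lt_const hε4,
    hF2to.eventually_lt_const hε4,
    hF3to.eventually_lt_const hε4,
    hF4to.eventually_lt_const hε4] with n hn3 hgr hlog5 hR60 hω16 hL1 hsm1 hsm2 hsm3 hsm4
  obtain ⟨hp0, hp1⟩ := hp n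
  have hn1 : 1 ≤ n := le_trans (by norm_num) hn3
  have hn0 : (0:ℝ) < n := by exact_mod_cast hn1
  have hppos : 0 < p n := by
    by_contra hcon
    push_neg at hcon
    have : (n:ℝ) * p n ≤ 0 := mul_nonpos_of_nonneg_of_nonpos hn0.le hcon
    linarith
  have hnp0 : 0 ≤ (n:ℝ) * p n := by positivity
  have hlogn1 : 0 < Real.log n := Real.log_pos (by exact_mod_cast lt_of_lt_of_le (by norm_num : (1:ℕ) < 3) hn3)
  -- np * hh ≥ 2 log n
  have hnph : 2 * Real.log n ≤ ((n:ℝ) * p n) * hh := by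
    have h1 : (2/hh + 1) * Real.log n ≤ (n:ℝ) * p n := by
      have := (le_div_iff₀ hlogn1).mp hgr
      linarith
    have h2 : (2/hh) * Real.log n * hh = 2 * Real.log n := by
      field_simp
    nlinarith [mul_le_mul_of_nonneg_right h1 hhpos.le, hlogn1, hhpos]
  -- abbreviations
  set B := ((n:ℝ) * p n ^ 4) ^ (-(1/3):ℝ) with hBdef
  set good : SimpleGraph (Fin n) → Prop := fun G =>
      (∀ v : Fin n, (1 - γ) * n * p n ≤ ((G.neighborSet v).ncard : ℝ) ∧
        ((G.neighborSet v).ncard : ℝ) ≤ (1 + γ) * n * p n) ∧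
      (∀ X : Set (Fin n), (X.ncard : ℝ) < B → (spannedEdges G X : ℝ) ≤ 8 * X.ncard) ∧
      (∀ X : Set (Fin n), B ≤ (X.ncard : ℝ) →
        (spannedEdges G X : ℝ) ≤ (X.ncard : ℝ) ^ 2 * p n * Real.sqrt ((n : ℝ) / X.ncard)) ∧
      (∀ X Y : Set (Fin n), Disjoint X Y → ω n * n ≤ (X.ncard : ℝ) * Y.ncard * p n →
        (X.ncard : ℝ) * Y.ncard * p n / 2 ≤ (crossEdges G X Y : ℝ)) with hgooddef
  -- the four bad events on edge-subsets
  set E1 : Finset (Sym2 (Fin n)) → Prop := fun A => ∃ v : Fin n,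
    ¬((1-γ')*n*(p n) ≤ ((A ∩ vSlots n v).card : ℝ)
      ∧ ((A ∩ vSlots n v).card : ℝ) ≤ (1+γ')*n*(p n)) with hE1def
  set E2 : Finset (Sym2 (Fin n)) → Prop := fun A => ∃ X : Finset (Fin n),
    ((X.card : ℝ) < B ∧ (8*X.card : ℝ) < ((A ∩ xSlots n X).card : ℝ)) with hE2def
  set E3 : Finset (Sym2 (Fin n)) → Prop := fun A => ∃ X : Finset (Fin n),
    (B ≤ (X.card : ℝ) ∧
      (X.card:ℝ)^2 * (p n) * Real.sqrt ((n:ℝ)/X.card) < ((A ∩ xSlots n X).card : ℝ)) with hE3def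
  set E4 : Finset (Sym2 (Fin n)) → Prop := fun A =>
    ∃ XY : Finset (Fin n) × Finset (Fin n),
      ((Disjoint XY.1 XY.2 ∧ (ω n) * n ≤ (XY.1.card:ℝ) * XY.2.card * (p n)) ∧
      ((A ∩ xySlots n XY.1 XY.2).card : ℝ) < (XY.1.card:ℝ) * XY.2.card * (p n) / 2) with hE4def
  -- decomposition: ¬good → E1 ∨ E2 ∨ E3 ∨ E4
  have hdecomp : ∀ A, A ⊆ slots n →
      ¬ good (SimpleGraph.fromEdgeSet (↑A : Set (Sym2 (Fin n)))) →
      (E1 A ∨ (E2 A ∨ (E3 A ∨ E4 A))) := by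
    intro A hA hbad
    set G := SimpleGraph.fromEdgeSet (↑A : Set (Sym2 (Fin n))) with hGdef
    by_cases h1 : ∀ v : Fin n, (1 - γ) * n * p n ≤ ((G.neighborSet v).ncard : ℝ) ∧
        ((G.neighborSet v).ncard : ℝ) ≤ (1 + γ) * n * p n
    · by_cases h2 : ∀ X : Set (Fin n), (X.ncard : ℝ) < B → (spannedEdges G X : ℝ) ≤ 8 * X.ncard
      · by_cases h3 : ∀ X : Set (Fin n), B ≤ (X.ncard : ℝ) →
            (spannedEdges G X : ℝ) ≤ (X.ncard : ℝ) ^ 2 * p n * Real.sqrt ((n : ℝ) / X.ncard)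
        · by_cases h4 : ∀ X Y : Set (Fin n), Disjoint X Y →
              ω n * n ≤ (X.ncard : ℝ) * Y.ncard * p n →
              (X.ncard : ℝ) * Y.ncard * p n / 2 ≤ (crossEdges G X Y : ℝ)
          · exact absurd ⟨h1, h2, h3, h4⟩ hbad
          · -- E4
            refine Or.inr (Or.inr (Or.inr ?_))
            push_neg at h4
            obtain ⟨X, Y, hd, hcond, hlt⟩ := h4
            refine ⟨⟨X.toFinset, Y.toFinset⟩, ⟨⟨?_, ?_⟩, ?_⟩⟩
            · exact Set.disjoint_toFinset.mpr hd
            · rw [← Set.ncard_eq_toFinset_card' X, ← Set.ncard_eq_toFinset_card' Y]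
              exact hcond
            · rw [← cross_count hA, Set.coe_toFinset, Set.coe_toFinset,
                ← Set.ncard_eq_toFinset_card' X, ← Set.ncard_eq_toFinset_card' Y]
              exact hlt
        · -- E3
          refine Or.inr (Or.inr (Or.inl ?_))
          push_neg at h3
          obtain ⟨X, hcond, hlt⟩ := h3
          refine ⟨X.toFinset, ⟨?_, ?_⟩⟩
          · rw [← Set.ncard_eq_toFinset_card' X]
            exact hcond
          · rw [← spanned_count hA, Set.coe_toFinset, ← Set.ncard_eq_toFinset_card' X]
            exact hlt
      · -- E2
        refine Or.inr (Or.inl ?_)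
        push_neg at h2
        obtain ⟨X, hcond, hlt⟩ := h2
        refine ⟨X.toFinset, ⟨?_, ?_⟩⟩
        · rw [← Set.ncard_eq_toFinset_card' X]
          exact hcond
        · rw [← spanned_count hA, Set.coe_toFinset, ← Set.ncard_eq_toFinset_card' X]
          exact hlt
    · -- E1
      refine Or.inl ?_
      push_neg at h1
      obtain ⟨v, hv⟩ := h1
      refine ⟨v, fun hcon => ?_⟩
      obtain ⟨hlo, hhi⟩ := hcon
      have hdegN : (G.neighborSet v).ncard = (A ∩ vSlots n v).card := degree_count hA v
      have hdeg : ((G.neighborSet v).ncard : ℝ) = ((A ∩ vSlots n v).card : ℝ) := by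
        rw [hdegN]
      have hlo2 : (1-γ) * n * p n ≤ ((G.neighborSet v).ncard : ℝ) := by
        rw [hdeg]
        refine le_trans ?_ hlo
        have : (1-γ) * ((n:ℝ) * p n) ≤ (1-γ') * ((n:ℝ) * p n) :=
          mul_le_mul_of_nonneg_right (by linarith) hnp0
        nlinarith
      have hhi2 : ((G.neighborSet v).ncard : ℝ) ≤ (1+γ) * n * p n := by
        rw [hdeg]
        refine le_trans hhi ?_
        have : (1+γ') * ((n:ℝ) * p n) ≤ (1+γ) * ((n:ℝ) * p n) :=
          mul_le_mul_of_nonneg_right (by linarith) hnp0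
        nlinarith
      exact absurd hhi2 (not_le.mpr (hv hlo2))
  -- probability of failure
  have hsplit : 1 - prE n (p n) (fun A => good (SimpleGraph.fromEdgeSet (↑A : Set (Sym2 (Fin n)))))
      ≤ prE n (p n) E1 + (prE n (p n) E2 + (prE n (p n) E3 + prE n (p n) E4)) := by
    rw [one_sub_prE]
    calc prE n (p n) (fun A => ¬ good (SimpleGraph.fromEdgeSet (↑A : Set (Sym2 (Fin n)))))
        ≤ prE n (p n) (fun A => E1 A ∨ (E2 A ∨ (E3 A ∨ E4 A))) :=
          prE_mono hp0 hp1 hdecomp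
      _ ≤ prE n (p n) E1 + prE n (p n) (fun A => E2 A ∨ (E3 A ∨ E4 A)) := prE_or hp0 hp1 _ _
      _ ≤ prE n (p n) E1 + (prE n (p n) E2 + prE n (p n) (fun A => E3 A ∨ E4 A)) := by
          have := prE_or (n := n) hp0 hp1 E2 (fun A => E3 A ∨ E4 A)
          linarith
      _ ≤ _ := by
          have := prE_or (n := n) hp0 hp1 E3 E4
          linarith
  -- bound each term by ε/4
  have hbound1 : prE n (p n) E1 < ε/4 := by
    refine lt_of_le_of_lt (fail_deg hp0 hp1 hγ'0 hγ'half) ?_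
    have hx1 : Real.exp (-((n:ℝ)*(p n)*hPc)) ≤ 1/(n:ℝ)^2 := by
      have h1 : 2 * Real.log n ≤ (n:ℝ)*(p n)*hPc := by
        have : ((n:ℝ) * p n) * hh ≤ (n:ℝ)*(p n)*hPc :=
          mul_le_mul_of_nonneg_left (min_le_left _ _) hnp0
        linarith
      calc Real.exp (-((n:ℝ)*(p n)*hPc)) ≤ Real.exp (-(2*Real.log n)) := by
            rw [Real.exp_le_exp]; linarith
        _ = 1/(n:ℝ)^2 := by
            rw [Real.exp_neg]
            rw [show (2:ℝ)*Real.log n = Real.log n + Real.log n by ring, Real.exp_add,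
              Real.exp_log hn0]
            rw [one_div]
            congr 1
            ring
    have hx2 : Real.exp (-((n:ℝ)*(p n)*hMc)) ≤ 1/(n:ℝ)^2 := by
      have h1 : 2 * Real.log n ≤ (n:ℝ)*(p n)*hMc := by
        have : ((n:ℝ) * p n) * hh ≤ (n:ℝ)*(p n)*hMc :=
          mul_le_mul_of_nonneg_left (min_le_right _ _) hnp0
        linarith
      calc Real.exp (-((n:ℝ)*(p n)*hMc)) ≤ Real.exp (-(2*Real.log n)) := by
            rw [Real.exp_le_exp]; linarith
        _ = 1/(n:ℝ)^2 := by
            rw [Real.exp_neg]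
            rw [show (2:ℝ)*Real.log n = Real.log n + Real.log n by ring, Real.exp_add,
              Real.exp_log hn0]
            rw [one_div]
            congr 1
            ring
    have hexp1 : (0:ℝ) < Real.exp 1 := Real.exp_pos 1
    calc (n:ℝ) * (Real.exp (-((n:ℝ)*(p n)*hPc)) + Real.exp 1 * Real.exp (-((n:ℝ)*(p n)*hMc)))
        ≤ (n:ℝ) * (1/(n:ℝ)^2 + Real.exp 1 * (1/(n:ℝ)^2)) := by
          refine mul_le_mul_of_nonneg_left ?_ hn0.le
          nlinarith
      _ = (1 + Real.exp 1)/(n:ℝ) := by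
          field_simp
      _ < ε/4 := hsm1
  have hbound2 : prE n (p n) E2 < ε/4 :=
    lt_of_le_of_lt (fail_small hppos hp1 hlog5) hsm2
  have hbound3 : prE n (p n) E3 < ε/4 :=
    lt_of_le_of_lt (fail_large hppos hp1 hn1 hR60) hsm3
  have hbound4 : prE n (p n) E4 < ε/4 := by
    refine lt_of_le_of_lt (fail_cross hp0 hp1 (by linarith : (0:ℝ) ≤ ω n)) ?_
    refine lt_of_le_of_lt ?_ hsm4
    calc (4:ℝ)^n * Real.exp (-(ω n * n / 8))
        ≤ (4:ℝ)^n * Real.exp (-2*n) := by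
          refine mul_le_mul_of_nonneg_left ?_ (by positivity)
          rw [Real.exp_le_exp]
          nlinarith
      _ = (4 * Real.exp (-2))^n := by
          rw [mul_pow, ← Real.exp_nat_mul]
          congr 2
          ring
  -- conclude
  have hgood_eq : gnpProb n (p n) good
      = prE n (p n) (fun A => good (SimpleGraph.fromEdgeSet (↑A : Set (Sym2 (Fin n))))) :=
    gnpProb_eq n (p n) good
  have hle1 : gnpProb n (p n) good ≤ 1 := by
    rw [hgood_eq]; exact prE_le_one hp0 hp1 _
  have hge : 1 - ε < gnpProb n (p n) good := by
    rw [hgood_eq]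
    have := hsplit
    linarith
  rw [Real.dist_eq, abs_of_nonpos (by linarith)]
  linarith
end

section
/- Let G be a graph on n vertices with an incompatibility system F, and let M be a perfect matching in G over a partition A∪B (if n is even) or A∪B∪{v_*} (if n is odd). If the directed graph D_G(M;F) contains a directed Hamilton cycle, then G contains a Hamilton cycle compatible with F. -/
open Filter

structure IncompSystem {V : Type*} (G : SimpleGraph V) : Type _ where
  incomp : Sym2 V → Sym2 V → Prop
  symm : ∀ e f, incomp e f → incomp f e
  mem_edgeSet : ∀ e f, incomp e f → e ∈ G.edgeSet
  ne_of_incomp : ∀ e f, incomp e f → e ≠ f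
  share_vertex : ∀ e f, incomp e f → ∃ v, v ∈ e ∧ v ∈ f

/-- `G` contains a Hamilton cycle all of whose pairs of edges are compatible with `F`. -/
def HasCompatibleHamCycle {V : Type*} [DecidableEq V] (G : SimpleGraph V)
    (F : IncompSystem G) : Prop :=
  ∃ (v : V) (c : G.Walk v v), c.IsHamiltonianCycle ∧
    ∀ e ∈ c.edges, ∀ f ∈ c.edges, ¬ F.incomp e f
/-- A perfect matching over a partition `A ∪ B` (for `n` even) or `A ∪ B ∪ {v_*}` (for `n` odd),
given by injections `a : Fin (n/2) → Fin n` (the set `A`), `b : Fin (n/2) → Fin n` (the set `B`)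
and, when `n` is odd, an extra vertex `vstar`. -/
structure PerfectMatchingPartition {n : ℕ} (G : SimpleGraph (Fin n)) where
  a : Fin (n / 2) → Fin n
  b : Fin (n / 2) → Fin n
  vstar : Fin n
  inj_a : Function.Injective a
  inj_b : Function.Injective b
  disj : ∀ i j, a i ≠ b j
  vstar_not_a : ¬ Even n → ∀ i, vstar ≠ a i
  vstar_not_b : ¬ Even n → ∀ i, vstar ≠ b i
  cover : ∀ v : Fin n, (∃ i, a i = v) ∨ (∃ i, b i = v) ∨ (¬ Even n ∧ v = vstar)
  edge_even : Even n → ∀ i, G.Adj (a i) (b i)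
  edge_odd : ¬ Even n → ∀ i : Fin (n / 2), (i : ℕ) + 1 < n / 2 → G.Adj (a i) (b i)
  path_odd : ¬ Even n → ∀ i : Fin (n / 2), (i : ℕ) + 1 = n / 2 →
    G.Adj (a i) vstar ∧ G.Adj vstar (b i)

/-- The edge of the matching `M` incident to the vertex `a i`. -/
noncomputable def PerfectMatchingPartition.edgeAtA {n : ℕ} {G : SimpleGraph (Fin n)}
    (M : PerfectMatchingPartition G) (i : Fin (n / 2)) : Sym2 (Fin n) :=
  if ¬ Even n ∧ (i : ℕ) + 1 = n / 2 then s(M.a i, M.vstar) else s(M.a i, M.b i)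

/-- The edge of the matching `M` incident to the vertex `b i`. -/
noncomputable def PerfectMatchingPartition.edgeAtB {n : ℕ} {G : SimpleGraph (Fin n)}
    (M : PerfectMatchingPartition G) (i : Fin (n / 2)) : Sym2 (Fin n) :=
  if ¬ Even n ∧ (i : ℕ) + 1 = n / 2 then s(M.vstar, M.b i) else s(M.a i, M.b i)

/-- The auxiliary digraph `D_G(M)`: vertex `i` stands for the matching edge `e_i`, with a
directed edge from `e_i` to `e_j` (for `i ≠ j`) iff `{b i, a j}` is an edge of `G`. -/
def DGM {n : ℕ} (G : SimpleGraph (Fin n)) (M : PerfectMatchingPartition G) :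
    Fin (n / 2) → Fin (n / 2) → Prop :=
  fun i j => i ≠ j ∧ G.Adj (M.b i) (M.a j)

/-- The digraph `D_G(M; F)` obtained from `D_G(M)` by deleting the edges `(e_i, e_j)` for which
`{b i, a j}` is incompatible with the matching edge at `b i` or the one at `a j`, as well as
(for `n` odd) all edges at the special vertex when the two edges through `v_*` are
incompatible. -/
def DGMF {n : ℕ} (G : SimpleGraph (Fin n)) (M : PerfectMatchingPartition G)
    (F : IncompSystem G) : Fin (n / 2) → Fin (n / 2) → Prop :=
  fun i j => DGM G M i j ∧
    ¬ F.incomp s(M.b i, M.a j) (M.edgeAtB i) ∧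
    ¬ F.incomp s(M.b i, M.a j) (M.edgeAtA j) ∧
    ¬ (¬ Even n ∧ ∃ k : Fin (n / 2), (k : ℕ) + 1 = n / 2 ∧
        F.incomp s(M.a k, M.vstar) s(M.vstar, M.b k) ∧ (i = k ∨ j = k))

/-- The minimum degree of a graph on `Fin n`. -/
noncomputable def minDeg {n : ℕ} (G : SimpleGraph (Fin n)) : ℕ :=
  sInf (Set.range fun v => (G.neighborSet v).ncard)

def DiHamCycle {V : Type*} [Fintype V] (Adj : V → V → Prop) : Prop :=
  ∃ f : ZMod (Fintype.card V) ≃ V, ∀ i, Adj (f i) (f (i + 1))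



section Aux

open SimpleGraph

def buildWalk {V : Type*} {G : SimpleGraph V} (g : ℕ → V)
    (hadj : ∀ i, G.Adj (g i) (g (i + 1))) : ∀ k, G.Walk (g 0) (g k)
  | 0 => .nil
  | (k + 1) => (buildWalk g hadj k).concat (hadj k)

lemma buildWalk_support {V : Type*} {G : SimpleGraph V} (g : ℕ → V)
    (hadj : ∀ i, G.Adj (g i) (g (i + 1))) (k : ℕ) :
    (buildWalk g hadj k).support = (List.range (k + 1)).map g := by
  induction k with
  | zero => simp [buildWalk, List.range_succ]
  | succ k ih =>
      rw [buildWalk, SimpleGraph.Walk.support_concat, ih, List.range_succ (n := k + 1)]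
      simp

lemma buildWalk_edges {V : Type*} {G : SimpleGraph V} (g : ℕ → V)
    (hadj : ∀ i, G.Adj (g i) (g (i + 1))) (k : ℕ) :
    (buildWalk g hadj k).edges = (List.range k).map (fun i => s(g i, g (i + 1))) := by
  induction k with
  | zero => simp [buildWalk]
  | succ k ih =>
      rw [buildWalk, SimpleGraph.Walk.edges_concat, ih, List.range_succ]
      simp

lemma exists_hamCycle_of_cyclic {n c : ℕ} (G : SimpleGraph (Fin n)) (hc : 3 ≤ c)
    (g : ZMod c → Fin n) (hg : Function.Bijective g)
    (hadj : ∀ i : ZMod c, G.Adj (g i) (g (i + 1))) :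
    ∃ (v : Fin n) (w : G.Walk v v), w.IsHamiltonianCycle ∧
      ∀ e ∈ w.edges, ∃ i : ZMod c, e = s(g i, g (i + 1)) := by
  haveI : NeZero c := ⟨by omega⟩
  set g' : ℕ → Fin n := fun k => g (k : ZMod c) with hg'
  have hadj' : ∀ i : ℕ, G.Adj (g' i) (g' (i + 1)) := by
    intro i; simpa [hg', Nat.cast_add] using hadj (i : ZMod c)
  have hgcast : ∀ i j : ℕ, i < c → j < c → g' i = g' j → i = j := by
    intro i j hi hj hij
    have h1 : (i : ZMod c) = (j : ZMod c) := hg.injective hij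
    have := congrArg ZMod.val h1
    rwa [ZMod.val_cast_of_lt hi, ZMod.val_cast_of_lt hj] at this
  have hgc : g' c = g' 0 := by simp [hg']
  set w := ((buildWalk g' hadj' c).copy rfl hgc) with hw
  have hsupp : w.support = (List.range (c + 1)).map g' := by
    rw [hw, SimpleGraph.Walk.support_copy, buildWalk_support]
  have hedges : w.edges = (List.range c).map (fun i => s(g' i, g' (i + 1))) := by
    rw [hw, SimpleGraph.Walk.edges_copy, buildWalk_edges]
  have htail : w.support.tail = (List.range' 1 c).map g' := by
    rw [hsupp, List.range_eq_range', List.range'_succ]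
    simp
  have htail_nodup : w.support.tail.Nodup := by
    rw [htail]
    refine List.Nodup.map_on ?_ (List.nodup_range' (s := 1) (n := c))
    intro i hi j hj hij
    rw [List.mem_range'_1] at hi hj
    -- i, j ∈ [1, c]
    rcases Nat.lt_or_ge i c with hic | hic
    · rcases Nat.lt_or_ge j c with hjc | hjc
      · exact hgcast i j hic hjc hij
      · -- j = c
        have hjc' : j = c := by omega
        rw [hjc', hgc] at hij
        have := hgcast i 0 hic (by omega) hij
        omega
    · have hic' : i = c := by omega
      rw [hic', hgc] at hij
      rcases Nat.lt_or_ge j c with hjc | hjc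
      ·
        have := hgcast 0 j (by omega) hjc hij
        omega
      · omega
  have hmem : ∀ v : Fin n, v ∈ w.support.tail := by
    intro v
    obtain ⟨i, rfl⟩ := hg.surjective v
    rw [htail, List.mem_map]
    rcases Nat.eq_zero_or_pos i.val with h0 | h0
    · refine ⟨c, by rw [List.mem_range'_1]; omega, ?_⟩
      have : (i.val : ZMod c) = i := ZMod.natCast_rightInverse i
      rw [hgc]
      simp only [hg', Nat.cast_zero]
      rw [← this, h0, Nat.cast_zero]
    · refine ⟨i.val, by rw [List.mem_range'_1]; have := i.val_lt; omega, ?_⟩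
      simp only [hg']
      rw [ZMod.natCast_rightInverse i]
  have hnotnil : w ≠ SimpleGraph.Walk.nil := by
    intro hnil
    have : w.edges = [] := by rw [hnil]; rfl
    rw [hedges] at this
    have : c = 0 := by simpa using congrArg List.length this
    omega
  have hcyc : w.IsCycle := by
    rw [SimpleGraph.Walk.isCycle_def]
    refine ⟨⟨?_⟩, hnotnil, htail_nodup⟩
    rw [hedges]
    refine List.Nodup.map_on ?_ (List.nodup_range (n := c))
    intro i hi j hj hij
    rw [List.mem_range] at hi hj
    rw [Sym2.eq_iff] at hij
    rcases hij with ⟨h1, _⟩ | ⟨h1, h2⟩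
    · exact hgcast i j hi hj h1
    · -- g' i = g' (j+1), g' (i+1) = g' j : implies 2 = 0 in ZMod c
      exfalso
      have e1 : (i : ZMod c) = (j : ZMod c) + 1 := by
        have := hg.injective h1
        push_cast at this; exact this
      have e2 : (i : ZMod c) + 1 = (j : ZMod c) := by
        have := hg.injective h2
        push_cast at this; exact this
      have h3 : (j : ZMod c) + 2 = (j : ZMod c) + 0 := by
        rw [add_zero]; nth_rewrite 2 [← e2]; rw [e1]; ring
      have : ((2 : ℕ) : ZMod c) = 0 := by push_cast; exact add_left_cancel h3
      have := (ZMod.natCast_eq_zero_iff 2 c).mp this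
      have := Nat.le_of_dvd (by norm_num) this
      omega
  refine ⟨g' 0, w, ?_, ?_⟩
  · rw [SimpleGraph.Walk.isHamiltonianCycle_iff_isCycle_and_support_count_tail_eq_one]
    exact ⟨hcyc, fun a => List.count_eq_one_of_mem htail_nodup (hmem a)⟩
  · intro e he
    rw [hedges] at he
    simp only [List.mem_map, List.mem_range] at he
    obtain ⟨i, _, rfl⟩ := he
    exact ⟨(i : ZMod c), by simp [hg', Nat.cast_add]⟩


namespace P34

variable {n : ℕ} {G : SimpleGraph (Fin n)}

/-- The cyclic enumeration of the vertices along the intended Hamilton cycle. -/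
def vert (M : PerfectMatchingPartition G) (f : ZMod (n / 2) → Fin (n / 2)) (p : ℕ) : Fin n :=
  if Even n then
    (if p % 2 = 0 then M.a (f ((p / 2 : ℕ))) else M.b (f ((p / 2 : ℕ))))
  else if p + 2 = n then M.vstar
  else if p + 1 = n then M.b (f ((n / 2 - 1 : ℕ)))
  else if p % 2 = 0 then M.a (f ((p / 2 : ℕ))) else M.b (f ((p / 2 : ℕ)))

lemma step (M : PerfectMatchingPartition G) (f : ZMod (n / 2) → Fin (n / 2))
    (hfinj : Function.Injective f) (hm : 2 ≤ n / 2)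
    (hfk : ¬ Even n → ((f (((n / 2 - 1 : ℕ) : ZMod (n / 2)))) : ℕ) + 1 = n / 2)
    (p : ℕ) (hp : p < n) :
    (∃ j : ZMod (n / 2), vert M f p = M.b (f j) ∧ vert M f ((p + 1) % n) = M.a (f (j + 1)))
    ∨ (∃ i : Fin (n / 2), ¬ (¬ Even n ∧ (i : ℕ) + 1 = n / 2) ∧
        vert M f p = M.a i ∧ vert M f ((p + 1) % n) = M.b i)
    ∨ (¬ Even n ∧ ∃ i : Fin (n / 2), (i : ℕ) + 1 = n / 2 ∧
        ((vert M f p = M.a i ∧ vert M f ((p + 1) % n) = M.vstar) ∨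
         (vert M f p = M.vstar ∧ vert M f ((p + 1) % n) = M.b i))) := by
  have hmn : n / 2 * 2 ≤ n := Nat.div_mul_le_self n 2
  haveI : NeZero (n / 2) := ⟨by omega⟩
  by_cases hn : Even n
  · -- even case
    have h2 : n % 2 = 0 := Nat.even_iff.mp hn
    by_cases hp2 : p % 2 = 0
    · -- matching edge
      have hlt : p + 1 < n := by omega
      have hmod : (p + 1) % n = p + 1 := Nat.mod_eq_of_lt hlt
      refine Or.inr (Or.inl ⟨f ((p / 2 : ℕ)), by tauto, ?_, ?_⟩)
      · simp only [vert]; rw [if_pos hn, if_pos hp2]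
      · have h1 : (p + 1) / 2 = p / 2 := by omega
        simp only [vert, hmod]; rw [if_pos hn, if_neg (by omega), h1]
    · -- link edge
      by_cases hlast : p + 1 = n
      · -- wrap around
        have hmod : (p + 1) % n = 0 := by rw [hlast, Nat.mod_self]
        refine Or.inl ⟨((p / 2 : ℕ)), ?_, ?_⟩
        · simp only [vert]; rw [if_pos hn, if_neg hp2]
        · simp only [vert, hmod]; rw [if_pos hn, if_pos trivial]
          have h1 : ((p / 2 : ℕ) : ZMod (n / 2)) + 1 = ((p / 2 + 1 : ℕ) : ZMod (n / 2)) := by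
            push_cast; ring
          have h2 : p / 2 + 1 = n / 2 := by omega
          rw [h1, h2, ZMod.natCast_self, Nat.cast_zero]
      · have hmod : (p + 1) % n = p + 1 := Nat.mod_eq_of_lt (by omega)
        refine Or.inl ⟨((p / 2 : ℕ)), ?_, ?_⟩
        · simp only [vert]; rw [if_pos hn, if_neg hp2]
        · simp only [vert, hmod]; rw [if_pos hn, if_pos (show (p + 1) % 2 = 0 by omega)]
          have h1 : (p + 1) / 2 = p / 2 + 1 := by omega
          rw [h1]
          congr 1
          push_cast; ring
  · -- odd case
    have h2 : n % 2 = 1 := Nat.odd_iff.mp (Nat.not_even_iff_odd.mp hn)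
    have hn5 : 5 ≤ n := by omega
    by_cases hsp : p + 2 = n
    · -- vstar → b: third class, right
      have hmod : (p + 1) % n = p + 1 := Nat.mod_eq_of_lt (by omega)
      refine Or.inr (Or.inr ⟨hn, f ((n / 2 - 1 : ℕ)), hfk hn, Or.inr ⟨?_, ?_⟩⟩)
      · simp only [vert]; rw [if_neg hn, if_pos hsp]
      · simp only [vert, hmod]
        rw [if_neg hn, if_neg (show ¬ (p + 1 + 2 = n) by omega),
          if_pos (show p + 1 + 1 = n by omega)]
    · by_cases hlast : p + 1 = n
      · -- b (f (m-1)) → a (f 0): link, wrap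
        have hmod : (p + 1) % n = 0 := by rw [hlast, Nat.mod_self]
        refine Or.inl ⟨((n / 2 - 1 : ℕ)), ?_, ?_⟩
        · simp only [vert]; rw [if_neg hn, if_neg (show ¬ (p + 2 = n) by omega), if_pos hlast]
        · simp only [vert, hmod]
          rw [if_neg hn, if_neg (show ¬ (2 = n) by omega),
            if_neg (show ¬ (1 = n) by omega), if_pos trivial]
          have h1 : ((n / 2 - 1 : ℕ) : ZMod (n / 2)) + 1
              = ((n / 2 - 1 + 1 : ℕ) : ZMod (n / 2)) := by push_cast; ring
          have h2 : n / 2 - 1 + 1 = n / 2 := by omega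
          rw [h1, h2, ZMod.natCast_self, Nat.cast_zero]
      · -- p + 2 < n
        have hp2n : p + 2 < n := by omega
        have hmod : (p + 1) % n = p + 1 := Nat.mod_eq_of_lt (by omega)
        by_cases hp2 : p % 2 = 0
        · by_cases hpen : p + 3 = n
          · -- a (f (m-1)) → vstar: third class, left
            refine Or.inr (Or.inr ⟨hn, f ((n / 2 - 1 : ℕ)), hfk hn, Or.inl ⟨?_, ?_⟩⟩)
            · simp only [vert]
              rw [if_neg hn, if_neg (show ¬ (p + 2 = n) by omega),
                if_neg (show ¬ (p + 1 = n) by omega), if_pos hp2]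
              have h1 : p / 2 = n / 2 - 1 := by omega
              rw [h1]
            · simp only [vert, hmod]; rw [if_neg hn, if_pos (show p + 1 + 2 = n by omega)]
          · -- a (f q) → b (f q): middle class, nonspecial
            refine Or.inr (Or.inl ⟨f ((p / 2 : ℕ)), ?_, ?_, ?_⟩)
            · rintro ⟨-, hspec⟩
              have hq : p / 2 < n / 2 - 1 := by omega
              have := hfk hn
              have heq : f ((p / 2 : ℕ)) = f ((n / 2 - 1 : ℕ)) := Fin.ext (by omega)
              have := hfinj heq
              have h1 := congrArg ZMod.val this
              rw [ZMod.val_cast_of_lt (by omega), ZMod.val_cast_of_lt (by omega)] at h1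
              omega
            · simp only [vert]
              rw [if_neg hn, if_neg (show ¬ (p + 2 = n) by omega),
                if_neg (show ¬ (p + 1 = n) by omega), if_pos hp2]
            · simp only [vert, hmod]
              rw [if_neg hn, if_neg (show ¬ (p + 1 + 2 = n) by omega),
                if_neg (show ¬ (p + 1 + 1 = n) by omega),
                if_neg (show ¬ ((p + 1) % 2 = 0) by omega)]
              have h1 : (p + 1) / 2 = p / 2 := by omega
              rw [h1]
        · -- b (f q) → a (f (q+1)): link
          refine Or.inl ⟨((p / 2 : ℕ)), ?_, ?_⟩
          · simp only [vert]
            rw [if_neg hn, if_neg (show ¬ (p + 2 = n) by omega),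
              if_neg (show ¬ (p + 1 = n) by omega), if_neg hp2]
          · simp only [vert, hmod]
            rw [if_neg hn, if_neg (show ¬ (p + 1 + 2 = n) by omega),
              if_neg (show ¬ (p + 1 + 1 = n) by omega), if_pos (show (p + 1) % 2 = 0 by omega)]
            have h1 : (p + 1) / 2 = p / 2 + 1 := by omega
            rw [h1]
            congr 1
            push_cast; ring



/-- The key compatibility lemma: any two edges of the constructed cycle are compatible. -/
lemma no_incomp {F : IncompSystem G} (M : PerfectMatchingPartition G)
    (f : ZMod (n / 2) ≃ Fin (n / 2))
    (hf : ∀ j : ZMod (n / 2), DGMF G M F (f j) (f (j + 1)))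
    (C : Sym2 (Fin n) → Prop)
    (hCdef : ∀ e, C e ↔
      (∃ j : ZMod (n / 2), e = s(M.b (f j), M.a (f (j + 1))))
      ∨ (∃ i0 : Fin (n / 2), ¬ (¬ Even n ∧ (i0 : ℕ) + 1 = n / 2) ∧ e = s(M.a i0, M.b i0))
      ∨ (¬ Even n ∧ ∃ i0 : Fin (n / 2), (i0 : ℕ) + 1 = n / 2 ∧
          (e = s(M.a i0, M.vstar) ∨ e = s(M.vstar, M.b i0))))
    (e e' : Sym2 (Fin n)) (hC : C e) (hC' : C e') (hinc : F.incomp e e') : False := by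
  have keyL : ∀ (j : ZMod (n / 2)) (e' : Sym2 (Fin n)), C e' →
      F.incomp s(M.b (f j), M.a (f (j + 1))) e' → False := by
    intro j e' hC' hinc
    have hne := F.ne_of_incomp _ _ hinc
    obtain ⟨v, hv1, hv2⟩ := F.share_vertex _ _ hinc
    rw [Sym2.mem_iff] at hv1
    rw [hCdef] at hC'
    rcases hC' with ⟨j', rfl⟩ | ⟨i0, hns, rfl⟩ | ⟨hodd, i0, hsp, hcase⟩
    · rw [Sym2.mem_iff] at hv2
      rcases hv1 with rfl | rfl <;> rcases hv2 with h | h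
      · have hj : j = j' := f.injective (M.inj_b h)
        subst hj; exact hne rfl
      · exact M.disj _ _ h.symm
      · exact M.disj _ _ h
      · have hj : j + 1 = j' + 1 := f.injective (M.inj_a h)
        have hj' : j = j' := by
          have := add_right_cancel hj; exact this
        subst hj'; exact hne rfl
    · rw [Sym2.mem_iff] at hv2
      rcases hv1 with rfl | rfl <;> rcases hv2 with h | h
      · exact M.disj _ _ h.symm
      · -- M.b (f j) = M.b i0
        have hi : i0 = f j := M.inj_b h.symm
        subst hi
        refine (hf j).2.1 ?_
        have he : M.edgeAtB (f j) = s(M.a (f j), M.b (f j)) := by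
          simp only [PerfectMatchingPartition.edgeAtB]
          rw [if_neg hns]
        rw [he]; exact hinc
      · -- M.a (f (j+1)) = M.a i0
        have hi : i0 = f (j + 1) := M.inj_a h.symm
        subst hi
        refine (hf j).2.2.1 ?_
        have he : M.edgeAtA (f (j + 1)) = s(M.a (f (j + 1)), M.b (f (j + 1))) := by
          simp only [PerfectMatchingPartition.edgeAtA]
          rw [if_neg hns]
        rw [he]; exact hinc
      · exact M.disj _ _ h
    · rcases hcase with rfl | rfl
      · rw [Sym2.mem_iff] at hv2
        rcases hv1 with rfl | rfl <;> rcases hv2 with h | h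
        · exact M.disj _ _ h.symm
        · exact M.vstar_not_b hodd _ h.symm
        · have hi : i0 = f (j + 1) := M.inj_a h.symm
          subst hi
          refine (hf j).2.2.1 ?_
          have he : M.edgeAtA (f (j + 1)) = s(M.a (f (j + 1)), M.vstar) := by
            simp only [PerfectMatchingPartition.edgeAtA]
            rw [if_pos ⟨hodd, hsp⟩]
          rw [he]; exact hinc
        · exact M.vstar_not_a hodd _ h.symm
      · rw [Sym2.mem_iff] at hv2
        rcases hv1 with rfl | rfl <;> rcases hv2 with h | h
        · exact M.vstar_not_b hodd _ h.symm
        · have hi : i0 = f j := M.inj_b h.symm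
          subst hi
          refine (hf j).2.1 ?_
          have he : M.edgeAtB (f j) = s(M.vstar, M.b (f j)) := by
            simp only [PerfectMatchingPartition.edgeAtB]
            rw [if_pos ⟨hodd, hsp⟩]
          rw [he]; exact hinc
        · exact M.vstar_not_a hodd _ h.symm
        · exact M.disj _ _ h
  have keyM : ∀ (i0 : Fin (n / 2)), ¬ (¬ Even n ∧ (i0 : ℕ) + 1 = n / 2) →
      ∀ (e' : Sym2 (Fin n)), C e' → F.incomp s(M.a i0, M.b i0) e' → False := by
    intro i0 hns e' hC' hinc
    rw [hCdef] at hC'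
    rcases hC' with ⟨j, rfl⟩ | ⟨i1, hns1, rfl⟩ | ⟨hodd, i1, hsp, hcase⟩
    · exact keyL j _ (by rw [hCdef]; exact Or.inr (Or.inl ⟨i0, hns, rfl⟩))
        (F.symm _ _ hinc)
    · have hne := F.ne_of_incomp _ _ hinc
      obtain ⟨v, hv1, hv2⟩ := F.share_vertex _ _ hinc
      rw [Sym2.mem_iff] at hv1 hv2
      rcases hv1 with rfl | rfl <;> rcases hv2 with h | h
      · have hi : i0 = i1 := M.inj_a h
        subst hi; exact hne rfl
      · exact M.disj _ _ h
      · exact M.disj _ _ h.symm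
      · have hi : i0 = i1 := M.inj_b h
        subst hi; exact hne rfl
    · obtain ⟨v, hv1, hv2⟩ := F.share_vertex _ _ hinc
      rw [Sym2.mem_iff] at hv1
      rcases hcase with rfl | rfl
      · rw [Sym2.mem_iff] at hv2
        rcases hv1 with rfl | rfl <;> rcases hv2 with h | h
        · have hi : i0 = i1 := M.inj_a h
          exact hns ⟨hodd, by rw [hi]; exact hsp⟩
        · exact M.vstar_not_a hodd _ h.symm
        · exact M.disj _ _ h.symm
        · exact M.vstar_not_b hodd _ h.symm
      · rw [Sym2.mem_iff] at hv2
        rcases hv1 with rfl | rfl <;> rcases hv2 with h | h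
        · exact M.vstar_not_a hodd _ h.symm
        · exact M.disj _ _ h
        · exact M.vstar_not_b hodd _ h.symm
        · have hi : i0 = i1 := M.inj_b h
          exact hns ⟨hodd, by rw [hi]; exact hsp⟩
  have keyS : ∀ (i0 : Fin (n / 2)), ¬ Even n → (i0 : ℕ) + 1 = n / 2 →
      ∀ (ep : Sym2 (Fin n)), (ep = s(M.a i0, M.vstar) ∨ ep = s(M.vstar, M.b i0)) →
      ∀ (e' : Sym2 (Fin n)), C e' → F.incomp ep e' → False := by
    intro i0 hodd hsp ep hep e' hC' hinc
    rw [hCdef] at hC'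
    rcases hC' with ⟨j, rfl⟩ | ⟨i1, hns1, rfl⟩ | ⟨hodd2, i1, hsp1, hcase⟩
    · exact keyL j _ (by rw [hCdef]; exact Or.inr (Or.inr ⟨hodd, i0, hsp, hep⟩))
        (F.symm _ _ hinc)
    · exact keyM i1 hns1 _ (by rw [hCdef]; exact Or.inr (Or.inr ⟨hodd, i0, hsp, hep⟩))
        (F.symm _ _ hinc)
    · have hne := F.ne_of_incomp _ _ hinc
      have hi : i1 = i0 := Fin.ext (by omega)
      subst hi
      rcases hep with rfl | rfl <;> rcases hcase with rfl | rfl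
      · exact hne rfl
      · exact (hf (f.symm i1)).2.2.2
          ⟨hodd, i1, hsp, hinc, Or.inl (f.apply_symm_apply i1)⟩
      · exact (hf (f.symm i1)).2.2.2
          ⟨hodd, i1, hsp, F.symm _ _ hinc, Or.inl (f.apply_symm_apply i1)⟩
      · exact hne rfl
  rw [hCdef] at hC
  rcases hC with ⟨j, rfl⟩ | ⟨i0, hns, rfl⟩ | ⟨hodd, i0, hsp, hcase⟩
  · exact keyL j e' hC' hinc
  · exact keyM i0 hns e' hC' hinc
  · exact keyS i0 hodd hsp e hcase e' hC' hinc

end P34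

end Aux

/-- **Proposition 3.4.** If the auxiliary digraph `D_G(M; F)` contains a directed Hamilton
cycle, then `G` contains a Hamilton cycle compatible with `F`. -/
theorem compatible_ham_of_digraph_ham {n : ℕ} (G : SimpleGraph (Fin n))
    (F : IncompSystem G) (M : PerfectMatchingPartition G)
    (h : DiHamCycle (DGMF G M F)) :
    HasCompatibleHamCycle G F := by
  classical
  obtain ⟨f0, hf0⟩ := h
  revert f0
  rw [Fintype.card_fin]
  intro f0 hf0
  have hm1 : 0 < n / 2 := (f0 0).pos
  by_cases hm2 : n / 2 < 2
  · exfalso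
    refine (hf0 0).1.1 ?_
    have h1 : ∀ x y : Fin (n / 2), x = y := by
      intro x y
      have := x.isLt; have := y.isLt
      exact Fin.ext (by omega)
    exact h1 _ _
  have hm : 2 ≤ n / 2 := by omega
  have hn4 : 4 ≤ n := by
    have := Nat.div_mul_le_self n 2
    omega
  haveI : NeZero n := ⟨by omega⟩
  haveI : Fact (1 < n) := ⟨by omega⟩
  haveI : NeZero (n / 2) := ⟨by omega⟩
  set kstar : Fin (n / 2) := ⟨n / 2 - 1, by omega⟩ with hkstar
  set c : ZMod (n / 2) := f0.symm kstar + 1 with hc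
  set f : ZMod (n / 2) ≃ Fin (n / 2) := (Equiv.addRight c).trans f0 with hfdef
  have hfeval : ∀ j, f j = f0 (j + c) := fun j => rfl
  have hf : ∀ j, DGMF G M F (f j) (f (j + 1)) := by
    intro j
    have h0 := hf0 (j + c)
    rw [hfeval, hfeval]
    have e : j + 1 + c = j + c + 1 := by ring
    rw [e]
    exact h0
  have hzero : ((n / 2 - 1 : ℕ) : ZMod (n / 2)) + 1 = 0 := by
    have h1 : ((n / 2 - 1 : ℕ) : ZMod (n / 2)) + 1
        = ((n / 2 - 1 + 1 : ℕ) : ZMod (n / 2)) := by push_cast; ring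
    rw [h1, show n / 2 - 1 + 1 = n / 2 by omega, ZMod.natCast_self]
  have hfk' : f (((n / 2 - 1 : ℕ) : ZMod (n / 2))) = kstar := by
    rw [hfeval]
    have h1 : ((n / 2 - 1 : ℕ) : ZMod (n / 2)) + c = f0.symm kstar := by
      calc ((n / 2 - 1 : ℕ) : ZMod (n / 2)) + (f0.symm kstar + 1)
          = f0.symm kstar + (((n / 2 - 1 : ℕ) : ZMod (n / 2)) + 1) := by ring
        _ = f0.symm kstar := by rw [hzero, add_zero]
    rw [h1, Equiv.apply_symm_apply]
  have hfk : ¬ Even n → ((f (((n / 2 - 1 : ℕ) : ZMod (n / 2)))) : ℕ) + 1 = n / 2 := by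
    intro _
    rw [hfk']
    show n / 2 - 1 + 1 = n / 2
    omega
  set g : ZMod n → Fin n := fun i => P34.vert M (⇑f) i.val with hg
  have hval : ∀ i : ZMod n, (i + 1).val = (i.val + 1) % n := by
    intro i; rw [ZMod.val_add, ZMod.val_one]
  have hadj : ∀ i : ZMod n, G.Adj (g i) (g (i + 1)) := by
    intro i
    show G.Adj (P34.vert M (⇑f) i.val) (P34.vert M (⇑f) (i + 1).val)
    rw [hval i]
    rcases P34.step M (⇑f) f.injective hm hfk i.val (ZMod.val_lt i) with
      ⟨j, h1, h2⟩ | ⟨i0, hns, h1, h2⟩ | ⟨hodd, i0, hsp, hcase⟩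
    · rw [h1, h2]; exact (hf j).1.2
    · rw [h1, h2]
      by_cases hn : Even n
      · exact M.edge_even hn i0
      · refine M.edge_odd hn i0 ?_
        have h3 := i0.isLt
        have h4 : (i0 : ℕ) + 1 ≠ n / 2 := fun hcc => hns ⟨hn, hcc⟩
        omega
    · rcases hcase with ⟨h1, h2⟩ | ⟨h1, h2⟩
      · rw [h1, h2]; exact (M.path_odd hodd i0 hsp).1
      · rw [h1, h2]; exact (M.path_odd hodd i0 hsp).2
  have hsurj : Function.Surjective g := by
    intro v
    rcases M.cover v with ⟨i, hi⟩ | ⟨i, hi⟩ | ⟨hodd, hv⟩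
    · have hk : (f.symm i).val < n / 2 := ZMod.val_lt _
      by_cases hn : Even n
      · have h2 : n % 2 = 0 := Nat.even_iff.mp hn
        refine ⟨((2 * (f.symm i).val : ℕ) : ZMod n), ?_⟩
        show P34.vert M (⇑f) (((2 * (f.symm i).val : ℕ) : ZMod n)).val = v
        rw [ZMod.val_cast_of_lt (by omega)]
        simp only [P34.vert]
        rw [if_pos hn, if_pos (show 2 * (f.symm i).val % 2 = 0 by omega),
          show 2 * (f.symm i).val / 2 = (f.symm i).val by omega,
          ZMod.natCast_rightInverse (f.symm i), Equiv.apply_symm_apply]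
        exact hi
      · have h2 : n % 2 = 1 := Nat.odd_iff.mp (Nat.not_even_iff_odd.mp hn)
        refine ⟨((2 * (f.symm i).val : ℕ) : ZMod n), ?_⟩
        show P34.vert M (⇑f) (((2 * (f.symm i).val : ℕ) : ZMod n)).val = v
        rw [ZMod.val_cast_of_lt (by omega)]
        simp only [P34.vert]
        rw [if_neg hn, if_neg (show ¬ (2 * (f.symm i).val + 2 = n) by omega),
          if_neg (show ¬ (2 * (f.symm i).val + 1 = n) by omega),
          if_pos (show 2 * (f.symm i).val % 2 = 0 by omega),
          show 2 * (f.symm i).val / 2 = (f.symm i).val by omega,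
          ZMod.natCast_rightInverse (f.symm i), Equiv.apply_symm_apply]
        exact hi
    · have hk : (f.symm i).val < n / 2 := ZMod.val_lt _
      by_cases hn : Even n
      · have h2 : n % 2 = 0 := Nat.even_iff.mp hn
        refine ⟨((2 * (f.symm i).val + 1 : ℕ) : ZMod n), ?_⟩
        show P34.vert M (⇑f) (((2 * (f.symm i).val + 1 : ℕ) : ZMod n)).val = v
        rw [ZMod.val_cast_of_lt (by omega)]
        simp only [P34.vert]
        rw [if_pos hn, if_neg (show ¬ ((2 * (f.symm i).val + 1) % 2 = 0) by omega),
          show (2 * (f.symm i).val + 1) / 2 = (f.symm i).val by omega,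
          ZMod.natCast_rightInverse (f.symm i), Equiv.apply_symm_apply]
        exact hi
      · have h2 : n % 2 = 1 := Nat.odd_iff.mp (Nat.not_even_iff_odd.mp hn)
        by_cases hsp : (f.symm i).val + 1 = n / 2
        · refine ⟨((n - 1 : ℕ) : ZMod n), ?_⟩
          show P34.vert M (⇑f) (((n - 1 : ℕ) : ZMod n)).val = v
          rw [ZMod.val_cast_of_lt (by omega)]
          simp only [P34.vert]
          rw [if_neg hn, if_neg (show ¬ (n - 1 + 2 = n) by omega),
            if_pos (show n - 1 + 1 = n by omega),
            show n / 2 - 1 = (f.symm i).val by omega,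
            ZMod.natCast_rightInverse (f.symm i), Equiv.apply_symm_apply]
          exact hi
        · refine ⟨((2 * (f.symm i).val + 1 : ℕ) : ZMod n), ?_⟩
          show P34.vert M (⇑f) (((2 * (f.symm i).val + 1 : ℕ) : ZMod n)).val = v
          rw [ZMod.val_cast_of_lt (by omega)]
          simp only [P34.vert]
          rw [if_neg hn, if_neg (show ¬ (2 * (f.symm i).val + 1 + 2 = n) by omega),
            if_neg (show ¬ (2 * (f.symm i).val + 1 + 1 = n) by omega),
            if_neg (show ¬ ((2 * (f.symm i).val + 1) % 2 = 0) by omega),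
            show (2 * (f.symm i).val + 1) / 2 = (f.symm i).val by omega,
            ZMod.natCast_rightInverse (f.symm i), Equiv.apply_symm_apply]
          exact hi
    · have h2 : n % 2 = 1 := Nat.odd_iff.mp (Nat.not_even_iff_odd.mp hodd)
      refine ⟨((n - 2 : ℕ) : ZMod n), ?_⟩
      show P34.vert M (⇑f) (((n - 2 : ℕ) : ZMod n)).val = v
      rw [ZMod.val_cast_of_lt (by omega)]
      simp only [P34.vert]
      rw [if_neg hodd, if_pos (show n - 2 + 2 = n by omega)]
      exact hv.symm
  have hbij : Function.Bijective g := by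
    rw [Fintype.bijective_iff_surjective_and_card]
    exact ⟨hsurj, by rw [ZMod.card, Fintype.card_fin]⟩
  obtain ⟨v, w, hham, hedges⟩ := exists_hamCycle_of_cyclic G (by omega) g hbij hadj
  refine ⟨v, w, hham, ?_⟩
  set C : Sym2 (Fin n) → Prop := fun e =>
    (∃ j : ZMod (n / 2), e = s(M.b (f j), M.a (f (j + 1))))
    ∨ (∃ i0 : Fin (n / 2), ¬ (¬ Even n ∧ (i0 : ℕ) + 1 = n / 2) ∧ e = s(M.a i0, M.b i0))
    ∨ (¬ Even n ∧ ∃ i0 : Fin (n / 2), (i0 : ℕ) + 1 = n / 2 ∧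
        (e = s(M.a i0, M.vstar) ∨ e = s(M.vstar, M.b i0))) with hCdef
  have hclass : ∀ e ∈ w.edges, C e := by
    intro e he
    obtain ⟨i, rfl⟩ := hedges e he
    show C s(P34.vert M (⇑f) i.val, P34.vert M (⇑f) (i + 1).val)
    rw [hval i]
    rcases P34.step M (⇑f) f.injective hm hfk i.val (ZMod.val_lt i) with
      ⟨j, h1, h2⟩ | ⟨i0, hns, h1, h2⟩ | ⟨hodd, i0, hsp, hcase⟩
    · exact Or.inl ⟨j, by rw [h1, h2]⟩
    · exact Or.inr (Or.inl ⟨i0, hns, by rw [h1, h2]⟩)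
    · rcases hcase with ⟨h1, h2⟩ | ⟨h1, h2⟩
      · exact Or.inr (Or.inr ⟨hodd, i0, hsp, Or.inl (by rw [h1, h2])⟩)
      · exact Or.inr (Or.inr ⟨hodd, i0, hsp, Or.inr (by rw [h1, h2])⟩)
  intro e he e' he' hinc
  exact P34.no_incomp M f hf C (fun e => Iff.rfl) e e' (hclass e he) (hclass e' he') hinc
end

section
/- Let p1 = p1(n) and p2 = p2(n) be sequences of edge probabilities with 1 ≥ p1(n) ≥ p2(n) and n·p2(n)/log n → ∞, and let α, ε > 0 be reals. If the random graph G(n,p2) asymptotically almost surely has the property that for every (α+2ε)np2-bounded incompatibility system over it there exists a compatible Hamilton cycle, then the random graph G(n,p1) asymptotically almost surely has the property that for every (α+ε)np1-bounded incompatibility system over it there exists a compatible Hamilton cycle. -/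
open Filter

/-- `F` is `Δ`-bounded: for every vertex `v` and edge `e ∋ v` of `G`, at most `Δ` edges
through `v` are incompatible with `e`. -/
def IncompSystem.Bounded {V : Type*} {G : SimpleGraph V} (F : IncompSystem G) (Δ : ℝ) : Prop :=
  ∀ v : V, ∀ e ∈ G.edgeSet, v ∈ e →
    ({f : Sym2 V | v ∈ f ∧ F.incomp e f}.ncard : ℝ) ≤ Δ

section Aux
open Finset
open scoped Classical

noncomputable def KK (n : ℕ) : Finset (Sym2 (Fin n)) := (⊤ : SimpleGraph (Fin n)).edgeFinset

noncomputable def Gr {n : ℕ} (s : Finset (Sym2 (Fin n))) : SimpleGraph (Fin n) :=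
  SimpleGraph.fromEdgeSet ↑s

lemma mem_KK {n : ℕ} {e : Sym2 (Fin n)} : e ∈ KK n ↔ ¬ e.IsDiag := by
  simp [KK, SimpleGraph.mem_edgeFinset, SimpleGraph.edgeSet_top]

lemma card_KK (n : ℕ) : (KK n).card = n.choose 2 := by
  rw [KK, SimpleGraph.card_edgeFinset_top_eq_card_choose_two, Fintype.card_fin]

lemma edgeSet_Gr {n : ℕ} {s : Finset (Sym2 (Fin n))} (hs : s ⊆ KK n) :
    (Gr s).edgeSet = ↑s := by
  rw [Gr, SimpleGraph.edgeSet_fromEdgeSet]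
  ext e
  simp only [Set.mem_diff, Finset.mem_coe, Set.mem_setOf_eq, and_iff_left_iff_imp]
  intro he
  exact mem_KK.mp (hs he)

lemma edgeFinset_Gr {n : ℕ} {s : Finset (Sym2 (Fin n))} (hs : s ⊆ KK n) :
    (Gr s).edgeFinset = s := by
  apply Finset.coe_injective
  rw [SimpleGraph.coe_edgeFinset, edgeSet_Gr hs]

lemma ncard_Gr {n : ℕ} {s : Finset (Sym2 (Fin n))} (hs : s ⊆ KK n) :
    (Gr s).edgeSet.ncard = s.card := by
  rw [edgeSet_Gr hs, Set.ncard_coe_finset]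

lemma sum_graphs_eq {n : ℕ} (f : SimpleGraph (Fin n) → ℝ) :
    ∑ G : SimpleGraph (Fin n), f G = ∑ s ∈ (KK n).powerset, f (Gr s) := by
  refine Finset.sum_nbij' (fun G => G.edgeFinset) (fun s => Gr s) ?_ ?_ ?_ ?_ ?_
  · intro G _
    rw [Finset.mem_powerset, KK]
    exact SimpleGraph.edgeFinset_mono le_top
  · intro s _; exact Finset.mem_univ _
  · intro G _
    simp only [Gr]
    rw [SimpleGraph.coe_edgeFinset, SimpleGraph.fromEdgeSet_edgeSet]
  · intro s hs
    exact edgeFinset_Gr (Finset.mem_powerset.mp hs)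
  · intro G _
    simp only [Gr]
    rw [SimpleGraph.coe_edgeFinset, SimpleGraph.fromEdgeSet_edgeSet]

lemma gnpProb_eq_s11 (n : ℕ) (p : ℝ) (P : SimpleGraph (Fin n) → Prop) :
    gnpProb n p P = ∑ s ∈ (KK n).powerset,
      if P (Gr s) then p ^ s.card * (1 - p) ^ (n.choose 2 - s.card) else 0 := by
  rw [gnpProb, sum_graphs_eq]
  refine Finset.sum_congr rfl fun s hs => ?_
  rw [ncard_Gr (Finset.mem_powerset.mp hs)]

lemma sum_pow_powerset {β : Type*} (s : Finset β) (a b : ℝ) :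
    ∑ t ∈ s.powerset, a ^ t.card * b ^ (s.card - t.card) = (a + b) ^ s.card := by
  rw [Finset.sum_powerset_apply_card (fun k => a ^ k * b ^ (s.card - k)), add_pow]
  refine Finset.sum_congr rfl fun m hm => ?_
  rw [nsmul_eq_mul]; ring

lemma total_mass (n : ℕ) (p : ℝ) :
    ∑ s ∈ (KK n).powerset, p ^ s.card * (1 - p) ^ (n.choose 2 - s.card) = 1 := by
  rw [← card_KK n]
  rw [sum_pow_powerset (KK n) p (1 - p)]
  norm_num

lemma one_sub_gnpProb (n : ℕ) (p : ℝ) (P : SimpleGraph (Fin n) → Prop) :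
    1 - gnpProb n p P = ∑ s ∈ (KK n).powerset,
      if ¬ P (Gr s) then p ^ s.card * (1 - p) ^ (n.choose 2 - s.card) else 0 := by
  rw [gnpProb_eq_s11]
  nth_rewrite 1 [← total_mass n p]
  rw [← Finset.sum_sub_distrib]
  refine Finset.sum_congr rfl fun s hs => ?_
  by_cases h : P (Gr s) <;> simp [h]

/-- The restriction of an incompatibility system to a subgraph. -/
def IncompSystem.restrict {V : Type*} {G : SimpleGraph V} (F : IncompSystem G)
    (H : SimpleGraph V) : IncompSystem H where
  incomp e f := F.incomp e f ∧ e ∈ H.edgeSet ∧ f ∈ H.edgeSet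
  symm e f h := ⟨F.symm e f h.1, h.2.2, h.2.1⟩
  mem_edgeSet e f h := h.2.1
  ne_of_incomp e f h := F.ne_of_incomp e f h.1
  share_vertex e f h := F.share_vertex e f h.1

/-- A compatible Hamilton cycle of a spanning subgraph lifts. -/
lemma hasCompatibleHamCycle_of_le {V : Type*} [DecidableEq V] {H G : SimpleGraph V}
    (hle : H ≤ G) (F : IncompSystem G)
    (h : HasCompatibleHamCycle H (F.restrict H)) : HasCompatibleHamCycle G F := by
  obtain ⟨v, c, hc, hcomp⟩ := h
  refine ⟨v, c.mapLe hle, ?_, ?_⟩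
  · exact hc.map (f := SimpleGraph.Hom.ofLE hle) Function.bijective_id
  · have hedges : (c.mapLe hle).edges = c.edges := by
      rw [SimpleGraph.Walk.mapLe, SimpleGraph.Walk.edges_map]
      have : Sym2.map ⇑(SimpleGraph.Hom.ofLE hle) = id := by
        exact Sym2.map_id'
      rw [this, List.map_id]
    rw [hedges]
    intro e he f hf hin
    exact hcomp e he f hf ⟨hin, SimpleGraph.Walk.edges_subset_edgeSet c he,
      SimpleGraph.Walk.edges_subset_edgeSet c hf⟩


lemma exists_bad_pair {n : ℕ} {s t : Finset (Sym2 (Fin n))} (hs : s ⊆ KK n) (hts : t ⊆ s)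
    (F : IncompSystem (Gr s)) {τ : ℝ}
    (hP2 : ∀ F' : IncompSystem (Gr t), F'.Bounded τ → HasCompatibleHamCycle (Gr t) F')
    (hno : ¬ HasCompatibleHamCycle (Gr s) F) :
    ∃ v : Fin n, ∃ e ∈ s, v ∈ e ∧
      τ < ((((s.filter fun f => v ∈ f ∧ F.incomp e f) ∩ t).card : ℕ) : ℝ) := by
  by_contra hcon
  push_neg at hcon
  apply hno
  have hlift : Gr t ≤ Gr s := SimpleGraph.fromEdgeSet_mono (Finset.coe_subset.mpr hts)
  refine hasCompatibleHamCycle_of_le hlift F (hP2 _ ?_)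
  intro v e he hv
  have het : e ∈ t := by
    rw [edgeSet_Gr (hts.trans hs)] at he
    exact he
  refine le_trans ?_ (hcon v e (hts het) hv)
  have hsub : {f : Sym2 (Fin n) | v ∈ f ∧ (F.restrict (Gr t)).incomp e f}
      ⊆ ↑((s.filter fun f => v ∈ f ∧ F.incomp e f) ∩ t) := by
    intro f hf
    obtain ⟨hvf, hinc, _, hfH⟩ := hf
    have hfs : f ∈ s := by
      have := F.mem_edgeSet f e (F.symm e f hinc)
      rw [edgeSet_Gr hs] at this
      exact this
    have hft : f ∈ t := by
      rw [edgeSet_Gr (hts.trans hs)] at hfH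
      exact hfH
    simp only [Finset.coe_inter, Set.mem_inter_iff, Finset.mem_coe, Finset.mem_filter]
    exact ⟨⟨hfs, hvf, hinc⟩, hft⟩
  have hcard : {f : Sym2 (Fin n) | v ∈ f ∧ (F.restrict (Gr t)).incomp e f}.ncard
      ≤ ((s.filter fun f => v ∈ f ∧ F.incomp e f) ∩ t).card := by
    rw [← Set.ncard_coe_finset]
    exact Set.ncard_le_ncard hsub (Finset.finite_toSet _)
  exact_mod_cast hcard

lemma inter_union_self_of_subset {β : Type*} [DecidableEq β] {t u v : Finset β}
    (ht : t ⊆ u ∪ v) : t ∩ u ∪ t ∩ v = t := by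
  rw [← Finset.inter_union_distrib_left, Finset.inter_eq_left.mpr ht]

lemma sum_powerset_union {β : Type*} [DecidableEq β] {u v : Finset β} (h : Disjoint u v)
    (f : Finset β → ℝ) :
    ∑ t ∈ (u ∪ v).powerset, f t = ∑ x ∈ u.powerset, ∑ y ∈ v.powerset, f (x ∪ y) := by
  rw [← Finset.sum_product']
  refine Finset.sum_nbij' (fun t => (t ∩ u, t ∩ v)) (fun p => p.1 ∪ p.2) ?_ ?_ ?_ ?_ ?_
  · intro t ht
    simp only [Finset.mem_product, Finset.mem_powerset]
    exact ⟨Finset.inter_subset_right, Finset.inter_subset_right⟩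
  · intro p hp
    simp only [Finset.mem_product, Finset.mem_powerset] at hp ⊢
    exact Finset.union_subset_union hp.1 hp.2
  · intro t ht
    exact inter_union_self_of_subset (Finset.mem_powerset.mp ht)
  · intro p hp
    simp only [Finset.mem_product, Finset.mem_powerset] at hp
    obtain ⟨h1, h2⟩ := hp
    have e2 : p.2 ∩ u = ∅ := Finset.eq_empty_of_forall_notMem fun x hx =>
      h.forall_ne_finset (Finset.mem_inter.mp hx).2 (h2 (Finset.mem_inter.mp hx).1) rfl
    have e3 : p.1 ∩ v = ∅ := Finset.eq_empty_of_forall_notMem fun x hx =>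
      h.forall_ne_finset (h1 (Finset.mem_inter.mp hx).1) (Finset.mem_inter.mp hx).2 rfl
    have f1 : (p.1 ∪ p.2) ∩ u = p.1 := by
      rw [Finset.union_inter_distrib_right, Finset.inter_eq_left.mpr h1, e2, Finset.union_empty]
    have f2 : (p.1 ∪ p.2) ∩ v = p.2 := by
      rw [Finset.union_inter_distrib_right, e3, Finset.inter_eq_left.mpr h2, Finset.empty_union]
    rw [Prod.ext_iff]
    exact ⟨f1, f2⟩
  · intro t ht
    rw [inter_union_self_of_subset (Finset.mem_powerset.mp ht)]

lemma chernoff_tail {β : Type*} (S : Finset β) (b d lam tau : ℝ)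
    (hb : 0 ≤ b) (hd : 0 ≤ d) (hlam : 0 ≤ lam) :
    ∑ x ∈ S.powerset, (if tau ≤ (x.card : ℝ) then b ^ x.card * d ^ (S.card - x.card) else 0)
      ≤ Real.exp (-(lam * tau)) * (b * Real.exp lam + d) ^ S.card := by
  have key : ∀ x ∈ S.powerset,
      (if tau ≤ (x.card : ℝ) then b ^ x.card * d ^ (S.card - x.card) else 0)
        ≤ Real.exp (-(lam * tau)) * ((b * Real.exp lam) ^ x.card * d ^ (S.card - x.card)) := by
    intro x hx
    have hnn : 0 ≤ b ^ x.card * d ^ (S.card - x.card) :=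
      mul_nonneg (pow_nonneg hb _) (pow_nonneg hd _)
    split_ifs with h
    · have h1 : (1 : ℝ) ≤ Real.exp (-(lam * tau)) * Real.exp lam ^ x.card := by
        rw [← Real.exp_nat_mul, ← Real.exp_add,
          show (-(lam * tau) + x.card * lam : ℝ) = lam * (x.card - tau) by ring]
        exact Real.one_le_exp (mul_nonneg hlam (by linarith))
      calc b ^ x.card * d ^ (S.card - x.card)
          = 1 * (b ^ x.card * d ^ (S.card - x.card)) := by ring
        _ ≤ (Real.exp (-(lam * tau)) * Real.exp lam ^ x.card) *
              (b ^ x.card * d ^ (S.card - x.card)) := mul_le_mul_of_nonneg_right h1 hnn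
        _ = Real.exp (-(lam * tau)) * ((b * Real.exp lam) ^ x.card * d ^ (S.card - x.card)) := by
            rw [mul_pow]; ring
    · positivity
  calc ∑ x ∈ S.powerset, (if tau ≤ (x.card : ℝ) then b ^ x.card * d ^ (S.card - x.card) else 0)
      ≤ ∑ x ∈ S.powerset,
          Real.exp (-(lam * tau)) * ((b * Real.exp lam) ^ x.card * d ^ (S.card - x.card)) :=
        Finset.sum_le_sum key
    _ = Real.exp (-(lam * tau)) * (b * Real.exp lam + d) ^ S.card := by
        rw [← Finset.mul_sum, sum_pow_powerset]

lemma pair_tail {β : Type*} [DecidableEq β] {S s : Finset β} (hSs : S ⊆ s)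
    {a b lam tau N : ℝ} (hb : 0 ≤ b) (hba : b ≤ a) (ha : 0 < a) (ha1 : a ≤ 1)
    (hlam : 0 ≤ lam) (hN : (S.card : ℝ) ≤ N) :
    ∑ t ∈ s.powerset,
        (if tau < ((S ∩ t).card : ℝ) then b ^ t.card * (a - b) ^ (s.card - t.card) else 0)
      ≤ Real.exp (N * (b / a) * (Real.exp lam - 1) - lam * tau) * a ^ s.card := by
  have hd : (0:ℝ) ≤ a - b := by linarith
  have hdisj : Disjoint S (s \ S) := Finset.disjoint_sdiff
  have hcards : S.card + (s \ S).card = s.card := by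
    rw [Finset.card_sdiff_of_subset hSs]
    have := Finset.card_le_card hSs
    omega
  have hsplit := sum_powerset_union hdisj
    (fun t => if tau < ((S ∩ t).card : ℝ) then b ^ t.card * (a - b) ^ (s.card - t.card) else 0)
  rw [Finset.union_sdiff_of_subset hSs] at hsplit
  rw [hsplit]
  -- rewrite each term
  have hterm : ∀ x ∈ S.powerset, ∀ y ∈ (s \ S).powerset,
      (if tau < (((S ∩ (x ∪ y)).card : ℕ) : ℝ) then
          b ^ (x ∪ y).card * (a - b) ^ (s.card - (x ∪ y).card) else 0)
        = (if tau < ((x.card : ℕ) : ℝ) then b ^ x.card * (a - b) ^ (S.card - x.card) else 0)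
            * (b ^ y.card * (a - b) ^ ((s \ S).card - y.card)) := by
    intro x hx y hy
    rw [Finset.mem_powerset] at hx hy
    have hxy : Disjoint x y := hdisj.mono hx hy
    have hSx : S ∩ (x ∪ y) = x := by
      have e1 : S ∩ x = x := Finset.inter_eq_right.mpr hx
      have e2 : S ∩ y = ∅ := Finset.eq_empty_of_forall_notMem fun z hz =>
        hdisj.forall_ne_finset (Finset.mem_inter.mp hz).1 (hy (Finset.mem_inter.mp hz).2) rfl
      rw [Finset.inter_union_distrib_left, e1, e2, Finset.union_empty]
    have hcard : (x ∪ y).card = x.card + y.card := Finset.card_union_of_disjoint hxy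
    have hexp : s.card - (x ∪ y).card = (S.card - x.card) + ((s \ S).card - y.card) := by
      have hx' := Finset.card_le_card hx
      have hy' := Finset.card_le_card hy
      omega
    rw [hSx, hexp, hcard, pow_add, pow_add]
    split_ifs with h
    · ring
    · ring
  rw [Finset.sum_congr rfl (fun x hx => Finset.sum_congr rfl (hterm x hx))]
  rw [← Finset.sum_mul_sum]
  have hB : ∑ y ∈ (s \ S).powerset, b ^ y.card * (a - b) ^ ((s \ S).card - y.card)
      = a ^ (s \ S).card := by
    rw [sum_pow_powerset]
    norm_num
  rw [hB]
  have hA : ∑ x ∈ S.powerset,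
      (if tau < ((x.card : ℕ) : ℝ) then b ^ x.card * (a - b) ^ (S.card - x.card) else 0)
      ≤ Real.exp (-(lam * tau)) * (b * Real.exp lam + (a - b)) ^ S.card := by
    refine le_trans (Finset.sum_le_sum (fun x hx => ?_)) (chernoff_tail S b (a-b) lam tau hb hd hlam)
    split_ifs with h1 h2
    · exact le_refl _
    · exact absurd (le_of_lt h1) h2
    · positivity
    · exact le_refl _
  have hmono : (b * Real.exp lam + (a - b)) ^ S.card
      ≤ Real.exp (N * (b / a) * (Real.exp lam - 1)) * a ^ S.card := by
    have hx : (0:ℝ) ≤ (b / a) * (Real.exp lam - 1) := by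
      have : (1:ℝ) ≤ Real.exp lam := Real.one_le_exp hlam
      have hba' : 0 ≤ b / a := div_nonneg hb ha.le
      nlinarith
    have heq : b * Real.exp lam + (a - b) = a * (1 + (b / a) * (Real.exp lam - 1)) := by
      field_simp
      ring
    rw [heq, mul_pow]
    have h1 : (1 + (b / a) * (Real.exp lam - 1)) ^ S.card
        ≤ Real.exp ((b / a) * (Real.exp lam - 1)) ^ S.card := by
      refine pow_le_pow_left₀ (by linarith) ?_ _
      linarith [Real.add_one_le_exp ((b / a) * (Real.exp lam - 1))]
    have h2 : Real.exp ((b / a) * (Real.exp lam - 1)) ^ S.card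
        = Real.exp ((S.card : ℝ) * ((b / a) * (Real.exp lam - 1))) := by
      rw [Real.exp_nat_mul]
    have h3 : Real.exp ((S.card : ℝ) * ((b / a) * (Real.exp lam - 1)))
        ≤ Real.exp (N * (b / a) * (Real.exp lam - 1)) := by
      rw [Real.exp_le_exp]
      nlinarith
    calc a ^ S.card * (1 + (b / a) * (Real.exp lam - 1)) ^ S.card
        ≤ a ^ S.card * Real.exp (N * (b / a) * (Real.exp lam - 1)) := by
          refine mul_le_mul_of_nonneg_left ?_ (pow_nonneg ha.le _)
          refine h1.trans ?_
          rw [h2]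
          exact h3
      _ = Real.exp (N * (b / a) * (Real.exp lam - 1)) * a ^ S.card := mul_comm _ _
  have hfin : Real.exp (-(lam * tau)) * (b * Real.exp lam + (a - b)) ^ S.card * a ^ (s \ S).card
      ≤ Real.exp (N * (b / a) * (Real.exp lam - 1) - lam * tau) * a ^ s.card := by
    calc Real.exp (-(lam * tau)) * (b * Real.exp lam + (a - b)) ^ S.card * a ^ (s \ S).card
        ≤ Real.exp (-(lam * tau)) *
            (Real.exp (N * (b / a) * (Real.exp lam - 1)) * a ^ S.card) * a ^ (s \ S).card := by
          refine mul_le_mul_of_nonneg_right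
            (mul_le_mul_of_nonneg_left hmono (Real.exp_nonneg _)) (pow_nonneg ha.le _)
      _ = Real.exp (N * (b / a) * (Real.exp lam - 1) - lam * tau)
            * (a ^ S.card * a ^ (s \ S).card) := by
          rw [show N * (b / a) * (Real.exp lam - 1) - lam * tau
            = N * (b / a) * (Real.exp lam - 1) + -(lam * tau) from by ring, Real.exp_add]
          ring
      _ = Real.exp (N * (b / a) * (Real.exp lam - 1) - lam * tau) * a ^ s.card := by
          rw [← pow_add, hcards]
  exact le_trans (mul_le_mul_of_nonneg_right hA (pow_nonneg ha.le _)) hfin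

lemma union_bound {β ι : Type*} (P : Finset β) (I : Finset ι) (Q : β → Prop)
    (cond : ι → β → Prop) (w : β → ℝ) (hw : ∀ x ∈ P, 0 ≤ w x)
    (hcover : ∀ x ∈ P, Q x → ∃ i ∈ I, cond i x) :
    ∑ x ∈ P, (if Q x then w x else 0)
      ≤ ∑ i ∈ I, ∑ x ∈ P, (if cond i x then w x else 0) := by
  rw [Finset.sum_comm]
  refine Finset.sum_le_sum fun x hx => ?_
  by_cases hq : Q x
  · obtain ⟨i, hi, hci⟩ := hcover x hx hq
    rw [if_pos hq]
    calc w x = (if cond i x then w x else 0) := by rw [if_pos hci]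
      _ ≤ ∑ i ∈ I, (if cond i x then w x else 0) :=
          Finset.single_le_sum (f := fun j => if cond j x then w x else 0)
            (fun j _ => by show 0 ≤ (if cond j x then w x else 0); split_ifs with h; exacts [hw x hx, le_refl 0]) hi
  · rw [if_neg hq]
    exact Finset.sum_nonneg fun i _ => by split_ifs with h; exacts [hw x hx, le_refl 0]

lemma marginal_gen {β : Type*} [DecidableEq β] {t r : Finset β} (h : Disjoint t r) (a b : ℝ) :
    ∑ s ∈ (t ∪ r).powerset,
        (if t ⊆ s then b ^ t.card * (a - b) ^ (s.card - t.card)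
            * (1 - a) ^ ((t ∪ r).card - s.card) else 0)
      = b ^ t.card * ((a - b) + (1 - a)) ^ r.card := by
  have hsplit := sum_powerset_union h
    (fun s => if t ⊆ s then b ^ t.card * (a - b) ^ (s.card - t.card)
      * (1 - a) ^ ((t ∪ r).card - s.card) else 0)
  rw [hsplit]
  rw [Finset.sum_eq_single_of_mem t (Finset.mem_powerset_self t)]
  · have inner : ∀ y ∈ r.powerset,
        (if t ⊆ t ∪ y then b ^ t.card * (a - b) ^ ((t ∪ y).card - t.card)
            * (1 - a) ^ ((t ∪ r).card - (t ∪ y).card) else 0)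
          = b ^ t.card * ((a - b) ^ y.card * (1 - a) ^ (r.card - y.card)) := by
      intro y hy
      rw [Finset.mem_powerset] at hy
      have hty : Disjoint t y := h.mono_right hy
      have c1 : (t ∪ y).card = t.card + y.card := Finset.card_union_of_disjoint hty
      have c2 : (t ∪ r).card = t.card + r.card := Finset.card_union_of_disjoint h
      have hy' : y.card ≤ r.card := Finset.card_le_card hy
      rw [if_pos Finset.subset_union_left, c1, c2]
      have e1 : t.card + y.card - t.card = y.card := by omega
      have e2 : t.card + r.card - (t.card + y.card) = r.card - y.card := by omega
      rw [e1, e2, mul_assoc]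
    rw [Finset.sum_congr rfl inner, ← Finset.mul_sum, sum_pow_powerset]
  · intro x hx hxt
    rw [Finset.mem_powerset] at hx
    refine Finset.sum_eq_zero fun y hy => ?_
    rw [Finset.mem_powerset] at hy
    rw [if_neg ?_]
    intro hsub
    apply hxt
    refine le_antisymm hx ?_
    intro z hz
    rcases Finset.mem_union.mp (hsub hz) with h1 | h1
    · exact h1
    · exact absurd rfl (h.forall_ne_finset hz (hy h1))

lemma sum_wgt_powerset {n : ℕ} (a b : ℝ) (s : Finset (Sym2 (Fin n))) :
    ∑ t ∈ s.powerset, b ^ t.card * (a - b) ^ (s.card - t.card) * (1 - a) ^ (n.choose 2 - s.card)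
      = a ^ s.card * (1 - a) ^ (n.choose 2 - s.card) := by
  rw [← Finset.sum_mul, sum_pow_powerset]
  have : b + (a - b) = a := by ring
  rw [this]

lemma marginal_KK {n : ℕ} {t : Finset (Sym2 (Fin n))} (ht : t ⊆ KK n) (a b : ℝ) :
    ∑ s ∈ (KK n).powerset, (if t ⊆ s then
        b ^ t.card * (a - b) ^ (s.card - t.card) * (1 - a) ^ (n.choose 2 - s.card) else 0)
      = b ^ t.card * (1 - b) ^ (n.choose 2 - t.card) := by
  have hd2 : Disjoint t (KK n \ t) := Finset.disjoint_sdiff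
  have key := marginal_gen hd2 a b
  rw [Finset.union_sdiff_of_subset ht, card_KK, Finset.card_sdiff_of_subset ht, card_KK] at key
  rw [key]
  have : (a - b) + (1 - a) = 1 - b := by ring
  rw [this]

lemma pair_bound {n : ℕ} {s : Finset (Sym2 (Fin n))} (hs : s ⊆ KK n)
    {a b α ε : ℝ} (hb : 0 < b) (hba : b ≤ a) (ha1 : a ≤ 1) (hα : 0 < α) (hε : 0 < ε)
    {S : Finset (Sym2 (Fin n))} (hSs : S ⊆ s) (hS : ((S.card : ℕ) : ℝ) ≤ (α + ε) * n * a) :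
    ∑ t ∈ s.powerset, (if (α + 2*ε) * n * b < ((S ∩ t).card : ℝ)
        then b ^ t.card * (a - b) ^ (s.card - t.card) * (1 - a) ^ (n.choose 2 - s.card) else 0)
      ≤ Real.exp (ε * n * b - Real.log (1 + ε/(α+ε)) * ((α + 2*ε) * n * b))
          * (a ^ s.card * (1 - a) ^ (n.choose 2 - s.card)) := by
  have ha : 0 < a := lt_of_lt_of_le hb hba
  have hpos : (0:ℝ) < 1 + ε/(α+ε) := by positivity
  have hexplam : Real.exp (Real.log (1 + ε/(α+ε))) = 1 + ε/(α+ε) := Real.exp_log hpos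
  have hlam : 0 ≤ Real.log (1 + ε/(α+ε)) := Real.log_nonneg (by
    have : 0 ≤ ε/(α+ε) := by positivity
    linarith)
  have h1a : (0:ℝ) ≤ 1 - a := by linarith
  have step : ∀ t ∈ s.powerset, (if (α + 2*ε) * n * b < ((S ∩ t).card : ℝ)
        then b ^ t.card * (a - b) ^ (s.card - t.card) * (1 - a) ^ (n.choose 2 - s.card) else 0)
      = (if (α + 2*ε) * n * b < ((S ∩ t).card : ℝ)
          then b ^ t.card * (a - b) ^ (s.card - t.card) else 0)
          * (1 - a) ^ (n.choose 2 - s.card) := by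
    intro t _; split_ifs <;> ring
  rw [Finset.sum_congr rfl step, ← Finset.sum_mul]
  have hpt := pair_tail hSs hb.le hba ha ha1 hlam hS (tau := (α + 2*ε) * n * b)
  have hNεnb : (α + ε) * n * a * (b / a) * (Real.exp (Real.log (1 + ε/(α+ε))) - 1)
      = ε * n * b := by
    rw [hexplam]
    have hαε : α + ε ≠ 0 := by positivity
    field_simp
    ring
  rw [hNεnb] at hpt
  calc (∑ t ∈ s.powerset, (if (α + 2*ε) * n * b < ((S ∩ t).card : ℝ)
          then b ^ t.card * (a - b) ^ (s.card - t.card) else 0))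
        * (1 - a) ^ (n.choose 2 - s.card)
      ≤ (Real.exp (ε * n * b - Real.log (1 + ε/(α+ε)) * ((α + 2*ε) * n * b)) * a ^ s.card)
          * (1 - a) ^ (n.choose 2 - s.card) :=
        mul_le_mul_of_nonneg_right hpt (pow_nonneg h1a _)
    _ = Real.exp (ε * n * b - Real.log (1 + ε/(α+ε)) * ((α + 2*ε) * n * b))
          * (a ^ s.card * (1 - a) ^ (n.choose 2 - s.card)) := by ring
lemma inner2_bound {n : ℕ} {s : Finset (Sym2 (Fin n))} (hs : s ⊆ KK n)
    {a b α ε : ℝ} (hb : 0 < b) (hba : b ≤ a) (ha1 : a ≤ 1) (hα : 0 < α) (hε : 0 < ε)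
    (F : IncompSystem (Gr s)) (hFb : F.Bounded ((α + ε) * n * a))
    (hFno : ¬ HasCompatibleHamCycle (Gr s) F) :
    ∑ t ∈ s.powerset, (if (∀ F' : IncompSystem (Gr t), F'.Bounded ((α + 2*ε) * n * b) →
          HasCompatibleHamCycle (Gr t) F') then
        b ^ t.card * (a - b) ^ (s.card - t.card) * (1 - a) ^ (n.choose 2 - s.card) else 0)
      ≤ (n:ℝ)^3 * Real.exp (ε*n*b - Real.log (1 + ε/(α+ε)) * ((α + 2*ε)*n*b))
          * (a ^ s.card * (1 - a) ^ (n.choose 2 - s.card)) := by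
  have ha : 0 < a := lt_of_lt_of_le hb hba
  have h1a : (0:ℝ) ≤ 1 - a := by linarith
  have hd : (0:ℝ) ≤ a - b := by linarith
  have hwnn : ∀ t ∈ s.powerset,
      0 ≤ b ^ t.card * (a - b) ^ (s.card - t.card) * (1 - a) ^ (n.choose 2 - s.card) := by
    intro t _; positivity
  have hub := union_bound s.powerset ((Finset.univ : Finset (Fin n)) ×ˢ s)
    (fun t => ∀ F' : IncompSystem (Gr t), F'.Bounded ((α + 2*ε) * n * b) →
        HasCompatibleHamCycle (Gr t) F')
    (fun p t => p.1 ∈ p.2 ∧ (α + 2*ε) * n * b <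
        (((s.filter fun f => p.1 ∈ f ∧ F.incomp p.2 f) ∩ t).card : ℝ))
    (fun t => b ^ t.card * (a - b) ^ (s.card - t.card) * (1 - a) ^ (n.choose 2 - s.card))
    hwnn ?_
  · refine le_trans hub ?_
    beta_reduce
    have hpair : ∀ p ∈ (Finset.univ : Finset (Fin n)) ×ˢ s,
        (∑ t ∈ s.powerset, if p.1 ∈ p.2 ∧ (α + 2*ε) * n * b <
              (((s.filter fun f => p.1 ∈ f ∧ F.incomp p.2 f) ∩ t).card : ℝ) then
            b ^ t.card * (a - b) ^ (s.card - t.card) * (1 - a) ^ (n.choose 2 - s.card) else 0)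
          ≤ Real.exp (ε*n*b - Real.log (1 + ε/(α+ε)) * ((α + 2*ε)*n*b))
              * (a ^ s.card * (1 - a) ^ (n.choose 2 - s.card)) := by
      rintro ⟨v, e⟩ hp
      have he : e ∈ s := (Finset.mem_product.mp hp).2
      by_cases hve : v ∈ e
      · have hcong : ∀ t ∈ s.powerset, (if v ∈ e ∧ (α + 2*ε) * n * b <
              (((s.filter fun f => v ∈ f ∧ F.incomp e f) ∩ t).card : ℝ) then
              b ^ t.card * (a - b) ^ (s.card - t.card) * (1 - a) ^ (n.choose 2 - s.card) else 0)
            = (if (α + 2*ε) * n * b <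
              (((s.filter fun f => v ∈ f ∧ F.incomp e f) ∩ t).card : ℝ) then
              b ^ t.card * (a - b) ^ (s.card - t.card) * (1 - a) ^ (n.choose 2 - s.card) else 0) :=
          fun t _ => if_congr (and_iff_right hve) rfl rfl
        rw [Finset.sum_congr rfl hcong]
        have hSbound : (((s.filter fun f => v ∈ f ∧ F.incomp e f).card : ℕ) : ℝ)
            ≤ (α + ε) * n * a := by
          have hmem : e ∈ (Gr s).edgeSet := by rw [edgeSet_Gr hs]; exact he
          have h1 := hFb v e hmem hve
          have hseteq : {f : Sym2 (Fin n) | v ∈ f ∧ F.incomp e f}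
              = ↑(s.filter fun f => v ∈ f ∧ F.incomp e f) := by
            ext f
            simp only [Set.mem_setOf_eq, Finset.coe_filter]
            constructor
            · rintro ⟨hvf, hinc⟩
              have hfs : f ∈ s := by
                have := F.mem_edgeSet f e (F.symm e f hinc)
                rwa [edgeSet_Gr hs] at this
              exact ⟨hfs, hvf, hinc⟩
            · rintro ⟨_, hvf, hinc⟩; exact ⟨hvf, hinc⟩
          rw [hseteq, Set.ncard_coe_finset] at h1
          exact h1
        exact pair_bound hs hb hba ha1 hα hε (Finset.filter_subset _ s) hSbound
      · have hz : ∀ t ∈ s.powerset, (if v ∈ e ∧ (α + 2*ε) * n * b <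
              (((s.filter fun f => v ∈ f ∧ F.incomp e f) ∩ t).card : ℝ) then
              b ^ t.card * (a - b) ^ (s.card - t.card) * (1 - a) ^ (n.choose 2 - s.card) else 0)
            = 0 := fun t _ => if_neg (by rintro ⟨h, _⟩; exact hve h)
        rw [Finset.sum_congr rfl hz, Finset.sum_const_zero]
        positivity
    have hcardp : (((Finset.univ : Finset (Fin n)) ×ˢ s).card : ℝ) ≤ (n:ℝ)^3 := by
      have h1 : ((Finset.univ : Finset (Fin n)) ×ˢ s).card = n * s.card := by
        rw [Finset.card_product, Finset.card_univ, Fintype.card_fin]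
      have h2 : s.card ≤ n.choose 2 := by
        rw [← card_KK n]; exact Finset.card_le_card hs
      have h3 : n.choose 2 ≤ n * n := by
        rw [Nat.choose_two_right]
        calc n * (n - 1) / 2 ≤ n * (n - 1) := Nat.div_le_self _ _
          _ ≤ n * n := Nat.mul_le_mul_left n (Nat.sub_le n 1)
      have h4 : n * s.card ≤ n * (n * n) := Nat.mul_le_mul_left n (le_trans h2 h3)
      rw [h1]
      calc ((n * s.card : ℕ) : ℝ) ≤ ((n * (n * n) : ℕ) : ℝ) := by exact_mod_cast h4
        _ = (n:ℝ)^3 := by push_cast; ring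
    refine le_trans (Finset.sum_le_sum (fun p hp => le_trans
      (le_of_eq (Finset.sum_congr rfl (fun t ht => by split_ifs <;> rfl)))
      (hpair p hp))) ?_
    rw [Finset.sum_const, nsmul_eq_mul]
    calc (((Finset.univ : Finset (Fin n)) ×ˢ s).card : ℝ)
          * (Real.exp (ε*n*b - Real.log (1 + ε/(α+ε)) * ((α + 2*ε)*n*b))
            * (a ^ s.card * (1 - a) ^ (n.choose 2 - s.card)))
        ≤ (n:ℝ)^3 * (Real.exp (ε*n*b - Real.log (1 + ε/(α+ε)) * ((α + 2*ε)*n*b))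
              * (a ^ s.card * (1 - a) ^ (n.choose 2 - s.card))) := by
          refine mul_le_mul_of_nonneg_right hcardp ?_
          positivity
      _ = (n:ℝ)^3 * Real.exp (ε*n*b - Real.log (1 + ε/(α+ε)) * ((α + 2*ε)*n*b))
            * (a ^ s.card * (1 - a) ^ (n.choose 2 - s.card)) := by ring
  · intro t ht hQ
    obtain ⟨v, e, he, hve, hlt⟩ :=
      exists_bad_pair hs (Finset.mem_powerset.mp ht) F hQ hFno
    exact ⟨(v, e), Finset.mem_product.mpr ⟨Finset.mem_univ v, he⟩, hve, hlt⟩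
lemma main_ineq (n : ℕ) (a b α ε : ℝ) (hb : 0 < b) (hba : b ≤ a) (ha1 : a ≤ 1)
    (hα : 0 < α) (hε : 0 < ε) :
    1 - gnpProb n a (fun G => ∀ F : IncompSystem G, F.Bounded ((α + ε) * n * a) →
        HasCompatibleHamCycle G F)
      ≤ (1 - gnpProb n b (fun G => ∀ F : IncompSystem G, F.Bounded ((α + 2*ε) * n * b) →
          HasCompatibleHamCycle G F))
        + (n:ℝ)^3 * Real.exp (ε * n * b - Real.log (1 + ε/(α+ε)) * ((α + 2*ε) * n * b)) := by
  have ha : 0 < a := lt_of_lt_of_le hb hba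
  have h1a : (0:ℝ) ≤ 1 - a := by linarith
  have hd : (0:ℝ) ≤ a - b := by linarith
  rw [one_sub_gnpProb, one_sub_gnpProb]
  have hwnn : ∀ s t : Finset (Sym2 (Fin n)),
      0 ≤ b ^ t.card * (a - b) ^ (s.card - t.card) * (1 - a) ^ (n.choose 2 - s.card) := by
    intro s t; positivity
  have hstep : ∀ s ∈ (KK n).powerset,
      (if ¬ (∀ F : IncompSystem (Gr s), F.Bounded ((α + ε) * n * a) →
            HasCompatibleHamCycle (Gr s) F)
          then a ^ s.card * (1 - a) ^ (n.choose 2 - s.card) else 0)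
        ≤ (∑ t ∈ s.powerset, if ¬ (∀ F' : IncompSystem (Gr t), F'.Bounded ((α + 2*ε) * n * b) →
              HasCompatibleHamCycle (Gr t) F') then
            b ^ t.card * (a - b) ^ (s.card - t.card) * (1 - a) ^ (n.choose 2 - s.card) else 0)
          + (n:ℝ)^3 * Real.exp (ε*n*b - Real.log (1 + ε/(α+ε)) * ((α + 2*ε)*n*b))
              * (a ^ s.card * (1 - a) ^ (n.choose 2 - s.card)) := by
    intro s hs
    have hT1nn : 0 ≤ ∑ t ∈ s.powerset,
        (if ¬ (∀ F' : IncompSystem (Gr t), F'.Bounded ((α + 2*ε) * n * b) →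
            HasCompatibleHamCycle (Gr t) F') then
          b ^ t.card * (a - b) ^ (s.card - t.card) * (1 - a) ^ (n.choose 2 - s.card) else 0) :=
      Finset.sum_nonneg fun t _ => by split_ifs <;> first | exact hwnn s t | exact le_refl 0
    by_cases hP1 : ∀ F : IncompSystem (Gr s), F.Bounded ((α + ε) * n * a) →
        HasCompatibleHamCycle (Gr s) F
    · rw [if_neg (not_not_intro hP1)]
      have : (0:ℝ) ≤ (n:ℝ)^3 * Real.exp (ε*n*b - Real.log (1 + ε/(α+ε)) * ((α + 2*ε)*n*b))
          * (a ^ s.card * (1 - a) ^ (n.choose 2 - s.card)) := by positivity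
      linarith
    · rw [if_pos hP1]
      push_neg at hP1
      obtain ⟨F, hFb, hFno⟩ := hP1
      have hsplit : a ^ s.card * (1 - a) ^ (n.choose 2 - s.card)
          = (∑ t ∈ s.powerset, if ¬ (∀ F' : IncompSystem (Gr t),
                F'.Bounded ((α + 2*ε) * n * b) → HasCompatibleHamCycle (Gr t) F') then
              b ^ t.card * (a - b) ^ (s.card - t.card) * (1 - a) ^ (n.choose 2 - s.card) else 0)
            + (∑ t ∈ s.powerset, if (∀ F' : IncompSystem (Gr t),
                F'.Bounded ((α + 2*ε) * n * b) → HasCompatibleHamCycle (Gr t) F') then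
              b ^ t.card * (a - b) ^ (s.card - t.card) * (1 - a) ^ (n.choose 2 - s.card) else 0) := by
        rw [← Finset.sum_add_distrib, ← sum_wgt_powerset (n := n) a b s]
        refine Finset.sum_congr rfl fun t _ => ?_
        by_cases h : ∀ F' : IncompSystem (Gr t), F'.Bounded ((α + 2*ε) * n * b) →
            HasCompatibleHamCycle (Gr t) F'
        · rw [if_neg (not_not_intro h), if_pos h, zero_add]
        · rw [if_pos h, if_neg h, add_zero]
      nth_rewrite 1 [hsplit]
      have h2 := inner2_bound (Finset.mem_powerset.mp hs) hb hba ha1 hα hε F hFb hFno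
      exact add_le_add (le_refl _) h2
  refine le_trans (Finset.sum_le_sum hstep) ?_
  rw [Finset.sum_add_distrib]
  have hT1 : (∑ s ∈ (KK n).powerset, ∑ t ∈ s.powerset,
        if ¬ (∀ F' : IncompSystem (Gr t), F'.Bounded ((α + 2*ε) * n * b) →
            HasCompatibleHamCycle (Gr t) F') then
          b ^ t.card * (a - b) ^ (s.card - t.card) * (1 - a) ^ (n.choose 2 - s.card) else 0)
      = ∑ t ∈ (KK n).powerset,
          (if ¬ (∀ F' : IncompSystem (Gr t), F'.Bounded ((α + 2*ε) * n * b) →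
              HasCompatibleHamCycle (Gr t) F') then
            b ^ t.card * (1 - b) ^ (n.choose 2 - t.card) else 0) := by
    rw [Finset.sum_comm' (s' := fun t => (KK n).powerset.filter (fun s => t ⊆ s))
      (t' := (KK n).powerset) ?_]
    · refine Finset.sum_congr rfl fun t ht => ?_
      have hmar : ∑ s ∈ (KK n).powerset.filter (fun s => t ⊆ s),
          b ^ t.card * (a - b) ^ (s.card - t.card) * (1 - a) ^ (n.choose 2 - s.card)
          = b ^ t.card * (1 - b) ^ (n.choose 2 - t.card) := by
        rw [Finset.sum_filter]
        exact marginal_KK (Finset.mem_powerset.mp ht) a b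
      by_cases h : ¬ (∀ F' : IncompSystem (Gr t), F'.Bounded ((α + 2*ε) * n * b) →
          HasCompatibleHamCycle (Gr t) F')
      · rw [if_pos h, ← hmar]
        exact Finset.sum_congr rfl fun s _ => by rw [if_pos h]
      · rw [if_neg h]
        exact Finset.sum_eq_zero fun s _ => by rw [if_neg h]
    · intro s t
      simp only [Finset.mem_powerset, Finset.mem_filter, Finset.mem_powerset]
      constructor
      · rintro ⟨h1, h2⟩
        exact ⟨⟨h1, h2⟩, h2.trans h1⟩
      · rintro ⟨⟨h1, h2⟩, _⟩
        exact ⟨h1, h2⟩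
  rw [hT1]
  have hT2 : (∑ _s ∈ (KK n).powerset,
        (n:ℝ)^3 * Real.exp (ε*n*b - Real.log (1 + ε/(α+ε)) * ((α + 2*ε)*n*b))
          * (a ^ _s.card * (1 - a) ^ (n.choose 2 - _s.card)))
      = (n:ℝ)^3 * Real.exp (ε*n*b - Real.log (1 + ε/(α+ε)) * ((α + 2*ε)*n*b)) := by
    rw [← Finset.mul_sum, total_mass n a, mul_one]
  rw [hT2]
lemma gnpProb_le_one (n : ℕ) (p : ℝ) (h0 : 0 ≤ p) (h1 : p ≤ 1)
    (P : SimpleGraph (Fin n) → Prop) : gnpProb n p P ≤ 1 := by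
  rw [gnpProb_eq_s11]
  calc (∑ s ∈ (KK n).powerset,
        if P (Gr s) then p ^ s.card * (1 - p) ^ (n.choose 2 - s.card) else 0)
      ≤ ∑ s ∈ (KK n).powerset, p ^ s.card * (1 - p) ^ (n.choose 2 - s.card) := by
        refine Finset.sum_le_sum fun s _ => ?_
        have h2 : (0:ℝ) ≤ 1 - p := by linarith
        have : (0:ℝ) ≤ p ^ s.card * (1 - p) ^ (n.choose 2 - s.card) := by positivity
        split_ifs <;> linarith
    _ = 1 := total_mass n p

lemma log_one_add_gt {x : ℝ} (hx : 0 < x) : x / (1 + x) < Real.log (1 + x) := by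
  have h1x : (0:ℝ) < 1 + x := by linarith
  have hne : -x / (1 + x) ≠ 0 := by
    refine div_ne_zero ?_ (ne_of_gt h1x)
    exact neg_ne_zero.mpr (ne_of_gt hx)
  have h2 : -x / (1 + x) + 1 < Real.exp (-x / (1 + x)) := Real.add_one_lt_exp hne
  have heq : -x / (1 + x) + 1 = 1 / (1 + x) := by field_simp; ring
  have h3 : (1:ℝ) / (1 + x) < Real.exp (-x / (1 + x)) := by linarith
  have h4 : Real.log (1 / (1 + x)) < -x / (1 + x) := by
    calc Real.log (1 / (1 + x)) < Real.log (Real.exp (-x / (1 + x))) :=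
          Real.log_lt_log (by positivity) h3
      _ = -x / (1 + x) := Real.log_exp _
  rw [one_div, Real.log_inv] at h4
  have : -x / (1 + x) = -(x / (1 + x)) := by ring
  rw [this] at h4
  linarith


end Aux

/-- **Lemma 3.9 (probability transfer).** If `1 ≥ p₁ ≥ p₂ ≫ log n / n` and a.a.s. `G(n,p₂)`
has a compatible Hamilton cycle for every `(α + 2ε) n p₂`-bounded incompatibility system,
then a.a.s. `G(n,p₁)` has a compatible Hamilton cycle for every `(α + ε) n p₁`-bounded
incompatibility system. -/
theorem probability_transfer (p₁ p₂ : ℕ → ℝ)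
    (hp₁ : ∀ n, p₁ n ≤ 1) (hp₂nonneg : ∀ n, 0 ≤ p₂ n) (hle : ∀ n, p₂ n ≤ p₁ n)
    (hgrowth : Tendsto (fun n : ℕ => (n : ℝ) * p₂ n / Real.log n) atTop atTop)
    (α ε : ℝ) (hα : 0 < α) (hε : 0 < ε)
    (hyp : Tendsto (fun n : ℕ => gnpProb n (p₂ n) (fun G =>
        ∀ F : IncompSystem G, F.Bounded ((α + 2 * ε) * n * p₂ n) →
          HasCompatibleHamCycle G F)) atTop (nhds 1)) :
    Tendsto (fun n : ℕ => gnpProb n (p₁ n) (fun G =>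
        ∀ F : IncompSystem G, F.Bounded ((α + ε) * n * p₁ n) →
          HasCompatibleHamCycle G F)) atTop (nhds 1) := by
  classical
  set lam := Real.log (1 + ε / (α + ε)) with hlamdef
  -- the exponential rate is positive
  have hx : 0 < ε / (α + ε) := by positivity
  have hrate : ε < (α + 2 * ε) * lam := by
    have h1 : ε / (α + ε) / (1 + ε / (α + ε)) < lam := log_one_add_gt hx
    have hαε : (0:ℝ) < α + ε := by linarith
    have hα2ε : (0:ℝ) < α + 2 * ε := by linarith
    have heq : ε / (α + ε) / (1 + ε / (α + ε)) = ε / (α + 2 * ε) := by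
      rw [div_div]
      congr 1
      field_simp
      ring
    rw [heq] at h1
    calc ε = (α + 2 * ε) * (ε / (α + 2 * ε)) := by field_simp
      _ < (α + 2 * ε) * lam := by
        exact mul_lt_mul_of_pos_left h1 hα2ε
  set c : ℝ := (α + 2 * ε) * lam - ε with hcdef
  have hc : 0 < c := by simp only [hcdef]; linarith
  set err : ℕ → ℝ := fun n =>
    (n:ℝ)^3 * Real.exp (ε * n * p₂ n - lam * ((α + 2 * ε) * n * p₂ n)) with herrdef
  have herrnn : ∀ n, 0 ≤ err n := fun n => by positivity
  -- eventually err n ≤ 1/n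
  have hev : ∀ᶠ n : ℕ in Filter.atTop, err n ≤ 1 / (n:ℝ) := by
    have hgrow2 := hgrowth.eventually_ge_atTop (4 / c)
    filter_upwards [hgrow2, Filter.eventually_ge_atTop 2] with n hn hn2
    have hn2' : (2:ℝ) ≤ (n:ℝ) := by exact_mod_cast hn2
    have hlogn : 0 < Real.log n := Real.log_pos (by linarith)
    have hnp : 4 / c * Real.log n ≤ (n:ℝ) * p₂ n := (le_div_iff₀ hlogn).mp hn
    have hkey : ε * n * p₂ n - lam * ((α + 2 * ε) * n * p₂ n) ≤ -(4 * Real.log n) := by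
      have h1 : ε * n * p₂ n - lam * ((α + 2 * ε) * n * p₂ n) = -(c * ((n:ℝ) * p₂ n)) := by
        simp only [hcdef]; ring
      rw [h1]
      have h2 : 4 * Real.log n ≤ c * ((n:ℝ) * p₂ n) := by
        have h3 := mul_le_mul_of_nonneg_left hnp hc.le
        have h4 : c * (4 / c * Real.log n) = 4 * Real.log n := by
          field_simp
        linarith
      linarith
    have hexp : Real.exp (ε * n * p₂ n - lam * ((α + 2 * ε) * n * p₂ n))
        ≤ Real.exp (-(4 * Real.log n)) := Real.exp_le_exp.mpr hkey
    have hnpos : (0:ℝ) < (n:ℝ) := by linarith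
    have hexp4 : Real.exp (-(4 * Real.log n)) = 1 / (n:ℝ)^4 := by
      rw [Real.exp_neg]
      rw [show (4:ℝ) * Real.log n = (4:ℕ) * Real.log n by norm_num]
      rw [Real.exp_nat_mul, Real.exp_log hnpos]
      rw [one_div]
    have : err n ≤ (n:ℝ)^3 * (1 / (n:ℝ)^4) := by
      simp only [herrdef]
      refine mul_le_mul_of_nonneg_left ?_ (by positivity)
      rw [← hexp4]
      exact hexp
    calc err n ≤ (n:ℝ)^3 * (1 / (n:ℝ)^4) := this
      _ = 1 / (n:ℝ) := by field_simp
  have herr0 : Filter.Tendsto err Filter.atTop (nhds 0) := by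
    refine squeeze_zero' (Filter.Eventually.of_forall herrnn) hev ?_
    exact tendsto_one_div_atTop_nhds_zero_nat
  -- eventually p₂ n > 0
  have hp2pos : ∀ᶠ n : ℕ in Filter.atTop, 0 < p₂ n := by
    have hgrow1 := hgrowth.eventually_ge_atTop 1
    filter_upwards [hgrow1, Filter.eventually_ge_atTop 2] with n hn hn2
    have hn2' : (2:ℝ) ≤ (n:ℝ) := by exact_mod_cast hn2
    have hlogn : 0 < Real.log n := Real.log_pos (by linarith)
    by_contra hcon
    push_neg at hcon
    have h0 : p₂ n = 0 := le_antisymm hcon (hp₂nonneg n)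
    have hn' := (le_div_iff₀ hlogn).mp hn
    rw [h0] at hn'
    simp at hn'
    linarith
  -- main inequality eventually
  have hmain : ∀ᶠ n : ℕ in Filter.atTop,
      gnpProb n (p₂ n) (fun G => ∀ F : IncompSystem G,
          F.Bounded ((α + 2 * ε) * n * p₂ n) → HasCompatibleHamCycle G F) - err n
        ≤ gnpProb n (p₁ n) (fun G => ∀ F : IncompSystem G,
            F.Bounded ((α + ε) * n * p₁ n) → HasCompatibleHamCycle G F) := by
    filter_upwards [hp2pos] with n hpos
    have := main_ineq n (p₁ n) (p₂ n) α ε hpos (hle n) (hp₁ n) hα hε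
    simp only [herrdef, hlamdef] at this ⊢
    linarith
  have hub : ∀ᶠ n : ℕ in Filter.atTop,
      gnpProb n (p₁ n) (fun G => ∀ F : IncompSystem G,
          F.Bounded ((α + ε) * n * p₁ n) → HasCompatibleHamCycle G F) ≤ 1 := by
    refine Filter.Eventually.of_forall fun n => ?_
    exact gnpProb_le_one n (p₁ n) (le_trans (hp₂nonneg n) (hle n)) (hp₁ n) _
  have hlow : Filter.Tendsto (fun n : ℕ =>
      gnpProb n (p₂ n) (fun G => ∀ F : IncompSystem G,
          F.Bounded ((α + 2 * ε) * n * p₂ n) → HasCompatibleHamCycle G F) - err n)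
      Filter.atTop (nhds 1) := by
    have := hyp.sub herr0
    simpa using this
  exact tendsto_of_tendsto_of_tendsto_of_le_of_le' hlow tendsto_const_nhds hmain hub
end
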